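/- arXiv:2510.16278 — 5 statements merged into one kernel-verified Lean document; each statement's English description precedes it below -/
import Mathlib

section
/- Let w be a word in the alphabet of positive integers with content λ (i.e., the number of occurrences of i in w is λ_i, where λ is a partition). Then the insertion tableau P(w) obtained by column-inserting the letters of w into the empty tableau equals the canonical tableau C(λ) (the unique semistandard tableau of shape and content λ) if and only if w is a reverse lattice word (i.e., reading w from the end backwards to any position, the suffix contains at least as many i's as (i+1)'s for every i). -/
namespace KronRSK

/-- Column bumping: insert `x` into a strictly increasing column (read top to
bottom), displacing the topmost entry `≥ x`; returns the new column and the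
bumped entry (if any). -/
def bumpCol (x : ℕ) : List ℕ → List ℕ × Option ℕ
  | [] => ([x], none)
  | a :: l => if x ≤ a then (x :: l, some a) else
      let p := bumpCol x l; (a :: p.1, p.2)

/-- Column insertion of `x` into a tableau represented as its list of columns
(left to right). -/
def colInsert (x : ℕ) : List (List ℕ) → List (List ℕ)
  | [] => [[x]]
  | c :: rest =>
    match bumpCol x c with
    | (c', none) => c' :: rest
    | (c', some y) => c' :: colInsert y rest

/-- `P(w) = w₁ → ( ⋯ → (w_l → ∅) ⋯ )`: the tableau obtained by successively
column-inserting the letters of `w` into the empty tableau. -/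
def Pcol (w : List ℕ) : List (List ℕ) :=
  w.foldr (fun x T => colInsert x T) []

/-- Row bumping: insert `x` into a weakly increasing row, displacing the leftmost
entry `> x`. -/
def bumpRow (x : ℕ) : List ℕ → List ℕ × Option ℕ
  | [] => ([x], none)
  | a :: l => if x < a then (x :: l, some a) else
      let p := bumpRow x l; (a :: p.1, p.2)

/-- Row insertion of `x` into a tableau represented as its list of rows
(top to bottom). -/
def rowInsert (x : ℕ) : List (List ℕ) → List (List ℕ)
  | [] => [[x]]
  | row :: rest =>
    match bumpRow x row with
    | (row', none) => row' :: rest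
    | (row', some y) => row' :: rowInsert y rest

/-- `P(w) = (⋯(∅ ← w₁) ← ⋯ ) ← w_l`: the insertion tableau of `w` by row insertion. -/
def Prow (w : List ℕ) : List (List ℕ) :=
  w.foldl (fun T x => rowInsert x T) []

/-- The canonical tableau `C(λ)` of shape and content `λ` (length `p`),
as a list of columns: column `j` is `1, 2, …, λ'_j`. -/
def canoCols (lam : ℕ → ℕ) (p : ℕ) : List (List ℕ) :=
  (List.range (lam 0)).map (fun j => ((List.range p).filter (fun i => j < lam i)).map (· + 1))

/-- The canonical tableau `C(λ)` of shape and content `λ` (length `p`),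
as a list of rows: row `i` consists of `λ_i` copies of `i`. -/
def canoRows (lam : ℕ → ℕ) (p : ℕ) : List (List ℕ) :=
  (List.range p).map (fun i => List.replicate (lam i) (i + 1))

/-- `w` is a reverse lattice word: every suffix contains at least as many `i`s
as `(i+1)`s, for every `i ≥ 1`. -/
def RevLattice (w : List ℕ) : Prop :=
  ∀ k i, ((w.drop k).count (i + 2)) ≤ (w.drop k).count (i + 1)

/-- The bottom row of the two-line lexicographic array of the `p × q` matrix `B`:
for each row `i` (in order) and each column `j` (in order), the letter `j+1`
repeated `B i j` times. -/
def wordOf (B : ℕ → ℕ → ℕ) (p q : ℕ) : List ℕ :=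
  (List.range p).flatMap (fun i => (List.range q).flatMap (fun j => List.replicate (B i j) (j + 1)))

/-- The RSK insertion tableau `P` of the matrix `B`. -/
def PTab (B : ℕ → ℕ → ℕ) (p q : ℕ) : List (List ℕ) :=
  Prow (wordOf B p q)

/-- The RSK recording tableau `Q` of the matrix `B` (by the symmetry theorem for
RSK, it is the insertion tableau of the transposed matrix). -/
def QTab (B : ℕ → ℕ → ℕ) (p q : ℕ) : List (List ℕ) :=
  PTab (fun i j => B j i) q p

/-- 1-indexed access to the entries of the matrix `B` (0-indexed). -/
def b1 (B : ℕ → ℕ → ℕ) (i j : ℕ) : ℕ := B (i - 1) (j - 1)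

/-- the column [1,2,…,h] -/
def seg (h : ℕ) : List ℕ := List.range' 1 h

@[simp] lemma seg_length (h : ℕ) : (seg h).length = h := by simp [seg]

@[simp] lemma seg_getElem {h i : ℕ} (hi : i < h) : (seg h)[i]'(by simpa using hi) = i + 1 := by
  simp [seg, List.getElem_range', Nat.add_comm]

lemma seg_getD {h i : ℕ} (hi : i < h) : (seg h).getD i 0 = i + 1 := by
  rw [List.getD_eq_getElem _ _ (by simpa using hi)]; exact seg_getElem hi

@[simp] lemma seg_zero : seg 0 = [] := rfl

lemma seg_succ (h : ℕ) : seg (h + 1) = seg h ++ [h + 1] := by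
  simp [seg, List.range'_concat, Nat.add_comm]

lemma seg_ne_nil {h : ℕ} (hh : 0 < h) : seg h ≠ [] := by
  intro h0; have := seg_length h; rw [h0] at this; simp at this; omega

lemma seg_chain' (h : ℕ) : (seg h).Chain' (· < ·) := by
  rw [List.Chain', List.isChain_iff_pairwise]
  rw [List.pairwise_iff_getElem]
  intro i j hi hj hij
  simp only [seg_length] at hi hj
  rw [seg_getElem hi, seg_getElem hj]; omega

lemma bumpCol_none {x : ℕ} : ∀ {l l' : List ℕ}, bumpCol x l = (l', none) →
    l' = l ++ [x] ∧ ∀ a ∈ l, a < x := by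
  intro l
  induction l with
  | nil => intro l' h; simp [bumpCol] at h; simp [h.symm]
  | cons a t ih =>
    intro l' h
    by_cases hxa : x ≤ a
    · simp [bumpCol, hxa] at h
    · simp only [bumpCol, if_neg hxa] at h
      injection h with h1 h2
      have huv : bumpCol x t = ((bumpCol x t).1, none) := by
        rw [← h2]
      obtain ⟨e1, e2⟩ := ih huv
      constructor
      · rw [← h1, e1]; simp
      · intro b hb; rcases List.mem_cons.mp hb with hb | hb
        · subst hb; omega
        · exact e2 b hb

lemma bumpCol_some {x : ℕ} : ∀ {l l' : List ℕ} {y : ℕ}, bumpCol x l = (l', some y) →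
    ∃ l₁ l₂, l = l₁ ++ y :: l₂ ∧ l' = l₁ ++ x :: l₂ ∧ (∀ a ∈ l₁, a < x) ∧ x ≤ y := by
  intro l
  induction l with
  | nil => intro l' y h; simp [bumpCol] at h
  | cons a t ih =>
    intro l' y h
    by_cases hxa : x ≤ a
    · simp only [bumpCol, if_pos hxa] at h
      injection h with h1 h2
      injection h2 with h2
      subst h2
      exact ⟨[], t, by simp, by simp [← h1], by simp, hxa⟩
    · simp only [bumpCol, if_neg hxa] at h
      injection h with h1 h2
      have huv : bumpCol x t = ((bumpCol x t).1, some y) := by rw [← h2]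
      obtain ⟨l₁, l₂, e1, e2, e3, e4⟩ := ih huv
      refine ⟨a :: l₁, l₂, by simp [e1], by simp [← h1, e2], ?_, e4⟩
      intro b hb; rcases List.mem_cons.mp hb with hb | hb
      · subst hb; omega
      · exact e3 b hb

lemma bumpCol_lt {x : ℕ} : ∀ {l : List ℕ}, (∀ a ∈ l, a < x) → bumpCol x l = (l ++ [x], none) := by
  intro l
  induction l with
  | nil => intro _; simp [bumpCol]
  | cons a t ih =>
    intro h
    have hxa : ¬ x ≤ a := by have := h a (by simp); omega
    simp only [bumpCol, if_neg hxa, ih (fun b hb => h b (by simp [hb]))]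
    simp

lemma bumpCol_seg_mem {x h : ℕ} (h1 : 1 ≤ x) (h2 : x ≤ h) :
    bumpCol x (seg h) = (seg h, some x) := by
  suffices H : ∀ n s, s + 1 ≤ x → x ≤ s + n → bumpCol x (List.range' (s+1) n) = (List.range' (s+1) n, some x) by
    have := H h 0 h1 (by omega); simpa [seg] using this
  intro n
  induction n with
  | zero => intro s hs hx; omega
  | succ n ih =>
    intro s hs hx
    rw [List.range'_succ]
    by_cases hxs : x ≤ s + 1
    · have : x = s + 1 := by omega
      simp [bumpCol, hxs, this]
    · simp only [bumpCol, if_neg hxs]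
      have := ih (s+1) (by omega) (by omega)
      rw [show s + 1 + 1 = s + 2 from rfl] at this
      rw [this]


/-- domination between adjacent columns -/
def dom (c d : List ℕ) : Prop :=
  d.length ≤ c.length ∧ ∀ i, i < d.length → c.getD i 0 ≤ d.getD i 0

/-- tableau invariant -/
def TabInv (T : List (List ℕ)) : Prop :=
  T.Chain' dom ∧ ∀ c ∈ T, c ≠ [] ∧ c.Chain' (· < ·)

lemma mem_of_getLast? {l : List ℕ} {a : ℕ} (h : l.getLast? = some a) : a ∈ l := by
  cases l with
  | nil => simp at h
  | cons b t =>
    rw [List.getLast?_eq_getLast (by simp)] at h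
    injection h with h; rw [← h]; exact List.getLast_mem _

lemma getD_mid (l₁ : List ℕ) (a : ℕ) (l₂ : List ℕ) : (l₁ ++ a :: l₂).getD l₁.length 0 = a := by
  rw [List.getD_append_right _ _ _ _ (le_refl _)]; simp

lemma getD_mid_ne {i : ℕ} (l₁ : List ℕ) (a b : ℕ) (l₂ : List ℕ) (h : i ≠ l₁.length) :
    (l₁ ++ a :: l₂).getD i 0 = (l₁ ++ b :: l₂).getD i 0 := by
  rcases Nat.lt_or_ge i l₁.length with hi | hi
  · rw [List.getD_append _ _ _ _ hi, List.getD_append _ _ _ _ hi]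
  · rw [List.getD_append_right _ _ _ _ hi, List.getD_append_right _ _ _ _ hi]
    have hi' : l₁.length < i := lt_of_le_of_ne hi (Ne.symm h)
    obtain ⟨k, hk⟩ : ∃ k, i - l₁.length = k + 1 := ⟨i - l₁.length - 1, by omega⟩
    rw [hk]
    simp

lemma chain_lt_mid {l₁ : List ℕ} {y : ℕ} {l₂ : List ℕ} {x : ℕ}
    (hc : (l₁ ++ y :: l₂).Chain' (· < ·)) (h1 : ∀ a ∈ l₁, a < x) (hxy : x ≤ y) :
    (l₁ ++ x :: l₂).Chain' (· < ·) := by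
  rw [List.Chain', List.isChain_append] at hc ⊢
  obtain ⟨c1, c2, c3⟩ := hc
  refine ⟨c1, ?_, ?_⟩
  · rw [List.isChain_cons] at c2 ⊢
    exact ⟨fun z hz => lt_of_le_of_lt hxy (c2.1 z hz), c2.2⟩
  · intro u hu v hv
    simp only [List.head?_cons, Option.mem_def, Option.some.injEq] at hv
    subst hv
    exact h1 u (mem_of_getLast? hu)



lemma dom_def {c d : List ℕ} : dom c d ↔
    d.length ≤ c.length ∧ ∀ i, i < d.length → c.getD i 0 ≤ d.getD i 0 := Iff.rfl

lemma inv_def {T : List (List ℕ)} : TabInv T ↔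
    T.Chain' dom ∧ ∀ c ∈ T, c ≠ [] ∧ c.Chain' (· < ·) := Iff.rfl

lemma getD_mem {l : List ℕ} {i : ℕ} (h : i < l.length) : l.getD i 0 ∈ l := by
  rw [List.getD_eq_getElem _ _ h]; exact List.getElem_mem h

lemma colInsert_head (T : List (List ℕ)) (y : ℕ) :
    ∃ hd tl, colInsert y T = hd :: tl ∧
      ((T = [] ∧ hd = [y]) ∨
       (∃ d rest, T = d :: rest ∧ hd = d ++ [y] ∧ ∀ a ∈ d, a < y) ∨
       (∃ d rest m₁ m₂ z, T = d :: rest ∧ d = m₁ ++ z :: m₂ ∧ hd = m₁ ++ y :: m₂ ∧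
          (∀ a ∈ m₁, a < y) ∧ y ≤ z)) := by
  cases T with
  | nil => exact ⟨[y], [], by simp [colInsert], Or.inl ⟨rfl, rfl⟩⟩
  | cons d rest =>
    rcases hb : bumpCol y d with ⟨d', o⟩
    cases o with
    | none =>
      obtain ⟨e1, e2⟩ := bumpCol_none hb
      exact ⟨d', rest, by simp [colInsert, hb], Or.inr (Or.inl ⟨d, rest, rfl, e1, e2⟩)⟩
    | some z =>
      obtain ⟨m₁, m₂, e1, e2, e3, e4⟩ := bumpCol_some hb
      exact ⟨d', colInsert z rest, by simp [colInsert, hb],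
        Or.inr (Or.inr ⟨d, rest, m₁, m₂, z, rfl, e1, e2, e3, e4⟩)⟩

lemma colInsert_inv : ∀ T, TabInv T → ∀ x, TabInv (colInsert x T) := by
  intro T
  induction T with
  | nil =>
    intro _ x
    constructor
    · simp [colInsert, List.Chain']
    · intro c hc
      simp [colInsert] at hc
      subst hc
      exact ⟨by simp, by simp [List.Chain']⟩
  | cons c rest ih =>
    intro hInv x
    obtain ⟨hchain, hcols⟩ := hInv
    have hcdom : ∀ d ∈ rest.head?, dom c d := (List.isChain_cons.mp hchain).1
    have hchain_rest : rest.Chain' dom := (List.isChain_cons.mp hchain).2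
    have hInvrest : TabInv rest := ⟨hchain_rest, fun d hd => hcols d (List.mem_cons_of_mem _ hd)⟩
    obtain ⟨hcne, hcchain⟩ := hcols c List.mem_cons_self
    rcases hb : bumpCol x c with ⟨c', o⟩
    cases o with
    | none =>
      obtain ⟨rfl, hlt⟩ := bumpCol_none hb
      have hre : colInsert x (c :: rest) = (c ++ [x]) :: rest := by simp [colInsert, hb]
      rw [hre]
      constructor
      · rw [List.Chain', List.isChain_cons]
        refine ⟨?_, hchain_rest⟩
        intro d hd
        obtain ⟨hd1, hd2⟩ := hcdom d hd
        refine ⟨by simp; omega, ?_⟩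
        intro i hi
        rw [List.getD_append _ _ _ _ (lt_of_lt_of_le hi hd1)]
        exact hd2 i hi
      · intro e he
        rcases List.mem_cons.mp he with he | he
        · subst he
          refine ⟨by simp, ?_⟩
          rw [List.Chain', List.isChain_append]
          refine ⟨hcchain, by simp, ?_⟩
          intro u hu v hv
          simp only [List.head?_cons, Option.mem_def, Option.some.injEq] at hv
          subst hv
          exact hlt u (mem_of_getLast? hu)
        · exact hcols e (List.mem_cons_of_mem _ he)
    | some y =>
      obtain ⟨l₁, l₂, hc_eq, hc'_eq, hl₁, hxy⟩ := bumpCol_some hb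
      have hre : colInsert x (c :: rest) = c' :: colInsert y rest := by simp [colInsert, hb]
      rw [hre]
      have hIH : TabInv (colInsert y rest) := ih hInvrest y
      have hclen : c.length = c'.length := by rw [hc_eq, hc'_eq]; simp
      have hc'getD_le_y : ∀ i, i ≤ l₁.length → c'.getD i 0 ≤ y := by
        intro i hi
        rcases lt_or_eq_of_le hi with hi | hi
        · rw [hc'_eq, List.getD_append _ _ _ _ hi]
          have := hl₁ _ (getD_mem hi)
          omega
        · rw [hc'_eq, hi, getD_mid]
          exact hxy
      obtain ⟨hd, tl, heq, hcases⟩ := colInsert_head rest y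
      rw [heq]
      have hdom_c'_hd : dom c' hd := by
        rcases hcases with ⟨hrest, rfl⟩ | ⟨d, rest', hrest, rfl, hdlt⟩ |
          ⟨d, rest', m₁, m₂, z, hrest, hd_eq, rfl, hm₁, hyz⟩
        · refine ⟨?_, ?_⟩
          · rw [← hclen, hc_eq]; simp; omega
          · intro i hi
            simp only [List.length_singleton] at hi
            interval_cases i
            simpa using hc'getD_le_y 0 (by omega)
        · -- bump-none in next column
          obtain ⟨hd1, hd2⟩ := hcdom d (by rw [hrest]; rfl)
          have hdlen : d.length ≤ l₁.length := by
            by_contra hcon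
            push_neg at hcon
            have h1 : c.getD l₁.length 0 ≤ d.getD l₁.length 0 := hd2 _ hcon
            rw [hc_eq, getD_mid] at h1
            have := hdlt _ (getD_mem hcon)
            omega
          refine ⟨by simp; rw [← hclen, hc_eq]; simp; omega, ?_⟩
          intro i hi
          simp only [List.length_append, List.length_singleton] at hi
          rcases Nat.lt_or_ge i d.length with hid | hid
          · rw [List.getD_append _ _ _ _ hid]
            have hil : i < l₁.length := lt_of_lt_of_le hid hdlen
            rw [hc'_eq, List.getD_append _ _ _ _ hil]
            have := hd2 i hid
            rw [hc_eq, List.getD_append _ _ _ _ hil] at this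
            exact this
          · have hieq : i = d.length := by omega
            subst hieq
            have : (d ++ [y]).getD d.length 0 = y := getD_mid d y []
            rw [this]
            exact hc'getD_le_y _ hdlen
        · -- bump-some in next column
          obtain ⟨hd1, hd2⟩ := hcdom d (by rw [hrest]; rfl)
          have hm₁len : m₁.length ≤ l₁.length := by
            by_contra hcon
            push_neg at hcon
            have hlend : l₁.length < d.length := by rw [hd_eq]; simp; omega
            have h1 : c.getD l₁.length 0 ≤ d.getD l₁.length 0 := hd2 _ hlend
            rw [hc_eq, getD_mid] at h1
            rw [hd_eq, List.getD_append _ _ _ _ hcon] at h1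
            have := hm₁ _ (getD_mem hcon)
            omega
          have hhdlen : (m₁ ++ y :: m₂).length = d.length := by rw [hd_eq]; simp
          refine ⟨by rw [hhdlen, ← hclen]; exact hd1, ?_⟩
          intro i hi
          rw [hhdlen] at hi
          by_cases him : i = m₁.length
          · subst him
            rw [getD_mid]
            exact hc'getD_le_y _ hm₁len
          · rw [getD_mid_ne m₁ y z m₂ him, ← hd_eq]
            by_cases hil : i = l₁.length
            · subst hil
              rw [hc'_eq, getD_mid]
              have h1 : c.getD l₁.length 0 ≤ d.getD l₁.length 0 := hd2 _ hi
              rw [hc_eq, getD_mid] at h1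
              omega
            · rw [hc'_eq, getD_mid_ne l₁ x y l₂ hil, ← hc_eq]
              exact hd2 i hi
      constructor
      · rw [List.Chain', List.isChain_cons]
        refine ⟨?_, ?_⟩
        · intro e he
          simp only [List.head?_cons, Option.mem_def, Option.some.injEq] at he
          subst he
          exact hdom_c'_hd
        · rw [← heq]; exact hIH.1
      · intro e he
        rcases List.mem_cons.mp he with he | he
        · subst he
          constructor
          · rw [hc'_eq]; simp
          · rw [hc'_eq]
            exact chain_lt_mid (hc_eq ▸ hcchain) hl₁ hxy
        · have : e ∈ colInsert y rest := by rw [heq]; exact he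
          exact hIH.2 e this

lemma Pcol_inv (w : List ℕ) : TabInv (Pcol w) := by
  induction w with
  | nil => exact ⟨by simp [Pcol, List.Chain'], by simp [Pcol]⟩
  | cons a w ih => exact colInsert_inv _ ih a



-- new content
lemma getD_antitone {H : List ℕ} (hH : H.Chain' (fun a b => b ≤ a)) {i j : ℕ}
    (hij : i ≤ j) (hj : j < H.length) : H.getD j 0 ≤ H.getD i 0 := by
  rcases lt_or_eq_of_le hij with hlt | rfl
  · have hp : H.Pairwise (fun a b => b ≤ a) := by
      rw [← List.isChain_iff_pairwise] at *
      · exact hH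
    rw [List.pairwise_iff_getElem] at hp
    rw [List.getD_eq_getElem _ _ hj, List.getD_eq_getElem _ _ (lt_of_le_of_lt hij hj)]
    exact hp i j _ hj hlt
  · rfl

lemma seg_mem_lt {h a : ℕ} (ha : a ∈ seg h) : 1 ≤ a ∧ a ≤ h := by
  rw [seg, List.mem_range'_1] at ha
  omega

lemma lemA : ∀ (H : List ℕ) (c x : ℕ), 1 ≤ x → (∀ j, j < c → x ≤ H.getD j 0) →
    ((c = H.length ∧ x = 1) ∨ (c < H.length ∧ H.getD c 0 = x - 1)) →
    colInsert x (H.map seg) = (if c = H.length then H ++ [1] else H.set c x).map seg := by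
  intro H
  induction H with
  | nil =>
    intro c x hx hbefore hbr
    rcases hbr with ⟨hc, hx1⟩ | ⟨hc, _⟩
    · subst hx1
      simp only [List.length_nil] at hc
      subst hc
      simp [colInsert]
      decide
    · simp at hc
  | cons h Ht ih =>
    intro c x hx hbefore hbr
    cases c with
    | zero =>
      rcases hbr with ⟨hc, _⟩ | ⟨_, hval⟩
      · simp at hc
      · simp only [List.getD_cons_zero] at hval
        have hlt : ∀ a ∈ seg h, a < x := by
          intro a ha
          have := seg_mem_lt ha
          omega
        have hb : bumpCol x (seg h) = (seg h ++ [x], none) := bumpCol_lt hlt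
        have hre : colInsert x ((h :: Ht).map seg) = (seg h ++ [x]) :: Ht.map seg := by
          simp [colInsert, hb]
        rw [hre]
        have hif : ¬ (0 = (h :: Ht).length) := by simp
        rw [if_neg hif]
        have : seg h ++ [x] = seg x := by
          have hx1 : x = h + 1 := by omega
          subst hx1
          rw [seg_succ]
        rw [this]
        simp
    | succ c' =>
      have hxh : x ≤ h := by
        have := hbefore 0 (by omega)
        simpa using this
      have hb : bumpCol x (seg h) = (seg h, some x) := bumpCol_seg_mem hx hxh
      have hre : colInsert x ((h :: Ht).map seg) = seg h :: colInsert x (Ht.map seg) := by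
        simp [colInsert, hb]
      rw [hre]
      have hIH := ih c' x hx (fun j hj => by
        have := hbefore (j+1) (by omega)
        simpa using this)
        (by
          rcases hbr with ⟨hc, hx1⟩ | ⟨hc, hval⟩
          · left; constructor
            · simp at hc; omega
            · exact hx1
          · right; constructor
            · simp at hc; omega
            · simpa using hval)
      rw [hIH]
      by_cases hc : c' = Ht.length
      · rw [if_pos hc, if_pos (by simp [hc])]
        simp
      · rw [if_neg hc, if_neg (by simp [hc])]
        simp




lemma lemB : ∀ (T : List (List ℕ)) (x : ℕ) (H : List ℕ), TabInv T → 1 ≤ x →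
    H.Chain' (fun a b => b ≤ a) → colInsert x T = H.map seg →
    ∃ c₂, c₂ < H.length ∧ H.getD c₂ 0 = x ∧ H.getD (c₂+1) 0 < x ∧
      ((c₂ + 1 = H.length ∧ x = 1 ∧ T = (H.take c₂).map seg) ∨
       (2 ≤ x ∧ T = (H.set c₂ (x-1)).map seg)) := by
  intro T
  induction T with
  | nil =>
    intro x H _ hx hH heq
    simp only [colInsert] at heq
    cases H with
    | nil => simp at heq
    | cons h Ht =>
      simp only [List.map_cons] at heq
      have h1 : [x] = seg h ∧ [] = Ht.map seg := by
        constructor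
        · exact (List.cons.injEq _ _ _ _ ▸ heq).1
        · exact (List.cons.injEq _ _ _ _ ▸ heq).2
      have hHt : Ht = [] := by
        have := h1.2
        cases Ht with
        | nil => rfl
        | cons a b => simp at this
      have hh1 : h = 1 := by
        have := congrArg List.length h1.1
        simp [seg_length] at this
        omega
      have hx1 : x = 1 := by
        have := h1.1
        rw [hh1] at this
        have : x = (seg 1).getD 0 0 := by rw [← this]; rfl
        rw [seg_getD (by omega)] at this
        omega
      subst hHt hh1 hx1
      exact ⟨0, by simp, by simp [seg_getD], by simp, Or.inl ⟨by simp, rfl, by simp⟩⟩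
  | cons c rest ih =>
    intro x H hInv hx hH heq
    obtain ⟨hchain, hcols⟩ := hInv
    have hcdom : ∀ d ∈ rest.head?, dom c d := (List.isChain_cons.mp hchain).1
    have hInvrest : TabInv rest :=
      ⟨(List.isChain_cons.mp hchain).2, fun d hd => hcols d (List.mem_cons_of_mem _ hd)⟩
    obtain ⟨hcne, hcchain⟩ := hcols c List.mem_cons_self
    cases H with
    | nil =>
      exfalso
      rcases hb : bumpCol x c with ⟨c', o⟩
      cases o <;> simp [colInsert, hb] at heq
    | cons h Ht =>
    rcases hb : bumpCol x c with ⟨c', o⟩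
    cases o with
    | none =>
      obtain ⟨rfl, hlt⟩ := bumpCol_none hb
      have hstep : colInsert x (c :: rest) = (c ++ [x]) :: rest := by simp [colInsert, hb]
      rw [hstep, List.map_cons, List.cons.injEq] at heq
      have hcx : c ++ [x] = seg h := heq.1
      have hrest : rest = Ht.map seg := heq.2
      have hclen : c.length + 1 = h := by
        have := congrArg List.length hcx
        simpa [seg_length] using this
      have hxh : x = h := by
        have h1 : (c ++ [x]).getD c.length 0 = x := getD_mid c x []
        rw [hcx, seg_getD (by omega)] at h1
        omega
      have hcseg : c = seg (c.length) := by
        have h2 : seg h = seg c.length ++ [c.length + 1] := by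
          rw [← hclen, seg_succ]
        rw [h2] at hcx
        have := List.append_inj hcx (by simp [seg_length])
        have h3 := this.1
        exact h3
      have hclen1 : 1 ≤ c.length := by
        cases hc0 : c with
        | nil => exact absurd hc0 hcne
        | cons a b => simp [hc0]
      have hx2 : 2 ≤ x := by omega
      refine ⟨0, by simp, by simpa using hxh.symm, ?_, Or.inr ⟨hx2, ?_⟩⟩
      · -- H.getD 1 0 < x
        simp only [List.getD_cons_succ]
        cases Ht with
        | nil => simp; omega
        | cons h₂ Ht' =>
          have hd : dom c (seg h₂) := by
            apply hcdom
            rw [hrest]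
            simp
          have := hd.1
          rw [seg_length] at this
          simp only [List.getD_cons_zero]
          omega
      · -- T = set
        rw [List.set_cons_zero, List.map_cons, List.cons.injEq]
        refine ⟨?_, hrest⟩
        rw [hcseg]
        congr 1
        omega
    | some y =>
      obtain ⟨l₁, l₂, hc_eq, hc'_eq, hl₁, hxy⟩ := bumpCol_some hb
      have hstep : colInsert x (c :: rest) = c' :: colInsert y rest := by simp [colInsert, hb]
      rw [hstep, List.map_cons, List.cons.injEq] at heq
      have hc'seg : c' = seg h := heq.1
      have hrest : colInsert y rest = Ht.map seg := heq.2
      have hHt : Ht.Chain' (fun a b => b ≤ a) := (List.isChain_cons.mp hH).2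
      obtain ⟨c₂', hlt', hval', hnext', hbr'⟩ := ih y Ht hInvrest (le_trans hx hxy) hHt hrest
      -- x = r + 1 where r = l₁.length
      have hrlen : l₁.length < h := by
        have := congrArg List.length hc'seg
        rw [hc'_eq] at this
        simp [seg_length] at this
        omega
      have hxr : x = l₁.length + 1 := by
        have h1 : c'.getD l₁.length 0 = x := by rw [hc'_eq]; exact getD_mid l₁ x l₂
        rw [hc'seg, seg_getD hrlen] at h1
        omega
      have hyh : y ≤ h := by
        have h2 : (h :: Ht).getD (c₂' + 1) 0 ≤ (h :: Ht).getD 0 0 :=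
          getD_antitone hH (by omega) (by simpa using hlt')
        rw [List.getD_cons_succ, List.getD_cons_zero, hval'] at h2
        exact h2
      have hyx : y = x ∧ c = seg h := by
        cases hl₂ : l₂ with
        | nil =>
          have hxh : x = h := by
            rw [hl₂] at hc'_eq
            have := congrArg List.length hc'_eq
            rw [hc'seg] at hc'_eq
            have h3 := congrArg List.length hc'_eq
            simp [seg_length] at h3
            omega
          have hyx : y = x := by omega
          refine ⟨hyx, ?_⟩
          rw [hc_eq, hl₂, hyx, ← hl₂, ← hc'_eq, hc'seg]
        | cons b l₂' =>
          have hb' : b = l₁.length + 2 := by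
            have h4 : c'.getD (l₁.length + 1) 0 = b := by
              rw [hc'_eq, hl₂]
              rw [List.getD_append_right _ _ _ _ (by omega)]
              simp
            have hlen2 : l₁.length + 1 < h := by
              have := congrArg List.length hc'seg
              rw [hc'_eq, hl₂] at this
              simp [seg_length] at this
              omega
            rw [hc'seg, seg_getD hlen2] at h4
            omega
          have hyb : y < b := by
            have hsuf : (y :: b :: l₂') <:+ c := by
              rw [hc_eq, hl₂]
              exact ⟨l₁, rfl⟩
            have := hcchain.suffix hsuf
            exact (List.isChain_cons_cons.mp this).1
          have hyx : y = x := by omega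
          refine ⟨hyx, ?_⟩
          rw [hc_eq, hyx, ← hc'_eq, hc'seg]
      obtain ⟨hyx, hcseg⟩ := hyx
      subst hyx
      refine ⟨c₂' + 1, by simpa using hlt', by simpa using hval', by simpa using hnext', ?_⟩
      rcases hbr' with ⟨hb1, hb2, hb3⟩ | ⟨hb1, hb2⟩
      · left
        refine ⟨by simpa using hb1, hb2, ?_⟩
        rw [List.take_succ_cons, List.map_cons, List.cons.injEq]
        exact ⟨hcseg, hb3⟩
      · right
        refine ⟨hb1, ?_⟩
        rw [List.set_cons_succ, List.map_cons, List.cons.injEq]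
        exact ⟨hcseg, hb2⟩



def conjF (lam : ℕ → ℕ) (p j : ℕ) : ℕ := ((List.range p).filter (fun i => j < lam i)).length

def htsF (lam : ℕ → ℕ) (p : ℕ) : List ℕ := (List.range (lam 0)).map (conjF lam p)

lemma filter_dc (lam : ℕ → ℕ) (hdc : ∀ i j, i ≤ j → lam j ≤ lam i) (j : ℕ) :
    ∀ p, (List.range p).filter (fun i => j < lam i) = List.range (conjF lam p j) := by
  intro p
  induction p with
  | zero => simp [conjF]
  | succ n ih =>
    rw [conjF, List.range_succ, List.filter_append]
    by_cases hp : j < lam n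
    · have hall : (List.range n).filter (fun i => j < lam i) = List.range n := by
        rw [List.filter_eq_self]
        intro a ha
        simp only [decide_eq_true_eq]
        exact lt_of_lt_of_le hp (hdc a n (le_of_lt (List.mem_range.mp ha)))
      rw [hall]
      simp [hp, List.range_succ]
    · have h2 : List.filter (fun i => decide (j < lam i)) [n] = [] := by simp [hp]
      rw [h2]
      simp only [List.append_nil]
      simpa [conjF] using ih

lemma conj_le (lam : ℕ → ℕ) (p j : ℕ) : conjF lam p j ≤ p := by
  have := List.length_filter_le (fun i => decide (j < lam i)) (List.range p)
  simpa [conjF] using this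

lemma conj_mem_iff {lam : ℕ → ℕ} (hdc : ∀ i j, i ≤ j → lam j ≤ lam i) (p j : ℕ) :
    ∀ i, i < conjF lam p j ↔ (i < p ∧ j < lam i) := by
  intro i
  have h1 := filter_dc lam hdc j p
  constructor
  · intro h
    have : i ∈ List.range (conjF lam p j) := List.mem_range.mpr h
    rw [← h1] at this
    have := List.mem_filter.mp this
    exact ⟨List.mem_range.mp this.1, by simpa using this.2⟩
  · intro ⟨h2, h3⟩
    have : i ∈ (List.range p).filter (fun i => j < lam i) :=
      List.mem_filter.mpr ⟨List.mem_range.mpr h2, by simpa using h3⟩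
    rw [h1] at this
    exact List.mem_range.mp this

lemma conj_eq_of {lam : ℕ → ℕ} (hdc : ∀ i j, i ≤ j → lam j ≤ lam i) {p j m : ℕ}
    (hm : m ≤ p) (h1 : ∀ i, i < m → j < lam i) (h2 : ¬ j < lam m) : conjF lam p j = m := by
  have hiff := conj_mem_iff hdc p j
  rcases lt_trichotomy (conjF lam p j) m with h | h | h
  · exfalso
    have := (hiff (conjF lam p j)).mpr ⟨lt_of_lt_of_le h hm, h1 _ h⟩
    omega
  · exact h
  · exfalso
    exact h2 ((hiff m).mp h).2

lemma conj_anti (lam : ℕ → ℕ) (p : ℕ) {j j' : ℕ} (hjj : j ≤ j') :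
    conjF lam p j' ≤ conjF lam p j := by
  apply List.Sublist.length_le
  apply List.monotone_filter_right
  intro a ha
  simp only [decide_eq_true_eq] at *
  omega

lemma seg_eq_map_range (n : ℕ) : seg n = (List.range n).map (· + 1) := by
  rw [seg, List.range'_eq_map_range]
  apply List.map_congr_left
  intro a _
  omega

lemma canoCols_eq {lam : ℕ → ℕ} (hdc : ∀ i j, i ≤ j → lam j ≤ lam i) (p : ℕ) :
    canoCols lam p = (htsF lam p).map seg := by
  rw [canoCols, htsF, List.map_map]
  apply List.map_congr_left
  intro j _
  rw [filter_dc lam hdc j p, Function.comp_apply, seg_eq_map_range]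

lemma htsF_length (lam : ℕ → ℕ) (p : ℕ) : (htsF lam p).length = lam 0 := by simp [htsF]

lemma htsF_getD {lam : ℕ → ℕ} {p j : ℕ} (hj : j < lam 0) :
    (htsF lam p).getD j 0 = conjF lam p j := by
  rw [List.getD_eq_getElem _ _ (by simp [htsF_length, hj])]
  simp [htsF]

lemma htsF_chain (lam : ℕ → ℕ) (p : ℕ) (hdc : ∀ i j, i ≤ j → lam j ≤ lam i) :
    (htsF lam p).Chain' (fun a b => b ≤ a) := by
  rw [List.Chain', List.isChain_iff_pairwise, List.pairwise_iff_getElem]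
  intro i j hi hj hij
  simp only [htsF, List.getElem_map, List.getElem_range]
  exact conj_anti lam p (le_of_lt hij)


def ct (w : List ℕ) (i : ℕ) : ℕ := w.count (i + 1)

lemma ct_cons (a : ℕ) (w : List ℕ) (ha : 1 ≤ a) (i : ℕ) :
    ct (a :: w) i = ct w i + (if i = a - 1 then 1 else 0) := by
  rw [ct, ct, List.count_cons]
  congr 1
  by_cases h : i = a - 1
  · rw [if_pos h, if_pos (by simpa using by omega)]
  · rw [if_neg h, if_neg (by simp; omega)]

lemma RevLattice_cons_tail {a : ℕ} {w : List ℕ} (h : RevLattice (a :: w)) : RevLattice w := by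
  intro k i
  have := h (k + 1) i
  simpa using this

lemma RevLattice_ct_anti {w : List ℕ} (h : RevLattice w) : ∀ i j, i ≤ j → ct w j ≤ ct w i := by
  have ha : Antitone (ct w) := by
    apply antitone_nat_of_succ_le
    intro i
    have := h 0 i
    simpa [ct] using this
  exact fun i j hij => ha hij

lemma fwd : ∀ (w : List ℕ) (p : ℕ), (∀ x ∈ w, 0 < x) → (∀ i, p ≤ i → ct w i = 0) →
    RevLattice w → Pcol w = (htsF (ct w) p).map seg := by
  intro w
  induction w with
  | nil =>
    intro p _ _ _
    have h0 : ct ([] : List ℕ) 0 = 0 := by simp [ct]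
    simp [Pcol, htsF, h0]
  | cons a w' ih =>
    intro p hpos hvan hRL
    have ha : 1 ≤ a := hpos a (by simp)
    have hRL' := RevLattice_cons_tail hRL
    have hpos' : ∀ x ∈ w', 0 < x := fun x hx => hpos x (by simp [hx])
    have hcteq : ∀ i, ct (a :: w') i = ct w' i + (if i = a - 1 then 1 else 0) := ct_cons a w' ha
    have hvan' : ∀ i, p ≤ i → ct w' i = 0 := by
      intro i hi
      have h1 := hvan i hi
      have h2 := hcteq i
      omega
    have hP := ih p hpos' hvan' hRL'
    have hmu := RevLattice_ct_anti hRL'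
    have hlam := RevLattice_ct_anti hRL
    have hap : a - 1 < p := by
      by_contra hcon
      push_neg at hcon
      have h1 := hvan (a - 1) hcon
      rw [hcteq, if_pos rfl] at h1
      omega
    have hstep : Pcol (a :: w') = colInsert a (Pcol w') := rfl
    rw [hstep, hP]
    have hbefore : ∀ j, j < ct w' (a-1) → a ≤ (htsF (ct w') p).getD j 0 := by
      intro j hj
      have hjlen : j < ct w' 0 := lt_of_lt_of_le hj (hmu 0 (a-1) (by omega))
      rw [htsF_getD hjlen]
      have := ((conj_mem_iff hmu p j) (a-1)).mpr ⟨hap, hj⟩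
      omega
    by_cases hcl : ct w' (a-1) = (htsF (ct w') p).length
    · -- new column case, a = 1
      have hcl' : ct w' (a-1) = ct w' 0 := by rw [hcl, htsF_length]
      have ha1 : a = 1 := by
        by_contra hcon
        have h1 : ct (a::w') (a-1) ≤ ct (a::w') (a-2) := hlam (a-2) (a-1) (by omega)
        have e1 := hcteq (a-1)
        have e2 := hcteq (a-2)
        rw [if_pos rfl] at e1
        rw [if_neg (by omega)] at e2
        have h2 : ct w' (a-2) ≤ ct w' 0 := hmu 0 (a-2) (by omega)
        omega
      have hres := lemA (htsF (ct w') p) (ct w' (a-1)) a (by omega) hbefore (Or.inl ⟨hcl, ha1⟩)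
      rw [hres, if_pos hcl]
      congr 1
      have hl0 : ct (a::w') 0 = ct w' 0 + 1 := by rw [hcteq]; simp [ha1]
      rw [htsF, htsF, hl0, List.range_succ, List.map_append]
      congr 1
      · apply List.map_congr_left
        intro j hj
        have hj' := List.mem_range.mp hj
        rw [conjF, conjF]
        congr 1
        apply List.filter_congr
        intro i _
        simp only [decide_eq_decide]
        by_cases hi0 : i = 0
        · subst hi0
          rw [hcteq]
          simp only [ha1]
          omega
        · rw [hcteq, if_neg (by omega)]
          omega
      · simp only [List.map_cons, List.map_nil, List.cons.injEq, and_true]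
        symm
        apply conj_eq_of hlam (show 1 ≤ p by omega)
        · intro i hi
          have : i = 0 := by omega
          subst this
          rw [hl0]
          omega
        · rw [hcteq, if_neg (by omega)]
          have := hmu 0 1 (by omega)
          omega
    · -- bump case
      have hclt : ct w' (a-1) < (htsF (ct w') p).length := by
        rw [htsF_length]
        have := hmu 0 (a-1) (by omega)
        rw [htsF_length] at hcl
        omega
      have ha2 : 2 ≤ a := by
        by_contra hcon
        have ha1 : a = 1 := by omega
        apply hcl
        rw [htsF_length, ha1]
      have hgd : (htsF (ct w') p).getD (ct w' (a-1)) 0 = a - 1 := by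
        rw [htsF_getD (by rw [htsF_length] at hclt; exact hclt)]
        apply conj_eq_of hmu (show a - 1 ≤ p by omega)
        · intro i hi
          have e1 : ct (a::w') i = ct w' i := by rw [hcteq, if_neg (by omega)]; omega
          have e2 : ct (a::w') (a-1) = ct w' (a-1) + 1 := by rw [hcteq, if_pos rfl]
          have e3 := hlam i (a-1) (by omega)
          omega
        · omega
      have hres := lemA (htsF (ct w') p) (ct w' (a-1)) a (by omega) hbefore
        (Or.inr ⟨hclt, by rw [hgd]⟩)
      rw [hres, if_neg hcl]
      congr 1
      apply List.ext_getElem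
      · rw [List.length_set, htsF_length, htsF_length, hcteq, if_neg (by omega)]
        omega
      · intro n h₁ h₂
        rw [List.getElem_set]
        have hn : n < ct w' 0 := by rw [List.length_set, htsF_length] at h₁; exact h₁
        simp only [htsF, List.getElem_map, List.getElem_range]
        by_cases hnc : ct w' (a-1) = n
        · rw [if_pos hnc]
          symm
          apply conj_eq_of hlam (show a ≤ p by omega)
          · intro i hi
            have e2 : ct (a::w') (a-1) = ct w' (a-1) + 1 := by rw [hcteq, if_pos rfl]
            have e3 := hlam i (a-1) (by omega)
            omega
          · have e4 : ct (a::w') a = ct w' a := by rw [hcteq, if_neg (by omega)]; omega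
            have e5 := hmu (a-1) a (by omega)
            omega
        · rw [if_neg hnc]
          rw [conjF, conjF]
          congr 1
          apply List.filter_congr
          intro i _
          simp only [decide_eq_decide]
          by_cases hia : i = a - 1
          · subst hia
            rw [hcteq, if_pos rfl]
            omega
          · rw [hcteq, if_neg hia]
            omega


lemma bwd : ∀ (w : List ℕ) (p : ℕ) (lam : ℕ → ℕ), (∀ x ∈ w, 0 < x) →
    (∀ i j, i ≤ j → lam j ≤ lam i) → (∀ i, p ≤ i → lam i = 0) → (∀ i, ct w i = lam i) →
    Pcol w = (htsF lam p).map seg → RevLattice w := by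
  intro w
  induction w with
  | nil =>
    intro p lam _ _ _ _ _
    intro k i
    simp
  | cons a w' ih =>
    intro p lam hpos hdec hvan hcont heq
    have ha : 1 ≤ a := hpos a (by simp)
    have hcteq : ∀ i, ct (a :: w') i = ct w' i + (if i = a - 1 then 1 else 0) := ct_cons a w' ha
    have hap : a - 1 < p := by
      by_contra hcon
      push_neg at hcon
      have h1 := hvan (a-1) hcon
      have h2 := hcont (a-1)
      have h3 := hcteq (a-1)
      rw [if_pos rfl] at h3
      omega
    have hstep : colInsert a (Pcol w') = (htsF lam p).map seg := heq
    have hchain : (htsF lam p).Chain' (fun a b => b ≤ a) := htsF_chain lam p hdec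
    obtain ⟨c₂, hlen, hval, hnext, hbr⟩ :=
      lemB (Pcol w') a (htsF lam p) (Pcol_inv w') ha hchain hstep
    rw [htsF_length] at hlen
    rw [htsF_getD hlen] at hval
    -- consequences of hval
    have hiff := conj_mem_iff hdec p c₂
    have hLgt : c₂ < lam (a-1) := ((hiff (a-1)).mp (by omega)).2
    have hla : lam a ≤ c₂ := by
      by_cases hp : a < p
      · by_contra hcon
        push_neg at hcon
        have := (hiff a).mpr ⟨hp, hcon⟩
        omega
      · push_neg at hp
        have := hvan a hp
        omega
    -- c₂ = lam (a-1) - 1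
    have hj₀ : conjF lam p (lam (a-1) - 1) = a := by
      apply conj_eq_of hdec (show a ≤ p by omega)
      · intro i hi
        have := hdec i (a-1) (by omega)
        omega
      · omega
    have hc₂ : c₂ = lam (a-1) - 1 := by
      rcases lt_trichotomy c₂ (lam (a-1) - 1) with hlt | heqq | hgt
      · exfalso
        have hj₀len : lam (a-1) - 1 < lam 0 := by
          have := hdec 0 (a-1) (by omega)
          omega
        have h1 : (htsF lam p).getD (lam (a-1) - 1) 0 ≤ (htsF lam p).getD (c₂ + 1) 0 :=
          getD_antitone hchain (by omega) (by rw [htsF_length]; exact hj₀len)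
        rw [htsF_getD hj₀len, hj₀] at h1
        omega
      · exact heqq
      · exfalso
        -- j₀ + 1 = lam (a-1) ≤ c₂ < lam 0
        have hll : lam (a-1) < lam 0 := by omega
        have h2 : conjF lam p (lam (a-1)) < a := by
          by_contra hcon
          push_neg at hcon
          have := ((conj_mem_iff hdec p (lam (a-1))) (a-1)).mpr
          have h3 : a - 1 < conjF lam p (lam (a-1)) := by omega
          have h4 := ((conj_mem_iff hdec p (lam (a-1))) (a-1)).mp h3
          omega
        have h1 : (htsF lam p).getD c₂ 0 ≤ (htsF lam p).getD (lam (a-1)) 0 :=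
          getD_antitone hchain (by omega) (by rw [htsF_length]; omega)
        rw [htsF_getD hll, htsF_getD hlen] at h1
        omega
    -- now branch
    have hfin : RevLattice w' → RevLattice (a :: w') := by
      intro hRLw'
      intro k i
      cases k with
      | zero =>
        simp only [List.drop_zero]
        have e1 := hcont (i+1)
        have e2 := hcont i
        have := hdec i (i+1) (by omega)
        show ct (a::w') (i+1) ≤ ct (a::w') i
        omega
      | succ k =>
        simp only [List.drop_succ_cons]
        exact hRLw' k i
    apply hfin
    rcases hbr with ⟨hb1, hb2, hb3⟩ | ⟨hb1, hb3⟩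
    · -- a = 1, new column was last
      subst hb2
      have hc0 : c₂ = lam 0 - 1 := by simpa using hc₂
      set mu : ℕ → ℕ := fun i => if i = 0 then lam 0 - 1 else lam i with hmu_def
      have hmuv0 : mu 0 = lam 0 - 1 := by simp [hmu_def]
      have hmuvn : ∀ i, i ≠ 0 → mu i = lam i := by
        intro i hi
        simp [hmu_def, hi]
      have h5 : lam 1 ≤ c₂ := by
        by_cases hp : 1 < p
        · by_contra hcon
          push_neg at hcon
          have := (hiff 1).mpr ⟨hp, hcon⟩
          omega
        · have := hvan 1 (by omega)
          omega
      have hmu_dec : ∀ i j, i ≤ j → mu j ≤ mu i := by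
        have hsucc : ∀ n, mu (n+1) ≤ mu n := by
          intro n
          cases n with
          | zero =>
            rw [hmuv0, hmuvn 1 (by omega)]
            omega
          | succ n =>
            rw [hmuvn (n+2) (by omega), hmuvn (n+1) (by omega)]
            exact hdec (n+1) (n+2) (by omega)
        exact fun i j hij => antitone_nat_of_succ_le hsucc hij
      have hmu_van : ∀ i, p ≤ i → mu i = 0 := by
        intro i hi
        rw [hmuvn i (by omega)]
        exact hvan i hi
      have hmu_cont : ∀ i, ct w' i = mu i := by
        intro i
        by_cases hi0 : i = 0
        · subst hi0
          rw [hmuv0]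
          have h6 := hcteq 0
          simp at h6
          have h7 := hcont 0
          omega
        · rw [hmuvn i hi0]
          have h6 := hcteq i
          rw [if_neg (by omega)] at h6
          have h7 := hcont i
          omega
      apply ih p mu (fun x hx => hpos x (by simp [hx])) hmu_dec hmu_van hmu_cont
      rw [hb3]
      congr 1
      rw [htsF, htsF, ← List.map_take, List.take_range]
      have hmin : c₂ ⊓ lam 0 = mu 0 := by rw [hmuv0]; omega
      rw [hmin]
      apply List.map_congr_left
      intro j hj
      have hj' := List.mem_range.mp hj
      rw [conjF, conjF]
      congr 1
      apply List.filter_congr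
      intro i _
      simp only [decide_eq_decide]
      by_cases hi0 : i = 0
      · subst hi0
        rw [hmuv0]
        rw [hmuv0] at hj'
        omega
      · rw [hmuvn i hi0]
    · -- a ≥ 2 case
      set mu : ℕ → ℕ := fun i => if i = a - 1 then lam (a-1) - 1 else lam i with hmu_def
      have hmuv0 : mu (a-1) = lam (a-1) - 1 := by simp [hmu_def]
      have hmuvn : ∀ i, i ≠ a - 1 → mu i = lam i := by
        intro i hi
        simp [hmu_def, hi]
      have hmu_dec : ∀ i j, i ≤ j → mu j ≤ mu i := by
        have hsucc : ∀ n, mu (n+1) ≤ mu n := by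
          intro n
          by_cases h1 : n + 1 = a - 1
          · rw [h1, hmuv0, hmuvn n (by omega)]
            have := hdec n (a-1) (by omega)
            omega
          · by_cases h2 : n = a - 1
            · have e1 : mu n = lam (a-1) - 1 := by rw [h2]; exact hmuv0
              have e2 : mu (n+1) = lam (n+1) := hmuvn (n+1) (by omega)
              have e3 : lam (n+1) = lam a := by rw [show n+1 = a by omega]
              omega
            · rw [hmuvn (n+1) h1, hmuvn n h2]
              exact hdec n (n+1) (by omega)
        exact fun i j hij => antitone_nat_of_succ_le hsucc hij
      have hmu_van : ∀ i, p ≤ i → mu i = 0 := by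
        intro i hi
        rw [hmuvn i (by omega)]
        exact hvan i hi
      have hmu_cont : ∀ i, ct w' i = mu i := by
        intro i
        by_cases hia : i = a - 1
        · subst hia
          rw [hmuv0]
          have h6 := hcteq (a-1)
          rw [if_pos rfl] at h6
          have h7 := hcont (a-1)
          omega
        · rw [hmuvn i hia]
          have h6 := hcteq i
          rw [if_neg hia] at h6
          have h7 := hcont i
          omega
      apply ih p mu (fun x hx => hpos x (by simp [hx])) hmu_dec hmu_van hmu_cont
      rw [hb3]
      congr 1
      have hmu0 : mu 0 = lam 0 := hmuvn 0 (by omega)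
      apply List.ext_getElem
      · rw [List.length_set, htsF_length, htsF_length, hmu0]
      · intro n h₁ h₂
        rw [List.getElem_set]
        simp only [htsF, List.getElem_map, List.getElem_range]
        have hn : n < lam 0 := by rw [List.length_set, htsF_length] at h₁; exact h₁
        by_cases hnc : c₂ = n
        · rw [if_pos hnc]
          symm
          apply conj_eq_of hmu_dec (show a - 1 ≤ p by omega)
          · intro i hi
            rw [hmuvn i (by omega)]
            have := hdec i (a-1) (by omega)
            omega
          · rw [hmuv0]
            omega
        · rw [if_neg hnc]
          rw [conjF, conjF]
          congr 1
          apply List.filter_congr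
          intro i _
          simp only [decide_eq_decide]
          by_cases hia : i = a - 1
          · subst hia
            rw [hmuv0]
            omega
          · rw [hmuvn i hia]


/-- for a word `w` of content `λ` (a partition of length `p`), the
column-insertion tableau `P(w)` is the canonical tableau `C(λ)` iff `w` is a
reverse lattice word. -/
theorem Pcol_eq_cano_iff_revLattice (p : ℕ) (lam : ℕ → ℕ) (w : List ℕ)
    (hdec : ∀ i j, i ≤ j → lam j ≤ lam i)
    (hlen : (∀ i, i < p → 0 < lam i) ∧ ∀ i, p ≤ i → lam i = 0)
    (hposw : ∀ x ∈ w, 0 < x)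
    (hcont : ∀ i, w.count (i + 1) = lam i) :
    Pcol w = canoCols lam p ↔ RevLattice w := by
  have hct : ∀ i, ct w i = lam i := hcont
  constructor
  · intro hP
    exact bwd w p lam hposw hdec hlen.2 hct (hP.trans (canoCols_eq hdec p))
  · intro hRL
    have h1 := fwd w p hposw (fun i hi => (hct i).trans (hlen.2 i hi)) hRL
    have hfun : ct w = lam := funext hct
    rw [hfun] at h1
    rw [h1, ← canoCols_eq hdec p]

end KronRSK
end

section
/- Let λ and μ be partitions of the same size n, of lengths p and q respectively, with m = min{p,q}. Let B = (b_{i,j}) be a matrix of nonnegative integers with row sums λ and column sums μ, and let (P,Q) be the pair of semistandard tableaux associated to B under the RSK correspondence. Then P = C(μ) if and only if: (i) b_{i,j} = 0 whenever i + j > p + 1, and (ii) for all j ∈ [m−1] and all i with 2 ≤ i ≤ p+1−j, the inequality Σ_{k=i}^{p+1−j} b_{k,j} ≥ Σ_{k=i−1}^{p−j} b_{k,j+1} holds. -/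
namespace KronRSK

def wordRead (T : List (List ℕ)) : List ℕ := T.reverse.flatten

/-- reverse lattice condition, suffix form -/
def RL (w : List ℕ) : Prop := ∀ s : List ℕ, s <:+ w → ∀ i, s.count (i+2) ≤ s.count (i+1)

lemma RL.mono {w s : List ℕ} (h : RL w) (hs : s <:+ w) : RL s :=
  fun s' hs' => h s' (hs'.trans hs)

lemma suffix_append_cases {s u L : List ℕ} (h : s <:+ u ++ L) :
    s <:+ L ∨ ∃ u', u' <:+ u ∧ s = u' ++ L := by
  induction u with
  | nil => exact Or.inl (by simpa using h)
  | cons a u ih =>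
    rw [List.cons_append, List.suffix_cons_iff] at h
    rcases h with h | h
    · exact Or.inr ⟨a :: u, List.suffix_refl _, h⟩
    · rcases ih h with h' | ⟨u', hu, rfl⟩
      · exact Or.inl h'
      · exact Or.inr ⟨u', hu.trans (List.suffix_cons a u), rfl⟩

lemma ssuf (u : List ℕ) {a b : List ℕ} (h : a <:+ b) : a <:+ u ++ b :=
  h.trans (List.suffix_append u b)

lemma append_suffix_append {u' u : List ℕ} (L : List ℕ) (h : u' <:+ u) :
    (u' ++ L) <:+ (u ++ L) := by
  obtain ⟨t, rfl⟩ := h; exact ⟨t, by simp⟩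

inductive Knuth : List ℕ → List ℕ → Prop
  | k1 (u v : List ℕ) {x y z : ℕ} (h1 : x < y) (h2 : y ≤ z) :
      Knuth (u ++ y :: z :: x :: v) (u ++ y :: x :: z :: v)
  | k2 (u v : List ℕ) {x y z : ℕ} (h1 : x ≤ y) (h2 : y < z) :
      Knuth (u ++ x :: z :: y :: v) (u ++ z :: x :: y :: v)
  | krefl (w : List ℕ) : Knuth w w
  | ksymm {w w' : List ℕ} : Knuth w w' → Knuth w' w
  | ktrans {w1 w2 w3 : List ℕ} : Knuth w1 w2 → Knuth w2 w3 → Knuth w1 w3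

lemma Knuth.append_left {a b : List ℕ} (l : List ℕ) (h : Knuth a b) :
    Knuth (l ++ a) (l ++ b) := by
  induction h with
  | k1 u v h1 h2 => rw [← List.append_assoc, ← List.append_assoc]; exact Knuth.k1 _ _ h1 h2
  | k2 u v h1 h2 => rw [← List.append_assoc, ← List.append_assoc]; exact Knuth.k2 _ _ h1 h2
  | krefl w => exact Knuth.krefl _
  | ksymm _ ih => exact ih.ksymm
  | ktrans _ _ ih1 ih2 => exact ih1.ktrans ih2

lemma Knuth.append_right {a b : List ℕ} (r : List ℕ) (h : Knuth a b) :
    Knuth (a ++ r) (b ++ r) := by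
  induction h with
  | k1 u v h1 h2 =>
      simpa [List.append_assoc] using Knuth.k1 u (v ++ r) h1 h2
  | k2 u v h1 h2 =>
      simpa [List.append_assoc] using Knuth.k2 u (v ++ r) h1 h2
  | krefl w => exact Knuth.krefl _
  | ksymm _ ih => exact ih.ksymm
  | ktrans _ _ ih1 ih2 => exact ih1.ktrans ih2

lemma Knuth.count {a b : List ℕ} (h : Knuth a b) (n : ℕ) : a.count n = b.count n := by
  induction h with
  | k1 u v h1 h2 => simp only [List.count_append, List.count_cons]; ring
  | k2 u v h1 h2 => simp only [List.count_append, List.count_cons]; ring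
  | krefl w => rfl
  | ksymm _ ih => exact ih.symm
  | ktrans _ _ ih1 ih2 => exact ih1.trans ih2

section RLmoves

lemma rl_win3 {s : List ℕ} {a b c : ℕ} {v : List ℕ} (h : s <:+ a :: b :: c :: v) :
    s = a :: b :: c :: v ∨ s = b :: c :: v ∨ s = c :: v ∨ s <:+ v := by
  rw [List.suffix_cons_iff] at h
  rcases h with h | h
  · exact Or.inl h
  rw [List.suffix_cons_iff] at h
  rcases h with h | h
  · exact Or.inr (Or.inl h)
  rw [List.suffix_cons_iff] at h
  rcases h with h | h
  · exact Or.inr (Or.inr (Or.inl h))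
  · exact Or.inr (Or.inr (Or.inr h))

lemma RL_k1_mp {x y z : ℕ} (u v : List ℕ) (h1 : x < y) (h2 : y ≤ z)
    (h : RL (u ++ y :: z :: x :: v)) : RL (u ++ y :: x :: z :: v) := by
  intro s hs i
  rcases suffix_append_cases hs with hsL | ⟨u', hu, rfl⟩
  · have t1 : (z :: x :: v) <:+ (y :: z :: x :: v) := List.suffix_cons y _
    have t2 : (x :: v) <:+ (y :: z :: x :: v) := (List.suffix_cons z _).trans t1
    have t3 : v <:+ (y :: z :: x :: v) := (List.suffix_cons x v).trans t2
    have hA := h (y :: z :: x :: v) (List.suffix_append u _) i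
    have hB := h (z :: x :: v) (ssuf u t1) i
    have hC := h (x :: v) (ssuf u t2) i
    have hD := h v (ssuf u t3) i
    rcases rl_win3 hsL with rfl | rfl | rfl | hv
    · simp only [List.count_cons, List.count_append, beq_iff_eq] at hA ⊢
      split_ifs at hA ⊢ <;> omega
    · simp only [List.count_cons, List.count_append, beq_iff_eq] at hB ⊢
      split_ifs at hB ⊢ <;> omega
    · simp only [List.count_cons, List.count_append, beq_iff_eq] at hA hB hC hD ⊢
      split_ifs at hA hB hC hD ⊢ <;> omega
    · exact h s (ssuf u (hv.trans t3)) i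
  · have hA := h (u' ++ y :: z :: x :: v) (append_suffix_append _ hu) i
    simp only [List.count_cons, List.count_append, beq_iff_eq] at hA ⊢
    split_ifs at hA ⊢ <;> omega


lemma RL_k1_mpr {x y z : ℕ} (u v : List ℕ) (h1 : x < y) (h2 : y ≤ z)
    (h : RL (u ++ y :: x :: z :: v)) : RL (u ++ y :: z :: x :: v) := by
  intro s hs i
  rcases suffix_append_cases hs with hsL | ⟨u', hu, rfl⟩
  · have t1 : (x :: z :: v) <:+ (y :: x :: z :: v) := List.suffix_cons _ _
    have t2 : (z :: v) <:+ (y :: x :: z :: v) := (List.suffix_cons _ _).trans t1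
    have t3 : v <:+ (y :: x :: z :: v) := (List.suffix_cons _ v).trans t2
    have hA := h _ (List.suffix_append u (y :: x :: z :: v)) i
    have hB := h _ (ssuf u t1) i
    have hC := h _ (ssuf u t2) i
    have hD := h _ (ssuf u t3) i
    rcases rl_win3 hsL with rfl | rfl | rfl | hv
    · simp only [List.count_cons, List.count_append, beq_iff_eq] at hA hB hC hD ⊢
      split_ifs at hA hB hC hD ⊢ <;> omega
    · simp only [List.count_cons, List.count_append, beq_iff_eq] at hA hB hC hD ⊢
      split_ifs at hA hB hC hD ⊢ <;> omega
    · simp only [List.count_cons, List.count_append, beq_iff_eq] at hA hB hC hD ⊢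
      split_ifs at hA hB hC hD ⊢ <;> omega
    · exact h s (ssuf u (hv.trans t3)) i
  · have hA := h (u' ++ y :: x :: z :: v) (append_suffix_append _ hu) i
    simp only [List.count_cons, List.count_append, beq_iff_eq] at hA ⊢
    split_ifs at hA ⊢ <;> omega

lemma RL_k2_mp {x y z : ℕ} (u v : List ℕ) (h1 : x ≤ y) (h2 : y < z)
    (h : RL (u ++ x :: z :: y :: v)) : RL (u ++ z :: x :: y :: v) := by
  intro s hs i
  rcases suffix_append_cases hs with hsL | ⟨u', hu, rfl⟩
  · have t1 : (z :: y :: v) <:+ (x :: z :: y :: v) := List.suffix_cons _ _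
    have t2 : (y :: v) <:+ (x :: z :: y :: v) := (List.suffix_cons _ _).trans t1
    have t3 : v <:+ (x :: z :: y :: v) := (List.suffix_cons _ v).trans t2
    have hA := h _ (List.suffix_append u (x :: z :: y :: v)) i
    have hB := h _ (ssuf u t1) i
    have hC := h _ (ssuf u t2) i
    have hD := h _ (ssuf u t3) i
    rcases rl_win3 hsL with rfl | rfl | rfl | hv
    · simp only [List.count_cons, List.count_append, beq_iff_eq] at hA hB hC hD ⊢
      split_ifs at hA hB hC hD ⊢ <;> omega
    · simp only [List.count_cons, List.count_append, beq_iff_eq] at hA hB hC hD ⊢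
      split_ifs at hA hB hC hD ⊢ <;> omega
    · simp only [List.count_cons, List.count_append, beq_iff_eq] at hA hB hC hD ⊢
      split_ifs at hA hB hC hD ⊢ <;> omega
    · exact h s (ssuf u (hv.trans t3)) i
  · have hA := h (u' ++ x :: z :: y :: v) (append_suffix_append _ hu) i
    simp only [List.count_cons, List.count_append, beq_iff_eq] at hA ⊢
    split_ifs at hA ⊢ <;> omega

lemma RL_k2_mpr {x y z : ℕ} (u v : List ℕ) (h1 : x ≤ y) (h2 : y < z)
    (h : RL (u ++ z :: x :: y :: v)) : RL (u ++ x :: z :: y :: v) := by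
  intro s hs i
  rcases suffix_append_cases hs with hsL | ⟨u', hu, rfl⟩
  · have t1 : (x :: y :: v) <:+ (z :: x :: y :: v) := List.suffix_cons _ _
    have t2 : (y :: v) <:+ (z :: x :: y :: v) := (List.suffix_cons _ _).trans t1
    have t3 : v <:+ (z :: x :: y :: v) := (List.suffix_cons _ v).trans t2
    have hA := h _ (List.suffix_append u (z :: x :: y :: v)) i
    have hB := h _ (ssuf u t1) i
    have hC := h _ (ssuf u t2) i
    have hD := h _ (ssuf u t3) i
    rcases rl_win3 hsL with rfl | rfl | rfl | hv
    · simp only [List.count_cons, List.count_append, beq_iff_eq] at hA hB hC hD ⊢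
      split_ifs at hA hB hC hD ⊢ <;> omega
    · simp only [List.count_cons, List.count_append, beq_iff_eq] at hA hB hC hD ⊢
      split_ifs at hA hB hC hD ⊢ <;> omega
    · simp only [List.count_cons, List.count_append, beq_iff_eq] at hA hB hC hD ⊢
      split_ifs at hA hB hC hD ⊢ <;> omega
    · exact h s (ssuf u (hv.trans t3)) i
  · have hA := h (u' ++ z :: x :: y :: v) (append_suffix_append _ hu) i
    simp only [List.count_cons, List.count_append, beq_iff_eq] at hA ⊢
    split_ifs at hA ⊢ <;> omega

lemma Knuth.rl {a b : List ℕ} (h : Knuth a b) : RL a ↔ RL b := by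
  induction h with
  | k1 u v h1 h2 => exact ⟨RL_k1_mp u v h1 h2, RL_k1_mpr u v h1 h2⟩
  | k2 u v h1 h2 => exact ⟨RL_k2_mp u v h1 h2, RL_k2_mpr u v h1 h2⟩
  | krefl w => exact Iff.rfl
  | ksymm _ ih => exact ih.symm
  | ktrans _ _ ih1 ih2 => exact ih1.trans ih2

end RLmoves


-- basic bump lemmas
lemma bumpRow_none (x : ℕ) : ∀ r : List ℕ, (bumpRow x r).2 = none → (bumpRow x r).1 = r ++ [x] := by
  intro r
  induction r with
  | nil => simp [bumpRow]
  | cons a t ih =>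
    simp only [bumpRow]
    split
    · simp
    · intro h; simp_all

lemma bumpRow_some_lt (x : ℕ) : ∀ r : List ℕ, ∀ y, (bumpRow x r).2 = some y → x < y := by
  intro r
  induction r with
  | nil => simp [bumpRow]
  | cons a t ih =>
    intro y h
    simp only [bumpRow] at h
    split at h
    · rename_i hx; simp at h; omega
    · exact ih _ h

lemma bumpRow_some_mem (x : ℕ) : ∀ r : List ℕ, ∀ y, (bumpRow x r).2 = some y → y ∈ r := by
  intro r
  induction r with
  | nil => simp [bumpRow]
  | cons a t ih =>
    intro y h
    simp only [bumpRow] at h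
    split at h
    · simp at h; simp [h]
    · right; exact ih _ h

lemma bumpRow_mem (x : ℕ) : ∀ r : List ℕ, ∀ a ∈ (bumpRow x r).1, a = x ∨ a ∈ r := by
  intro r
  induction r with
  | nil => simp [bumpRow]
  | cons b t ih =>
    intro a ha
    simp only [bumpRow] at ha
    split at ha
    · rcases List.mem_cons.mp ha with h | h
      · left; exact h
      · right; right; exact h
    · rcases List.mem_cons.mp ha with h | h
      · right; exact h ▸ (List.mem_cons_self (a := b) (l := t))
      · rcases ih a h with h' | h'
        · left; exact h'
        · right; right; exact h'

lemma bumpRow_fst_ne_nil (x : ℕ) : ∀ r : List ℕ, (bumpRow x r).1 ≠ [] := by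
  intro r
  cases r with
  | nil => simp [bumpRow]
  | cons a t => simp only [bumpRow]; split <;> simp

lemma bumpRow_head (x a : ℕ) (t : List ℕ) :
    (bumpRow x (a :: t)).1 = (if x < a then x else a) :: (if x < a then t else (bumpRow x t).1) := by
  simp only [bumpRow]; split <;> simp

lemma bumpRow_sorted (x : ℕ) : ∀ r : List ℕ, r.Pairwise (· ≤ ·) → (bumpRow x r).1.Pairwise (· ≤ ·) := by
  intro r
  induction r with
  | nil => simp [bumpRow]
  | cons a t ih =>
    intro hs
    rw [List.pairwise_cons] at hs
    simp only [bumpRow]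
    split
    · rename_i hx
      rw [List.pairwise_cons]
      refine ⟨fun b hb => le_of_lt (lt_of_lt_of_le hx (hs.1 b hb)), hs.2⟩
    · rename_i hx
      rw [List.pairwise_cons]
      refine ⟨fun b hb => ?_, ih hs.2⟩
      rcases bumpRow_mem x t b hb with h | h
      · omega
      · exact hs.1 b h


-- NEW MATERIAL

lemma wordRead_nil : wordRead [] = [] := rfl

lemma wordRead_cons (r : List ℕ) (rest : List (List ℕ)) :
    wordRead (r :: rest) = wordRead rest ++ r := by
  simp [wordRead]

lemma knuth_move_left (a x : ℕ) : ∀ (t : List ℕ), x < a → t.Pairwise (· ≤ ·) →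
    (∀ b ∈ t, a ≤ b) → Knuth (a :: (t ++ [x])) (a :: x :: t) := by
  intro t
  induction t generalizing a with
  | nil => intro _ _ _; exact Knuth.krefl _
  | cons b t ih =>
    intro hx hs ha
    rw [List.pairwise_cons] at hs
    have hab : a ≤ b := ha b ((List.mem_cons_self (a := b) (l := t)))
    have h1 : Knuth (b :: (t ++ [x])) (b :: x :: t) :=
      ih b (lt_of_lt_of_le hx hab) hs.2 hs.1
    have h2 := h1.append_left [a]
    have h3 : Knuth (a :: b :: x :: t) (a :: x :: b :: t) := by
      have := Knuth.k1 ([] : List ℕ) t hx hab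
      simpa using this
    exact Knuth.ktrans (by simpa using h2) h3

lemma knuth_bump (x : ℕ) : ∀ r : List ℕ, r.Pairwise (· ≤ ·) → ∀ y,
    (bumpRow x r).2 = some y → Knuth (r ++ [x]) (y :: (bumpRow x r).1) := by
  intro r
  induction r with
  | nil => simp [bumpRow]
  | cons a t ih =>
    intro hs y hy
    rw [List.pairwise_cons] at hs
    by_cases hx : x < a
    · have he : bumpRow x (a :: t) = (x :: t, some a) := by simp [bumpRow, hx]
      rw [he] at hy ⊢
      simp only [Option.some.injEq] at hy
      subst hy
      exact knuth_move_left a x t hx hs.2 hs.1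
    · have he : bumpRow x (a :: t) = (a :: (bumpRow x t).1, (bumpRow x t).2) := by
        simp [bumpRow, hx]
      rw [he] at hy ⊢
      simp only at hy
      have hih := ih hs.2 y hy
      have h2 := hih.append_left [a]
      -- t must be nonempty
      cases t with
      | nil => simp [bumpRow] at hy
      | cons ht tt =>
        have hhead := bumpRow_head x ht tt
        set c := if x < ht then x else ht with hc
        set t1 := if x < ht then tt else (bumpRow x tt).1 with ht1
        rw [hhead] at h2 ⊢
        have hcx : c ≤ x := by
          rw [hc]; split
          · exact le_refl x
          · have : a ≤ x := not_lt.mp hx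
            have := hs.1 ht ((List.mem_cons_self (a := ht) (l := tt)))
            omega
        have hac : a ≤ c := by
          rw [hc]; split
          · exact not_lt.mp hx
          · exact hs.1 ht ((List.mem_cons_self (a := ht) (l := tt)))
        have hcy : c < y := lt_of_le_of_lt hcx (bumpRow_some_lt x _ y hy)
        have h3 : Knuth (a :: y :: c :: t1) (y :: a :: c :: t1) := by
          have := Knuth.k2 ([] : List ℕ) t1 hac hcy
          simpa using this
        exact Knuth.ktrans (by simpa using h2) h3


lemma rowInsert_cons (x : ℕ) (row : List ℕ) (rest : List (List ℕ)) :
    rowInsert x (row :: rest) =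
      match (bumpRow x row).2 with
      | none => (bumpRow x row).1 :: rest
      | some y => (bumpRow x row).1 :: rowInsert y rest := by
  simp only [rowInsert]
  rcases bumpRow x row with ⟨r', o⟩
  cases o <;> rfl

lemma rowInsert_eq_none (x : ℕ) (row : List ℕ) (rest : List (List ℕ))
    (h : (bumpRow x row).2 = none) :
    rowInsert x (row :: rest) = (bumpRow x row).1 :: rest := by
  rw [rowInsert_cons, h]

lemma rowInsert_eq_some (x : ℕ) (row : List ℕ) (rest : List (List ℕ)) (y : ℕ)
    (h : (bumpRow x row).2 = some y) :
    rowInsert x (row :: rest) = (bumpRow x row).1 :: rowInsert y rest := by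
  rw [rowInsert_cons, h]

def RowsSorted (T : List (List ℕ)) : Prop := ∀ r ∈ T, r.Pairwise (· ≤ ·)

lemma rowInsert_sorted (x : ℕ) : ∀ T, RowsSorted T → RowsSorted (rowInsert x T) := by
  intro T
  induction T generalizing x with
  | nil =>
    intro _ r hr
    simp only [rowInsert, List.mem_singleton] at hr
    subst hr; simp
  | cons row rest ih =>
    intro hT r hr
    have hrow : row.Pairwise (· ≤ ·) := hT row (List.mem_cons_self)
    have hrest : RowsSorted rest := fun s hs => hT s (List.mem_cons_of_mem _ hs)
    rcases ho : (bumpRow x row).2 with _ | y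
    · rw [rowInsert_eq_none x row rest ho] at hr
      rcases List.mem_cons.mp hr with rfl | h
      · exact bumpRow_sorted x row hrow
      · exact hrest r h
    · rw [rowInsert_eq_some x row rest y ho] at hr
      rcases List.mem_cons.mp hr with rfl | h
      · exact bumpRow_sorted x row hrow
      · exact ih y hrest r h

lemma prow_sorted_aux (w : List ℕ) : ∀ T, RowsSorted T →
    RowsSorted (w.foldl (fun T x => rowInsert x T) T) := by
  induction w with
  | nil => intro T h; exact h
  | cons x w ih => intro T h; exact ih _ (rowInsert_sorted x T h)

lemma prow_sorted (w : List ℕ) : RowsSorted (Prow w) :=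
  prow_sorted_aux w [] (by intro r hr; simp at hr)

lemma rowInsert_wordRead (x : ℕ) : ∀ T, RowsSorted T →
    Knuth (wordRead (rowInsert x T)) (wordRead T ++ [x]) := by
  intro T
  induction T generalizing x with
  | nil => intro _; simpa [rowInsert, wordRead] using Knuth.krefl [x]
  | cons row rest ih =>
    intro hT
    have hrow : row.Pairwise (· ≤ ·) := hT row (List.mem_cons_self)
    have hrest : RowsSorted rest := fun s hs => hT s (List.mem_cons_of_mem _ hs)
    rcases ho : (bumpRow x row).2 with _ | y
    · rw [rowInsert_eq_none x row rest ho, bumpRow_none x row ho]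
      simp only [wordRead_cons]
      rw [← List.append_assoc]
      exact Knuth.krefl _
    · rw [rowInsert_eq_some x row rest y ho]
      simp only [wordRead_cons]
      have h1 : Knuth (wordRead (rowInsert y rest) ++ (bumpRow x row).1)
          ((wordRead rest ++ [y]) ++ (bumpRow x row).1) :=
        (ih y hrest).append_right _
      have h2 : Knuth (y :: (bumpRow x row).1) (row ++ [x]) :=
        (knuth_bump x row hrow y ho).ksymm
      have h3 := h2.append_left (wordRead rest)
      refine Knuth.ktrans h1 ?_
      refine Knuth.ktrans (by simpa using h3) ?_
      rw [← List.append_assoc]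
      exact Knuth.krefl _

lemma prow_append_singleton (w : List ℕ) (x : ℕ) :
    Prow (w ++ [x]) = rowInsert x (Prow w) := by
  simp [Prow, List.foldl_append]

lemma prow_wordRead (w : List ℕ) : Knuth (wordRead (Prow w)) w := by
  induction w using List.reverseRecOn with
  | nil => exact Knuth.krefl _
  | append_singleton u x ih =>
    rw [prow_append_singleton]
    refine Knuth.ktrans (rowInsert_wordRead x (Prow u) (prow_sorted u)) ?_
    exact ih.append_right [x]


-- NEW MATERIAL

def RowsGE : ℕ → List (List ℕ) → Prop
  | _, [] => True
  | k, r :: rest => (∀ a ∈ r, k ≤ a) ∧ RowsGE (k+1) rest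

def RowsNE (T : List (List ℕ)) : Prop := ∀ r ∈ T, r ≠ []

lemma rowInsert_rowsGE (x : ℕ) : ∀ (T : List (List ℕ)) (k : ℕ), k ≤ x → RowsGE k T →
    RowsGE k (rowInsert x T) := by
  intro T
  induction T generalizing x with
  | nil =>
    intro k hk _
    refine ⟨fun a ha => ?_, trivial⟩
    simp only [List.mem_singleton] at ha; omega
  | cons row rest ih =>
    intro k hk hT
    rcases ho : (bumpRow x row).2 with _ | y
    · rw [rowInsert_eq_none x row rest ho]
      refine ⟨fun a ha => ?_, hT.2⟩
      rcases bumpRow_mem x row a ha with rfl | h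
      · exact hk
      · exact hT.1 a h
    · rw [rowInsert_eq_some x row rest y ho]
      refine ⟨fun a ha => ?_, ?_⟩
      · rcases bumpRow_mem x row a ha with rfl | h
        · exact hk
        · exact hT.1 a h
      · refine ih y (k+1) ?_ hT.2
        have h1 := bumpRow_some_lt x row y ho
        omega

lemma rowInsert_rowsNE (x : ℕ) : ∀ T, RowsNE T → RowsNE (rowInsert x T) := by
  intro T
  induction T generalizing x with
  | nil =>
    intro _ r hr
    simp only [rowInsert, List.mem_singleton] at hr
    subst hr; simp
  | cons row rest ih =>
    intro hT r hr
    rcases ho : (bumpRow x row).2 with _ | y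
    · rw [rowInsert_eq_none x row rest ho] at hr
      rcases List.mem_cons.mp hr with rfl | h
      · exact bumpRow_fst_ne_nil x row
      · exact hT r (List.mem_cons_of_mem _ h)
    · rw [rowInsert_eq_some x row rest y ho] at hr
      rcases List.mem_cons.mp hr with rfl | h
      · exact bumpRow_fst_ne_nil x row
      · exact ih y (fun s hs => hT s (List.mem_cons_of_mem _ hs)) r h

lemma prow_rowsGE (w : List ℕ) (hw : ∀ a ∈ w, 1 ≤ a) : RowsGE 1 (Prow w) := by
  have aux : ∀ (v : List ℕ) (T : List (List ℕ)), (∀ a ∈ v, 1 ≤ a) → RowsGE 1 T →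
      RowsGE 1 (v.foldl (fun T x => rowInsert x T) T) := by
    intro v
    induction v with
    | nil => intro T _ h; exact h
    | cons x v ihv =>
      intro T hv hT
      exact ihv _ (fun a ha => hv a (List.mem_cons_of_mem _ ha))
        (rowInsert_rowsGE x T 1 (hv x (List.mem_cons_self)) hT)
  exact aux w [] hw trivial

lemma prow_rowsNE (w : List ℕ) : RowsNE (Prow w) := by
  have aux : ∀ (v : List ℕ) (T : List (List ℕ)), RowsNE T →
      RowsNE (v.foldl (fun T x => rowInsert x T) T) := by
    intro v
    induction v with
    | nil => intro T h; exact h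
    | cons x v ihv => intro T hT; exact ihv _ (rowInsert_rowsNE x T hT)
  exact aux w [] (by intro r hr; simp at hr)

lemma sorted_le_getLast {l : List ℕ} (hs : l.Pairwise (· ≤ ·)) (hne : l ≠ []) :
    ∀ a ∈ l, a ≤ l.getLast hne := by
  induction l with
  | nil => simp at hne
  | cons b t ih =>
    rw [List.pairwise_cons] at hs
    intro a ha
    rcases List.mem_cons.mp ha with rfl | h
    · cases t with
      | nil => simp [List.getLast]
      | cons c tt =>
        rw [List.getLast_cons (by simp)]
        exact le_trans (hs.1 c (List.mem_cons_self))
          (ih hs.2 (by simp) c (List.mem_cons_self))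
    · cases t with
      | nil => simp at h
      | cons c tt =>
        rw [List.getLast_cons (by simp)]
        exact ih hs.2 (by simp) a h

lemma rows_const : ∀ (T : List (List ℕ)) (k : ℕ),
    RowsSorted T → RowsNE T → RowsGE (k+1) T →
    (∀ s, s <:+ wordRead T → ∀ ℓ, k+2 ≤ ℓ → s.count ℓ ≤ s.count (ℓ-1)) →
    ∀ i r, T[i]? = some r → r = List.replicate r.length (k+i+1) := by
  intro T
  induction T with
  | nil => intro k _ _ _ _ i r h; simp at h
  | cons row rest ih =>
    intro k hsort hne hge hRL
    have hrow : row.Pairwise (· ≤ ·) := hsort row (List.mem_cons_self)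
    have hrowne : row ≠ [] := hne row (List.mem_cons_self)
    -- Step A : row is constant k+1
    have hconst : ∀ a ∈ row, a = k + 1 := by
      set L := row.getLast hrowne with hL
      have hLmem : L ∈ row := List.getLast_mem hrowne
      have hLle : L ≤ k + 1 := by
        by_contra hcon
        push_neg at hcon
        have hs0suf : row.dropWhile (fun a => a < L) <:+ row := List.dropWhile_suffix _
        obtain ⟨h0, t0, hhead⟩ : ∃ h0 t0, row.dropWhile (fun a => a < L) = h0 :: t0 := by
          rcases he : row.dropWhile (fun a => a < L) with _ | ⟨h0, t0⟩
          · exfalso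
            have := List.dropWhile_eq_nil_iff.mp he L hLmem
            simp at this
          · exact ⟨h0, t0, rfl⟩
        rw [hhead] at hs0suf
        have hsorted : (h0 :: t0).Pairwise (· ≤ ·) := hrow.sublist hs0suf.sublist
        have hh0 : ¬ (h0 < L) := by
          have := List.head?_dropWhile_not (fun a => decide (a < L)) row
          rw [hhead] at this
          simp at this
          omega
        have hs0all : ∀ a ∈ h0 :: t0, a = L := by
          intro a ha
          have h1 : a ≤ L := sorted_le_getLast hrow hrowne a (hs0suf.sublist.mem ha)
          rw [List.pairwise_cons] at hsorted
          rcases List.mem_cons.mp ha with rfl | hmem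
          · omega
          · have := hsorted.1 a hmem
            omega
        have hsuf : (h0 :: t0) <:+ wordRead (row :: rest) := by
          rw [wordRead_cons]
          exact hs0suf.trans (List.suffix_append _ _)
        have hineq := hRL (h0 :: t0) hsuf L (by omega)
        have hzero : (h0 :: t0).count (L - 1) = 0 := by
          rw [List.count_eq_zero]
          intro hmem
          have := hs0all _ hmem
          omega
        have hpos : 0 < (h0 :: t0).count L := by
          rw [List.count_pos_iff]
          have he := hs0all h0 (List.mem_cons_self)
          rw [← he]
          exact List.mem_cons_self
        omega
      intro a ha
      have h1 : k + 1 ≤ a := hge.1 a ha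
      have h2 : a ≤ L := sorted_le_getLast hrow hrowne a ha
      omega
    have hrowrep : row = List.replicate row.length (k+1) :=
      List.eq_replicate_of_mem hconst
    -- Step B : apply ih to rest
    have hrest : ∀ i r, rest[i]? = some r → r = List.replicate r.length (k+1+i+1) := by
      refine ih (k+1) (fun s hs => hsort s (List.mem_cons_of_mem _ hs))
        (fun s hs => hne s (List.mem_cons_of_mem _ hs)) hge.2 ?_
      intro s hs ℓ hℓ
      have hsuf : s ++ row <:+ wordRead (row :: rest) := by
        rw [wordRead_cons]
        exact append_suffix_append row hs
      have := hRL (s ++ row) hsuf ℓ (by omega)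
      have hc1 : row.count ℓ = 0 := by
        rw [List.count_eq_zero]
        intro hmem
        have := hconst _ hmem
        omega
      have hc2 : row.count (ℓ-1) = 0 := by
        rw [List.count_eq_zero]
        intro hmem
        have := hconst _ hmem
        omega
      rw [List.count_append, List.count_append, hc1, hc2] at this
      omega
    intro i r h
    cases i with
    | zero =>
      simp only [List.getElem?_cons_zero, Option.some.injEq] at h
      subst h
      simpa using hrowrep
    | succ i =>
      simp only [List.getElem?_cons_succ] at h
      have h2 := hrest i r h
      have e : k + 1 + i + 1 = k + (i + 1) + 1 := by omega
      rw [e] at h2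
      exact h2

lemma count_wordRead_le : ∀ (T : List (List ℕ)) (k : ℕ),
    (∀ i r, T[i]? = some r → r = List.replicate r.length (k+i+1)) →
    ∀ ℓ, ℓ ≤ k → (wordRead T).count ℓ = 0 := by
  intro T
  induction T with
  | nil => intro k _ ℓ _; simp [wordRead]
  | cons row rest ih =>
    intro k hconst ℓ hℓ
    rw [wordRead_cons, List.count_append]
    have hshift : ∀ i r, rest[i]? = some r → r = List.replicate r.length ((k+1)+i+1) := by
      intro i r h
      have h2 := hconst (i+1) r (by simpa using h)
      have e : k + (i+1) + 1 = (k+1)+i+1 := by omega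
      rw [e] at h2
      exact h2
    rw [ih (k+1) hshift ℓ (by omega)]
    have hrow := hconst 0 row (by simp)
    have hc : row.count ℓ = 0 := by
      rw [List.count_eq_zero]
      intro hmem
      rw [hrow, List.mem_replicate] at hmem
      omega
    rw [hc]

lemma count_wordRead_at : ∀ (T : List (List ℕ)) (k : ℕ),
    (∀ i r, T[i]? = some r → r = List.replicate r.length (k+i+1)) →
    ∀ i, (wordRead T).count (k+i+1) = ((T[i]?).map List.length).getD 0 := by
  intro T
  induction T with
  | nil => intro k _ i; simp [wordRead]
  | cons row rest ih =>
    intro k hconst i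
    rw [wordRead_cons, List.count_append]
    have hshift : ∀ i r, rest[i]? = some r → r = List.replicate r.length ((k+1)+i+1) := by
      intro i r h
      have h2 := hconst (i+1) r (by simpa using h)
      have e : k + (i+1) + 1 = (k+1)+i+1 := by omega
      rw [e] at h2
      exact h2
    have hrow := hconst 0 row (by simp)
    cases i with
    | zero =>
      rw [count_wordRead_le rest (k+1) hshift (k+0+1) (by omega)]
      conv_lhs => rw [hrow]
      rw [List.count_replicate]
      simp
    | succ i =>
      have h2 := ih (k+1) hshift i
      have e : (k+1)+i+1 = k+(i+1)+1 := by omega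
      rw [e] at h2
      rw [h2]
      have hc : row.count (k+(i+1)+1) = 0 := by
        rw [List.count_eq_zero]
        intro hmem
        rw [hrow, List.mem_replicate] at hmem
        omega
      rw [hc]
      simp

lemma prow_eq_cano (w : List ℕ) (mu : ℕ → ℕ) (q : ℕ)
    (hw1 : ∀ a ∈ w, 1 ≤ a) (hRLw : RL w)
    (hcount : ∀ j, w.count (j+1) = mu j)
    (hq1 : ∀ j, j < q → 0 < mu j) (hq2 : ∀ j, q ≤ j → mu j = 0) :
    Prow w = canoRows mu q := by
  have K := prow_wordRead w
  have hRLT : RL (wordRead (Prow w)) := (K.rl).mpr hRLw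
  have hconst : ∀ i r, (Prow w)[i]? = some r → r = List.replicate r.length (0+i+1) := by
    refine rows_const (Prow w) 0 (prow_sorted w) (prow_rowsNE w) (prow_rowsGE w hw1) ?_
    intro s hs ℓ hℓ
    have h2 := hRLT s hs (ℓ-2)
    have e1 : ℓ-2+2 = ℓ := by omega
    have e2 : ℓ-2+1 = ℓ-1 := by omega
    rw [e1, e2] at h2
    exact h2
  have hat : ∀ i, (wordRead (Prow w)).count (0+i+1) = (((Prow w)[i]?).map List.length).getD 0 :=
    count_wordRead_at (Prow w) 0 hconst
  have hcnt : ∀ i, (((Prow w)[i]?).map List.length).getD 0 = mu i := by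
    intro i
    rw [← hat i]
    have e : 0+i+1 = i+1 := by omega
    rw [e, K.count (i+1)]
    exact hcount i
  have hlenq : (Prow w).length = q := by
    rcases Nat.lt_trichotomy (Prow w).length q with h | h | h
    · exfalso
      have h0 := hcnt (Prow w).length
      rw [List.getElem?_eq_none (le_refl _)] at h0
      simp at h0
      have := hq1 _ h
      omega
    · exact h
    · exfalso
      have h0 := hcnt q
      rw [List.getElem?_eq_getElem h] at h0
      simp at h0
      have hne := prow_rowsNE w ((Prow w)[q]) (List.getElem_mem _)
      have := hq2 q (le_refl q)
      rw [this] at h0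
      rw [List.length_eq_zero_iff] at h0
      exact hne h0
  refine List.ext_getElem (by simp [canoRows, hlenq]) ?_
  intro i h1 h2
  have h1q : i < q := by omega
  have hrow := hconst i ((Prow w)[i]) (List.getElem?_eq_getElem h1)
  have hlen := hcnt i
  rw [List.getElem?_eq_getElem h1] at hlen
  simp at hlen
  have : (canoRows mu q)[i] = List.replicate (mu i) (i+1) := by
    simp [canoRows]
  rw [this, hrow, hlen]
  have e : 0+i+1 = i+1 := by omega
  rw [e]


lemma RL_nil : RL [] := by
  intro s hs i
  rw [List.suffix_nil] at hs
  subst hs; simp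

lemma suffix_replicate {s : List ℕ} {m ℓ : ℕ} (h : s <:+ List.replicate m ℓ) :
    s = List.replicate s.length ℓ ∧ s.length ≤ m := by
  constructor
  · refine List.eq_replicate_of_mem (fun a ha => ?_)
    have := h.sublist.mem ha
    exact List.eq_of_mem_replicate this
  · simpa using h.length_le

lemma RL_rep_append (m ℓ : ℕ) (hl : 1 ≤ ℓ) (w : List ℕ) :
    RL (List.replicate m ℓ ++ w) ↔ RL w ∧ (2 ≤ ℓ → m + w.count ℓ ≤ w.count (ℓ-1)) := by
  constructor
  · intro h
    refine ⟨h.mono (List.suffix_append _ _), fun h2 => ?_⟩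
    have h3 := h (List.replicate m ℓ ++ w) (List.suffix_refl _) (ℓ-2)
    have e1 : ℓ-2+2 = ℓ := by omega
    have e2 : ℓ-2+1 = ℓ-1 := by omega
    rw [e1, e2, List.count_append, List.count_append, List.count_replicate,
      List.count_replicate] at h3
    simp only [beq_iff_eq, if_true] at h3
    rw [if_neg (show ¬ (ℓ = ℓ - 1) by omega)] at h3
    omega
  · rintro ⟨hw, hc⟩ s hs i
    rcases suffix_append_cases hs with hsw | ⟨u', hu, rfl⟩
    · exact hw s hsw i
    · obtain ⟨hrep, hlen⟩ := suffix_replicate hu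
      rw [hrep, List.count_append, List.count_append, List.count_replicate,
        List.count_replicate]
      simp only [beq_iff_eq]
      have hwi := hw w (List.suffix_refl _) i
      by_cases e2 : ℓ = i + 2
      · subst e2
        have hcc := hc (by omega)
        have e3 : i + 2 - 1 = i + 1 := by omega
        rw [e3] at hcc
        rw [if_pos rfl, if_neg (show ¬ (i + 2 = i + 1) by omega)]
        omega
      · by_cases e1 : ℓ = i + 1
        · subst e1
          rw [if_neg e2, if_pos rfl]
          omega
        · rw [if_neg e2, if_neg e1]
          omega

lemma wordRead_cano_succ (mu : ℕ → ℕ) (q : ℕ) :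
    wordRead (canoRows mu (q+1)) =
      List.replicate (mu q) (q+1) ++ wordRead (canoRows mu q) := by
  simp [canoRows, wordRead, List.range_succ]

lemma count_wordRead_cano (mu : ℕ → ℕ) : ∀ q ℓ,
    (wordRead (canoRows mu q)).count ℓ = if 1 ≤ ℓ ∧ ℓ ≤ q then mu (ℓ-1) else 0 := by
  intro q
  induction q with
  | zero =>
    intro ℓ
    have h : ¬ (1 ≤ ℓ ∧ ℓ ≤ 0) := by omega
    simp only [canoRows, wordRead, List.range_zero, List.map_nil, List.reverse_nil,
      List.flatten_nil, List.count_nil, if_neg h]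
  | succ q ih =>
    intro ℓ
    rw [wordRead_cano_succ, List.count_append, List.count_replicate, ih ℓ]
    simp only [beq_iff_eq]
    by_cases e : q + 1 = ℓ
    · subst e
      rw [if_pos rfl]
      rw [if_neg (show ¬ (1 ≤ q+1 ∧ q+1 ≤ q) by omega),
        if_pos (show 1 ≤ q+1 ∧ q+1 ≤ q+1 by omega)]
      have e2 : q + 1 - 1 = q := by omega
      rw [e2]
      omega
    · rw [if_neg e]
      by_cases h1 : 1 ≤ ℓ ∧ ℓ ≤ q
      · rw [if_pos h1, if_pos (show 1 ≤ ℓ ∧ ℓ ≤ q+1 by omega)]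
        omega
      · rw [if_neg h1, if_neg (show ¬ (1 ≤ ℓ ∧ ℓ ≤ q+1) by omega)]

lemma RL_cano (mu : ℕ → ℕ) (hdec : ∀ i j, i ≤ j → mu j ≤ mu i) :
    ∀ q, RL (wordRead (canoRows mu q)) := by
  intro q
  induction q with
  | zero => simpa [canoRows, wordRead] using RL_nil
  | succ q ih =>
    rw [wordRead_cano_succ]
    rw [RL_rep_append _ _ (by omega)]
    refine ⟨ih, fun h2 => ?_⟩
    rw [count_wordRead_cano, count_wordRead_cano]
    rw [if_neg (show ¬ (1 ≤ q+1 ∧ q+1 ≤ q) by omega)]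
    by_cases hq : 1 ≤ q
    · rw [if_pos (show 1 ≤ q+1-1 ∧ q+1-1 ≤ q by omega)]
      have := hdec (q+1-1-1) q (by omega)
      omega
    · exact absurd h2 (by omega)

lemma count_block_low (c : ℕ → ℕ) (q t ℓ : ℕ) (h : ℓ ≤ t) :
    ((List.range q).flatMap (fun j => List.replicate (c j) (j+t+1))).count ℓ = 0 := by
  rw [List.count_eq_zero]
  intro hmem
  rw [List.mem_flatMap] at hmem
  obtain ⟨j, _, hj⟩ := hmem
  have := List.eq_of_mem_replicate hj
  omega

lemma RL_block : ∀ (q : ℕ) (c : ℕ → ℕ) (t : ℕ) (w : List ℕ),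
    RL ((List.range q).flatMap (fun j => List.replicate (c j) (j+t+1)) ++ w) ↔
    (RL w ∧ ∀ j, j < q → 1 ≤ j + t → c j + w.count (j+t+1) ≤ w.count (j+t)) := by
  intro q
  induction q with
  | zero =>
    intro c t w
    simp only [List.range_zero, List.flatMap_nil, List.nil_append]
    exact ⟨fun h => ⟨h, fun j hj => absurd hj (by omega)⟩, fun h => h.1⟩
  | succ q ih =>
    intro c t w
    have hsplit : (List.range (q+1)).flatMap (fun j => List.replicate (c j) (j+t+1)) =
        List.replicate (c 0) (t+1) ++
        (List.range q).flatMap (fun j => List.replicate (c (j+1)) (j+(t+1)+1)) := by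
      rw [List.range_succ_eq_map, List.flatMap_cons, List.flatMap_map]
      congr 1
      · simp
      · congr 1
        funext j
        congr 1
        omega
    rw [hsplit, List.append_assoc]
    rw [RL_rep_append (c 0) (t+1) (by omega)]
    rw [ih (fun j => c (j+1)) (t+1) w]
    rw [List.count_append, List.count_append,
      count_block_low _ q (t+1) (t+1) (le_refl _), count_block_low _ q (t+1) ((t+1)-1) (by omega)]
    constructor
    · rintro ⟨⟨hw, hrest⟩, h0⟩
      refine ⟨hw, ?_⟩
      intro j hj hjt
      cases j with
      | zero =>
        have h2 := h0 (by omega)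
        have e1 : (t+1) - 1 = t := by omega
        rw [e1] at h2
        simpa using h2
      | succ j =>
        have h2 := hrest j (by omega) (by omega)
        have e1 : j+(t+1)+1 = (j+1)+t+1 := by omega
        have e2 : j+(t+1) = (j+1)+t := by omega
        rw [e1, e2] at h2
        exact h2
    · rintro ⟨hw, hall⟩
      refine ⟨⟨hw, ?_⟩, ?_⟩
      · intro j hj _
        have h2 := hall (j+1) (by omega) (by omega)
        have e1 : j+(t+1)+1 = (j+1)+t+1 := by omega
        have e2 : j+(t+1) = (j+1)+t := by omega
        rw [e1, e2]
        exact h2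
      · intro h2
        have h3 := hall 0 (by omega) (by omega)
        have e1 : (t+1) - 1 = t := by omega
        rw [e1]
        simpa using h3

lemma count_inner (b : ℕ → ℕ) : ∀ (q ℓ : ℕ),
    ((List.range q).flatMap (fun j => List.replicate (b j) (j+1))).count ℓ =
    if 1 ≤ ℓ ∧ ℓ ≤ q then b (ℓ-1) else 0 := by
  intro q
  induction q with
  | zero =>
    intro ℓ
    simp only [List.range_zero, List.flatMap_nil, List.count_nil]
    rw [if_neg (by omega)]
  | succ q ih =>
    intro ℓ
    rw [List.range_succ, List.flatMap_append, List.count_append, ih ℓ]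
    simp only [List.flatMap_cons, List.flatMap_nil, List.append_nil, List.count_replicate,
      beq_iff_eq]
    by_cases e : q + 1 = ℓ
    · subst e
      rw [if_pos rfl, if_neg (by omega), if_pos (by omega)]
      have e2 : q + 1 - 1 = q := by omega
      rw [e2]
      omega
    · rw [if_neg e]
      by_cases h1 : 1 ≤ ℓ ∧ ℓ ≤ q
      · rw [if_pos h1, if_pos (by omega)]
        omega
      · rw [if_neg h1, if_neg (by omega)]

lemma count_wordOf (B : ℕ → ℕ → ℕ) (q : ℕ) : ∀ (p ℓ : ℕ), (wordOf B p q).count ℓ =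
    if 1 ≤ ℓ ∧ ℓ ≤ q then ∑ i ∈ Finset.range p, B i (ℓ-1) else 0 := by
  intro p
  induction p with
  | zero =>
    intro ℓ
    simp only [wordOf, List.range_zero, List.flatMap_nil, List.count_nil]
    rw [Finset.range_zero]
    simp
  | succ p ih =>
    intro ℓ
    have : wordOf B (p+1) q = wordOf B p q ++
        (List.range q).flatMap (fun j => List.replicate (B p j) (j + 1)) := by
      simp [wordOf, List.range_succ]
    rw [this, List.count_append, ih ℓ, count_inner (B p) q ℓ]
    by_cases h1 : 1 ≤ ℓ ∧ ℓ ≤ q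
    · rw [if_pos h1, if_pos h1, if_pos h1, Finset.sum_range_succ]
    · rw [if_neg h1, if_neg h1, if_neg h1]

lemma wordOf_peel (B : ℕ → ℕ → ℕ) (p q : ℕ) :
    wordOf B (p+1) q =
      (List.range q).flatMap (fun j => List.replicate (B 0 j) (j+0+1)) ++
      wordOf (fun i j => B (i+1) j) p q := by
  simp only [wordOf, List.range_succ_eq_map, List.flatMap_cons, List.flatMap_map]

lemma RL_wordOf (q : ℕ) : ∀ (p : ℕ) (B : ℕ → ℕ → ℕ),
    RL (wordOf B p q) ↔
    ∀ j i, 1 ≤ j → j < q → i < p →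
      B i j + (∑ k ∈ Finset.Ico (i+1) p, B k j) ≤ ∑ k ∈ Finset.Ico (i+1) p, B k (j-1) := by
  intro p
  induction p with
  | zero =>
    intro B
    constructor
    · intro _ j i _ _ hi; exact absurd hi (by omega)
    · intro _; simpa [wordOf] using RL_nil
  | succ p ih =>
    intro B
    rw [wordOf_peel, RL_block q (B 0) 0 _, ih (fun i j => B (i+1) j)]
    have hsum : ∀ (jj : ℕ), 1 ≤ jj → jj ≤ q →
        (wordOf (fun i j => B (i+1) j) p q).count jj = ∑ k ∈ Finset.Ico 1 (p+1), B k (jj-1) := by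
      intro jj h1 h2
      rw [count_wordOf, if_pos ⟨h1, h2⟩]
      rw [Finset.sum_Ico_eq_sum_range]
      refine Finset.sum_congr (by congr 1) (fun x _ => ?_)
      congr 1
      omega
    have hsum2 : ∀ (i jj : ℕ), (∑ k ∈ Finset.Ico (i+1) p, B (k+1) jj) =
        ∑ k ∈ Finset.Ico (i+2) (p+1), B k jj := by
      intro i jj
      rw [Finset.sum_Ico_eq_sum_range, Finset.sum_Ico_eq_sum_range]
      have e : p - (i+1) = p + 1 - (i+2) := by omega
      rw [e]
      refine Finset.sum_congr rfl (fun x _ => ?_)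
      congr 1
      omega
    constructor
    · rintro ⟨hrest, h0⟩
      intro j i h1 h2 hi
      cases i with
      | zero =>
        have h3 := h0 j h2 (by omega)
        rw [hsum (j+0+1) (by omega) (by omega)] at h3
        rw [hsum (j+0) (by omega) (by omega)] at h3
        have e1 : j + 0 + 1 - 1 = j := by omega
        have e2 : j + 0 - 1 = j - 1 := by omega
        rw [e1, e2] at h3
        have e3 : (0:ℕ) + 1 = 1 := by omega
        rw [e3]
        exact h3
      | succ i =>
        have h3 := hrest j i h1 h2 (by omega)
        rw [hsum2 i j, hsum2 i (j-1)] at h3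
        exact h3
    · intro hall
      refine ⟨?_, ?_⟩
      · intro j i h1 h2 hi
        have h3 := hall j (i+1) h1 h2 (by omega)
        rw [hsum2 i j, hsum2 i (j-1)]
        exact h3
      · intro j hj hjt
        have h3 := hall j 0 (by omega) hj (by omega)
        rw [hsum (j+0+1) (by omega) (by omega), hsum (j+0) (by omega) (by omega)]
        have e1 : j + 0 + 1 - 1 = j := by omega
        have e2 : j + 0 - 1 = j - 1 := by omega
        rw [e1, e2]
        have e3 : (0:ℕ) + 1 = 1 := by omega
        rw [e3] at h3
        exact h3



lemma sum_Icc_shift (g : ℕ → ℕ) (a b : ℕ) (ha : 1 ≤ a) :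
    ∑ k ∈ Finset.Icc a b, g (k-1) = ∑ k ∈ Finset.Ico (a-1) b, g k := by
  rw [← Finset.Ico_add_one_right_eq_Icc]
  rw [Finset.sum_Ico_eq_sum_range, Finset.sum_Ico_eq_sum_range]
  have e : b + 1 - a = b - (a-1) := by omega
  rw [e]
  refine Finset.sum_congr rfl (fun x _ => ?_)
  congr 1
  omega

lemma sum_Ico_trunc (f : ℕ → ℕ) (a b c : ℕ) (hab : a ≤ b) (hbc : b ≤ c)
    (h0 : ∀ k, b ≤ k → f k = 0) :
    ∑ k ∈ Finset.Ico a c, f k = ∑ k ∈ Finset.Ico a b, f k := by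
  rw [← Finset.sum_Ico_consecutive _ hab hbc]
  have h1 : ∑ k ∈ Finset.Ico b c, f k = 0 :=
    Finset.sum_eq_zero (fun k hk => h0 k (Finset.mem_Ico.mp hk).1)
  omega

section Main
variable (p q : ℕ) (B : ℕ → ℕ → ℕ)

/-- the `(∗)` condition coming out of `RL_wordOf` -/
def StarRaw : Prop := ∀ j i, 1 ≤ j → j < q → i < p →
  B i j + (∑ k ∈ Finset.Ico (i+1) p, B k j) ≤ ∑ k ∈ Finset.Ico (i+1) p, B k (j-1)

def Star : Prop := ∀ j, 1 ≤ j → j < q → ∀ i,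
  (∑ k ∈ Finset.Ico i p, B k j) ≤ ∑ k ∈ Finset.Ico (i+1) p, B k (j-1)

lemma starRaw_iff_star : StarRaw p q B ↔ Star p q B := by
  constructor
  · intro h j h1 h2 i
    by_cases hi : i < p
    · rw [Finset.sum_eq_sum_Ico_succ_bot hi]
      exact h j i h1 h2 hi
    · rw [Finset.Ico_eq_empty (by omega)]
      simp
  · intro h j i h1 h2 hi
    have h3 := h j h1 h2 i
    rw [Finset.sum_eq_sum_Ico_succ_bot hi] at h3
    exact h3

variable {p q B}

lemma star_chain (hS : Star p q B) : ∀ j, 1 ≤ j → j < q → ∀ i,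
    (∑ k ∈ Finset.Ico i p, B k j) ≤ ∑ k ∈ Finset.Ico (i+j) p, B k 0 := by
  intro j
  induction j with
  | zero => intro h; exact absurd h (by omega)
  | succ j ihj =>
    intro h1 hq i
    rcases Nat.eq_zero_or_pos j with rfl | hj
    · simpa using hS 1 (by omega) hq i
    · have h2 := hS (j+1) (by omega) hq i
      have e : j + 1 - 1 = j := by omega
      rw [e] at h2
      have h3 := ihj (by omega) (by omega) (i+1)
      have e2 : i + 1 + j = i + (j+1) := by omega
      rw [e2] at h3
      omega

lemma star_zero (hsupp : ∀ i j, p ≤ i ∨ q ≤ j → B i j = 0) (hS : Star p q B) :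
    ∀ k jj, 1 ≤ jj → p ≤ k + jj → B k jj = 0 := by
  intro k jj h1 hge
  by_cases hk : k < p
  · by_cases hjq : jj < q
    · have h2 := star_chain hS jj h1 hjq k
      have h3 : B k jj ≤ ∑ k' ∈ Finset.Ico k p, B k' jj :=
        Finset.single_le_sum (f := fun k' => B k' jj) (fun _ _ => Nat.zero_le _)
          (Finset.mem_Ico.mpr ⟨le_refl k, hk⟩)
      have h4 : Finset.Ico (k+jj) p = ∅ := Finset.Ico_eq_empty (by omega)
      rw [h4, Finset.sum_empty] at h2
      omega
    · exact hsupp k jj (Or.inr (by omega))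
  · exact hsupp k jj (Or.inl (by omega))

lemma cond2_translate (hz : ∀ k jj, 1 ≤ jj → p ≤ k + jj → B k jj = 0)
    (j i : ℕ) (h1 : 1 ≤ j) (hp : j + 1 ≤ p) (hq : j + 1 ≤ q)
    (h3 : 2 ≤ i) (h4 : i ≤ p + 1 - j) :
    ((∑ k ∈ Finset.Icc (i - 1) (p - j), b1 B k (j + 1) ≤
      ∑ k ∈ Finset.Icc i (p + 1 - j), b1 B k j)
    ↔ (∑ k ∈ Finset.Ico (i-2) p, B k j ≤ ∑ k ∈ Finset.Ico (i-1) p, B k (j-1))) := by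
  have eL0 : (∑ k ∈ Finset.Icc (i-1) (p-j), b1 B k (j+1)) =
      ∑ k ∈ Finset.Icc (i-1) (p-j), (fun k => B k j) (k-1) := rfl
  have eL1 : (∑ k ∈ Finset.Icc (i-1) (p-j), b1 B k (j+1)) =
      ∑ k ∈ Finset.Ico (i-1-1) (p-j), B k j := by
    rw [eL0, sum_Icc_shift (fun k => B k j) (i-1) (p-j) (by omega)]
  have eL2 : (∑ k ∈ Finset.Ico (i-2) p, B k j) = ∑ k ∈ Finset.Ico (i-2) (p-j), B k j := by
    refine sum_Ico_trunc _ (i-2) (p-j) p (by omega) (by omega) (fun k hk => ?_)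
    exact hz k j h1 (by omega)
  have eR0 : (∑ k ∈ Finset.Icc i (p+1-j), b1 B k j) =
      ∑ k ∈ Finset.Icc i (p+1-j), (fun k => B k (j-1)) (k-1) := rfl
  have eR1 : (∑ k ∈ Finset.Icc i (p+1-j), b1 B k j) =
      ∑ k ∈ Finset.Ico (i-1) (p+1-j), B k (j-1) := by
    rw [eR0, sum_Icc_shift (fun k => B k (j-1)) i (p+1-j) (by omega)]
  have eR2 : (∑ k ∈ Finset.Ico (i-1) p, B k (j-1)) =
      ∑ k ∈ Finset.Ico (i-1) (p+1-j), B k (j-1) := by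
    rcases Nat.eq_or_lt_of_le h1 with e | hj2
    · have e2 : p + 1 - j = p := by omega
      rw [e2]
    · refine sum_Ico_trunc _ (i-1) (p+1-j) p (by omega) (by omega) (fun k hk => ?_)
      exact hz k (j-1) (by omega) (by omega)
  have e3 : i - 1 - 1 = i - 2 := by omega
  rw [eL1, eR1, e3, eL2, eR2]

lemma star_iff_conds (hsupp : ∀ i j, p ≤ i ∨ q ≤ j → B i j = 0) :
    StarRaw p q B ↔
      ((∀ i j, 1 ≤ i → i ≤ p → 1 ≤ j → j ≤ q → p + 1 < i + j → b1 B i j = 0) ∧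
       (∀ j i, 1 ≤ j → j + 1 ≤ min p q → 2 ≤ i → i ≤ p + 1 - j →
         ∑ k ∈ Finset.Icc (i - 1) (p - j), b1 B k (j + 1) ≤
         ∑ k ∈ Finset.Icc i (p + 1 - j), b1 B k j)) := by
  rw [starRaw_iff_star]
  constructor
  · intro hS
    have hz := star_zero hsupp hS
    constructor
    · intro i j hi1 hip hj1 hjq hpij
      rcases Nat.eq_or_lt_of_le hj1 with e | hj2
      · exact absurd hpij (by omega)
      · show B (i-1) (j-1) = 0
        exact hz (i-1) (j-1) (by omega) (by omega)
    · intro j i h1 h2 h3 h4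
      have hp : j + 1 ≤ p := le_trans h2 (min_le_left _ _)
      have hq2 : j + 1 ≤ q := le_trans h2 (min_le_right _ _)
      rw [cond2_translate hz j i h1 hp hq2 h3 h4]
      have h5 := hS j h1 (by omega) (i-2)
      have e : i - 2 + 1 = i - 1 := by omega
      rw [e] at h5
      exact h5
  · rintro ⟨hC1, hC2⟩
    have hz : ∀ k jj, 1 ≤ jj → p ≤ k + jj → B k jj = 0 := by
      intro k jj h1 hge
      by_cases hk : k < p
      · by_cases hjq : jj < q
        · exact hC1 (k+1) (jj+1) (by omega) (by omega) (by omega) (by omega) (by omega)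
        · exact hsupp _ _ (Or.inr (by omega))
      · exact hsupp _ _ (Or.inl (by omega))
    intro j h1 hjq i
    by_cases hjp : p ≤ j
    · have hL : ∑ k ∈ Finset.Ico i p, B k j = 0 :=
        Finset.sum_eq_zero (fun k hk => hz k j h1 (by omega))
      rw [hL]
      exact Nat.zero_le _
    · by_cases hij : p ≤ i + j
      · have hL : ∑ k ∈ Finset.Ico i p, B k j = 0 := by
          refine Finset.sum_eq_zero (fun k hk => ?_)
          have := (Finset.mem_Ico.mp hk).1
          exact hz k j h1 (by omega)
        rw [hL]
        exact Nat.zero_le _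
      · have h5 := hC2 j (i+2) h1 (le_min (show j+1 ≤ p by omega) (show j+1 ≤ q by omega)) (by omega) (by omega)
        rw [cond2_translate hz j (i+2) h1 (show j+1 ≤ p by omega) (show j+1 ≤ q by omega) (by omega) (by omega)] at h5
        have e1 : i + 2 - 2 = i := by omega
        have e2 : i + 2 - 1 = i + 1 := by omega
        rw [e1, e2] at h5
        exact h5

end Main

/-- Main Lemma, part 1: for a nonnegative integer matrix `B` with
row sums `λ` (length `p`) and column sums `μ` (length `q`), the RSK insertion
tableau `P` of `B` equals `C(μ)` iff the stated vanishing and column conditions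
hold (all indices 1-indexed, `m = min p q`). -/
theorem P_eq_cano_iff (n p q : ℕ) (lam mu : ℕ → ℕ) (B : ℕ → ℕ → ℕ)
    (hlamdec : ∀ i j, i ≤ j → lam j ≤ lam i)
    (hlamlen : (∀ i, i < p → 0 < lam i) ∧ ∀ i, p ≤ i → lam i = 0)
    (hmudec : ∀ i j, i ≤ j → mu j ≤ mu i)
    (hmulen : (∀ j, j < q → 0 < mu j) ∧ ∀ j, q ≤ j → mu j = 0)
    (hlamsize : ∑ i ∈ Finset.range p, lam i = n)
    (hmusize : ∑ j ∈ Finset.range q, mu j = n)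
    (hsupp : ∀ i j, p ≤ i ∨ q ≤ j → B i j = 0)
    (hrow : ∀ i, ∑ j ∈ Finset.range q, B i j = lam i)
    (hcol : ∀ j, ∑ i ∈ Finset.range p, B i j = mu j) :
    PTab B p q = canoRows mu q ↔
      ((∀ i j, 1 ≤ i → i ≤ p → 1 ≤ j → j ≤ q → p + 1 < i + j → b1 B i j = 0) ∧
       (∀ j i, 1 ≤ j → j + 1 ≤ min p q → 2 ≤ i → i ≤ p + 1 - j →
         ∑ k ∈ Finset.Icc (i - 1) (p - j), b1 B k (j + 1) ≤
         ∑ k ∈ Finset.Icc i (p + 1 - j), b1 B k j)) := by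
  have hiff1 : PTab B p q = canoRows mu q ↔ RL (wordOf B p q) := by
    constructor
    · intro h
      have K := prow_wordRead (wordOf B p q)
      rw [show Prow (wordOf B p q) = PTab B p q from rfl, h] at K
      exact (K.rl).mp (RL_cano mu hmudec q)
    · intro hRL
      show Prow (wordOf B p q) = canoRows mu q
      refine prow_eq_cano _ mu q ?_ hRL ?_ hmulen.1 hmulen.2
      · intro a ha
        simp only [wordOf, List.mem_flatMap] at ha
        obtain ⟨i, _, j, _, hj⟩ := ha
        have := List.eq_of_mem_replicate hj
        omega
      · intro j
        rw [count_wordOf]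
        by_cases h1 : j < q
        · rw [if_pos (by omega)]
          have e : j + 1 - 1 = j := by omega
          rw [e]
          exact hcol j
        · rw [if_neg (by omega)]
          exact (hmulen.2 j (by omega)).symm
  rw [hiff1, RL_wordOf q p B]
  exact star_iff_conds hsupp

end KronRSK
end

section
/- If χ^ν is a maximal component (in the dominance order) of χ^λ ⊗ χ^μ — i.e., g(λ,μ,ν) > 0 and g(λ,μ,γ) = 0 for every partition γ strictly dominating ν — then g(λ,μ,ν) = lr(λ,μ;ν) = ⟨χ^λ ⊗ χ^μ, φ^ν⟩. -/
open Finset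

namespace Kron

open scoped Classical

abbrev Sym (n : ℕ) := Equiv.Perm (Fin n)

/-- The permutation character `φ^α` of `S_n` for a composition `α` with `r` parts:
`φ^α(g)` is the number of `g`-invariant functions `f : [n] → [r]` whose fiber over `k`
has `α k` elements (i.e. ordered set partitions of type `α` fixed by `g`). -/
noncomputable def permChar (n r : ℕ) (α : Fin r → ℕ) (g : Sym n) : ℤ :=
  ((Finset.univ : Finset (Fin n → Fin r)).filter
    (fun f => (∀ x, f (g x) = f x) ∧
      ∀ k : Fin r, (Finset.univ.filter (fun x => f x = k)).card = α k)).card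

/-- `φ^α` for an integer vector `α`, equal to `0` if some coordinate is negative. -/
noncomputable def permCharZ (n : ℕ) (α : Fin n → ℤ) (g : Sym n) : ℤ :=
  if ∀ k, 0 ≤ α k then permChar n n (fun k => (α k).toNat) g else 0

/-- The irreducible character `χ^λ` of `S_n`, via the Jacobi-Trudi determinant
`χ^λ = ∑_{σ} sgn(σ) φ^{(λ_i - i + σ(i))_i}`. -/
noncomputable def irrChar (n : ℕ) (lam : ℕ → ℕ) (g : Sym n) : ℤ :=
  ∑ σ : Sym n, (Equiv.Perm.sign σ : ℤ) *
    permCharZ n (fun i => (lam (i : ℕ) : ℤ) - (i : ℤ) + ((σ i : ℕ) : ℤ)) g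

/-- Inner product of (integer-valued) class functions on `S_n`. -/
noncomputable def innerChar (n : ℕ) (f h : Sym n → ℤ) : ℚ :=
  (∑ g : Sym n, (f g : ℚ) * (h g : ℚ)) / (Nat.factorial n : ℚ)

/-- The Kronecker coefficient `g(λ,μ,ν) = ⟨χ^λ ⊗ χ^μ, χ^ν⟩`. -/
noncomputable def kron (n : ℕ) (lam mu nu : ℕ → ℕ) : ℚ :=
  innerChar n (fun g => irrChar n lam g * irrChar n mu g) (irrChar n nu)

/-- `lr(λ,μ;τ) = ⟨χ^λ ⊗ χ^μ, φ^τ⟩` for a composition `τ` with `r` parts. -/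
noncomputable def lrCoeff (n r : ℕ) (lam mu : ℕ → ℕ) (τ : Fin r → ℕ) : ℚ :=
  innerChar n (fun g => irrChar n lam g * irrChar n mu g) (permChar n r τ)

/-- `lr(λ,μ;γ)` for `γ` given as a function `ℕ → ℕ` (padded with zeros to `n` parts;
adding zero parts does not change the permutation character). -/
noncomputable def lrN (n : ℕ) (lam mu γ : ℕ → ℕ) : ℚ :=
  lrCoeff n n lam mu (fun k => γ (k : ℕ))

/-- `λ` is a partition of `n`: weakly decreasing, supported on the first `n` parts,
with total size `n`. -/
def IsPartition (n : ℕ) (lam : ℕ → ℕ) : Prop :=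
  (∀ i j, i ≤ j → lam j ≤ lam i) ∧ (∀ i, n ≤ i → lam i = 0) ∧ ∑ i ∈ range n, lam i = n

/-- `λ` has length (number of positive parts) `p`. -/
def HasLength (lam : ℕ → ℕ) (p : ℕ) : Prop :=
  (∀ i, i < p → 0 < lam i) ∧ ∀ i, p ≤ i → lam i = 0

/-- Dominance order: `γ ⊵ ν`. -/
def Dominates (γ ν : ℕ → ℕ) : Prop :=
  ∀ k, ∑ i ∈ range k, ν i ≤ ∑ i ∈ range k, γ i

/-! ### Auxiliary development -/

/-- pad a `Fin n`-tuple by zeros to a function `ℕ → ℕ`. -/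
def pad (n : ℕ) (f : Fin n → ℕ) : ℕ → ℕ := fun i => if h : i < n then f ⟨i, h⟩ else 0

lemma sum_range_pad {n : ℕ} (f : Fin n → ℕ) {k : ℕ} (hk : k ≤ n) :
    ∑ i ∈ range k, pad n f i = ∑ j : Fin k, f (Fin.castLE hk j) := by
  rw [← Fin.sum_univ_eq_sum_range (fun i => pad n f i) k]
  refine Finset.sum_congr rfl fun j _ => ?_
  have h : (j : ℕ) < n := lt_of_lt_of_le j.2 hk
  simp [pad, h, Fin.castLE]

lemma strictMono_le_apply {k n : ℕ} {e : Fin k → Fin n} (he : StrictMono e) :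
    ∀ (m : ℕ) (h : m < k), m ≤ (e ⟨m, h⟩ : ℕ) := by
  intro m
  induction m with
  | zero => intro h; exact Nat.zero_le _
  | succ m ih =>
    intro h
    have h' : m < k := Nat.lt_of_succ_lt h
    have h1 := ih h'
    have h2 : e ⟨m, h'⟩ < e ⟨m + 1, h⟩ := he (by simp [Fin.lt_def])
    have h3 : (e ⟨m, h'⟩ : ℕ) < (e ⟨m + 1, h⟩ : ℕ) := h2
    omega

/-- a prefix of a sorted-decreasing tuple bounds the sum over an arbitrary subset
of the same cardinality. -/
lemma sum_subset_le_sorted {n : ℕ} (b : Fin n → ℕ) (hb : Antitone b) (s : Finset (Fin n)) :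
    ∑ x ∈ s, b x ≤ ∑ i ∈ range s.card, pad n b i := by
  have hk : s.card ≤ n := by
    simpa using Finset.card_le_univ s
  rw [sum_range_pad b hk]
  set e := s.orderEmbOfFin rfl with he
  have hmem : ∀ x ∈ s, ∃ j : Fin s.card, e j = x := by
    intro x hx
    have : x ∈ Set.range ⇑e := by rw [Finset.range_orderEmbOfFin]; exact hx
    exact this
  rw [show ∑ x ∈ s, b x = ∑ j : Fin s.card, b (e j) from ?_]
  · refine Finset.sum_le_sum fun j _ => ?_
    apply hb
    rw [Fin.le_def]
    exact strictMono_le_apply e.strictMono j j.2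
  · refine (Finset.sum_bij (fun j _ => e j) (fun j _ => Finset.orderEmbOfFin_mem s rfl j)
      (fun a _ b _ h => e.injective h) (fun x hx => ?_) (fun _ _ => rfl)).symm
    obtain ⟨j, hj⟩ := hmem x hx
    exact ⟨j, Finset.mem_univ j, hj⟩

/-- sum over a subset of `Fin n` of the values is at least `0+1+⋯+(card-1)`. -/
lemma sum_range_le_sum_subset {n : ℕ} (s : Finset (Fin n)) :
    ∑ i ∈ range s.card, i ≤ ∑ x ∈ s, (x : ℕ) := by
  set e := s.orderEmbOfFin rfl with he
  have hmem : ∀ x ∈ s, ∃ j : Fin s.card, e j = x := by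
    intro x hx
    have : x ∈ Set.range ⇑e := by rw [Finset.range_orderEmbOfFin]; exact hx
    exact this
  rw [show ∑ x ∈ s, (x : ℕ) = ∑ j : Fin s.card, ((e j : Fin n) : ℕ) from ?_]
  · rw [← Fin.sum_univ_eq_sum_range (fun i => i) s.card]
    exact Finset.sum_le_sum fun j _ => strictMono_le_apply e.strictMono j j.2
  · refine (Finset.sum_bij (fun j _ => e j) (fun j _ => Finset.orderEmbOfFin_mem s rfl j)
      (fun a _ b _ h => e.injective h) (fun x hx => ?_) (fun _ _ => rfl)).symm
    obtain ⟨j, hj⟩ := hmem x hx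
    exact ⟨j, Finset.mem_univ j, hj⟩

/-- `permChar` is invariant under permuting the parts of the composition. -/
lemma permChar_comp_perm (n r : ℕ) (α : Fin r → ℕ) (π : Equiv.Perm (Fin r)) (g : Sym n) :
    permChar n r (fun k => α (π k)) g = permChar n r α g := by
  unfold permChar
  congr 1
  refine Finset.card_nbij' (fun f => ⇑π ∘ f) (fun f => ⇑π.symm ∘ f) ?_ ?_ ?_ ?_
  · intro f hf
    simp only [Finset.mem_coe, Finset.mem_filter, Finset.mem_univ, true_and] at hf ⊢
    obtain ⟨h1, h2⟩ := hf
    refine ⟨fun x => by simp [Function.comp, h1 x], fun k => ?_⟩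
    have : ∀ x : Fin n, (π (f x) = k) = (f x = π.symm k) := by
      intro x; simp [Equiv.apply_eq_iff_eq_symm_apply]
    simp only [Function.comp]
    calc (Finset.univ.filter (fun x => π (f x) = k)).card
        = (Finset.univ.filter (fun x => f x = π.symm k)).card := by
          congr 1; apply Finset.filter_congr; intro x _; rw [this x]
      _ = α (π (π.symm k)) := h2 (π.symm k)
      _ = α k := by rw [Equiv.apply_symm_apply]
  · intro f hf
    simp only [Finset.mem_coe, Finset.mem_filter, Finset.mem_univ, true_and] at hf ⊢
    obtain ⟨h1, h2⟩ := hf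
    refine ⟨fun x => by simp [Function.comp, h1 x], fun k => ?_⟩
    have : ∀ x : Fin n, (π.symm (f x) = k) = (f x = π k) := by
      intro x; simp [Equiv.symm_apply_eq]
    simp only [Function.comp]
    calc (Finset.univ.filter (fun x => π.symm (f x) = k)).card
        = (Finset.univ.filter (fun x => f x = π k)).card := by
          congr 1; apply Finset.filter_congr; intro x _; rw [this x]
      _ = α (π k) := h2 (π k)
  · intro f _; funext x; simp
  · intro f _; funext x; simp


lemma prefix_le_of_partition {n : ℕ} {γ : ℕ → ℕ} (hγ : IsPartition n γ) (k : ℕ) :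
    ∑ i ∈ range k, γ i ≤ n := by
  obtain ⟨-, hz, hs⟩ := hγ
  rcases le_total k n with h | h
  · calc ∑ i ∈ range k, γ i ≤ ∑ i ∈ range n, γ i :=
      Finset.sum_le_sum_of_subset (Finset.range_subset_range.mpr h)
    _ = n := hs
  · rw [Finset.sum_subset (Finset.range_subset_range.mpr h)
      (fun i _ hi => hz i (by simpa using hi))] at hs
    · omega
  
lemma prefix_eq_of_partition {n : ℕ} {γ : ℕ → ℕ} (hγ : IsPartition n γ) {k : ℕ} (hk : n ≤ k) :
    ∑ i ∈ range k, γ i = n := by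
  obtain ⟨-, hz, hs⟩ := hγ
  rw [← Finset.sum_subset (Finset.range_subset_range.mpr hk)
    (fun i _ hi => hz i (by simpa using hi))]
  exact hs

lemma dominates_antisymm {γ ν : ℕ → ℕ} (h1 : Dominates γ ν) (h2 : Dominates ν γ) : γ = ν := by
  funext i
  have e1 : ∑ j ∈ range i, γ j = ∑ j ∈ range i, ν j := le_antisymm (h2 i) (h1 i)
  have e2 : ∑ j ∈ range (i+1), γ j = ∑ j ∈ range (i+1), ν j := le_antisymm (h2 (i+1)) (h1 (i+1))
  rw [Finset.sum_range_succ, Finset.sum_range_succ] at e2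
  omega

lemma dominates_trans {a b c : ℕ → ℕ} (h1 : Dominates a b) (h2 : Dominates b c) : Dominates a c :=
  fun k => le_trans (h2 k) (h1 k)

/-- The generating set: all `χ^γ` (as `ℚ`-valued functions) with `γ` a partition strictly
dominating `ν`. -/
def genSet (n : ℕ) (ν : ℕ → ℕ) : Set (Sym n → ℚ) :=
  {f | ∃ γ : ℕ → ℕ, IsPartition n γ ∧ Dominates γ ν ∧ γ ≠ ν ∧
    f = fun g => (irrChar n γ g : ℚ)}

lemma genSet_mono {n : ℕ} {γ ν : ℕ → ℕ} (hd : Dominates γ ν) (hne : γ ≠ ν) :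
    genSet n γ ⊆ genSet n ν := by
  rintro f ⟨δ, hp, hdom, hne', rfl⟩
  refine ⟨δ, hp, dominates_trans hdom hd, fun h => ?_, rfl⟩
  subst h
  exact hne (dominates_antisymm hd hdom)

/-- The measure used for well-founded recursion on dominance. -/
def Mfun (n : ℕ) (ν : ℕ → ℕ) : ℕ := ∑ k ∈ range (n+1), ∑ i ∈ range k, ν i

lemma Mfun_le {n : ℕ} {γ : ℕ → ℕ} (hγ : IsPartition n γ) : Mfun n γ ≤ n * (n+1) := by
  calc Mfun n γ ≤ ∑ _k ∈ range (n+1), n :=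
    Finset.sum_le_sum fun k _ => prefix_le_of_partition hγ k
  _ = n * (n+1) := by simp [mul_comm]

lemma Mfun_lt {n : ℕ} {γ ν : ℕ → ℕ} (hd : Dominates γ ν) {k₀ : ℕ} (hk₀ : k₀ < n + 1)
    (hstrict : ∑ i ∈ range k₀, ν i < ∑ i ∈ range k₀, γ i) : Mfun n ν < Mfun n γ :=
  Finset.sum_lt_sum (fun k _ => hd k) ⟨k₀, Finset.mem_range.mpr hk₀, hstrict⟩


lemma sum_id_le_sigma {n : ℕ} (σ : Sym n) {k : ℕ} (hk : k ≤ n) :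
    ∑ i ∈ range k, i ≤ ∑ j : Fin k, ((σ (Fin.castLE hk j) : Fin n) : ℕ) := by
  classical
  set S := Finset.univ.image (fun j : Fin k => σ (Fin.castLE hk j)) with hS
  have hinj : Function.Injective (fun j : Fin k => σ (Fin.castLE hk j)) :=
    σ.injective.comp (Fin.castLE_injective hk)
  have hcard : S.card = k := by
    rw [hS, Finset.card_image_of_injective _ hinj, Finset.card_univ, Fintype.card_fin]
  have h1 := sum_range_le_sum_subset S
  rw [hcard] at h1
  refine le_trans h1 (le_of_eq ?_)
  rw [hS, Finset.sum_image (fun x _ y _ h => hinj h)]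

/-- The exchange identity relating prefix sums of `ν` and of `a`,
where `(a i : ℤ) = ν i - i + σ i`. -/
lemma prefix_exchange {n : ℕ} (ν : ℕ → ℕ) (σ : Sym n) (a : Fin n → ℕ)
    (haZ : ∀ i : Fin n, (a i : ℤ) = (ν (i : ℕ) : ℤ) - ((i : ℕ) : ℤ) + (((σ i : Fin n) : ℕ) : ℤ))
    {k : ℕ} (hk : k ≤ n) :
    ∑ i ∈ range k, ν i + ∑ j : Fin k, ((σ (Fin.castLE hk j) : Fin n) : ℕ)
      = ∑ i ∈ range k, pad n a i + ∑ i ∈ range k, i := by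
  have key : (∑ i ∈ range k, (ν i : ℤ)) + ∑ j : Fin k, (((σ (Fin.castLE hk j) : Fin n) : ℕ) : ℤ)
      = (∑ j : Fin k, (a (Fin.castLE hk j) : ℤ)) + ∑ i ∈ range k, (i : ℤ) := by
    have e : ∀ j : Fin k, (a (Fin.castLE hk j) : ℤ)
        = (ν (j : ℕ) : ℤ) - ((j : ℕ) : ℤ) + (((σ (Fin.castLE hk j) : Fin n) : ℕ) : ℤ) := by
      intro j
      rw [haZ]
      simp [Fin.castLE]
    rw [Finset.sum_congr rfl (fun j _ => e j), Finset.sum_add_distrib, Finset.sum_sub_distrib,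
      Fin.sum_univ_eq_sum_range (fun i => (ν i : ℤ)) k,
      Fin.sum_univ_eq_sum_range (fun i => (i : ℤ)) k]
    ring
  have := sum_range_pad a hk
  zify [this]
  linarith [key]

lemma prefix_nu_le_a {n : ℕ} (ν : ℕ → ℕ) (σ : Sym n) (a : Fin n → ℕ)
    (haZ : ∀ i : Fin n, (a i : ℤ) = (ν (i : ℕ) : ℤ) - ((i : ℕ) : ℤ) + (((σ i : Fin n) : ℕ) : ℤ))
    {k : ℕ} (hk : k ≤ n) :
    ∑ i ∈ range k, ν i ≤ ∑ i ∈ range k, pad n a i := by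
  have h1 := prefix_exchange ν σ a haZ hk
  have h2 := sum_id_le_sigma σ hk
  omega

lemma prefix_nu_lt_a {n : ℕ} (ν : ℕ → ℕ) (σ : Sym n) (a : Fin n → ℕ)
    (haZ : ∀ i : Fin n, (a i : ℤ) = (ν (i : ℕ) : ℤ) - ((i : ℕ) : ℤ) + (((σ i : Fin n) : ℕ) : ℤ))
    (hσ : σ ≠ 1) :
    ∃ k, k ≤ n ∧ ∑ i ∈ range k, ν i < ∑ i ∈ range k, pad n a i := by
  classical
  have hex : ∃ m : ℕ, ∃ h : m < n, σ ⟨m, h⟩ ≠ ⟨m, h⟩ := by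
    by_contra hcon
    push_neg at hcon
    apply hσ
    ext x
    have h1 := hcon (x : ℕ) x.2
    have h2 : σ x = x := by simpa using h1
    simp [h2]
  set k₀ := Nat.find hex with hk₀def
  obtain ⟨hk₀n, hk₀ne⟩ := Nat.find_spec hex
  have hmin : ∀ m (hm : m < n), m < k₀ → σ ⟨m, hm⟩ = ⟨m, hm⟩ := by
    intro m hm hmlt
    have := Nat.find_min hex hmlt
    push_neg at this
    exact this hm
  have hgt : k₀ < ((σ ⟨k₀, hk₀n⟩ : Fin n) : ℕ) := by
    rcases lt_trichotomy ((σ ⟨k₀, hk₀n⟩ : Fin n) : ℕ) k₀ with h | h | h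
    · exfalso
      set m := ((σ ⟨k₀, hk₀n⟩ : Fin n) : ℕ) with hm
      have hmn : m < n := (σ ⟨k₀, hk₀n⟩).2
      have h1 : σ ⟨m, hmn⟩ = ⟨m, hmn⟩ := hmin m hmn h
      have h2 : σ ⟨k₀, hk₀n⟩ = ⟨m, hmn⟩ := by
        apply Fin.ext
        simp [hm]
      have := σ.injective (h2.trans h1.symm)
      have : k₀ = m := congrArg Fin.val this
      omega
    · exfalso
      exact hk₀ne (Fin.ext h)
    · exact h
  refine ⟨k₀ + 1, hk₀n, ?_⟩
  have hk : k₀ + 1 ≤ n := hk₀n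
  have h1 := prefix_exchange ν σ a haZ hk
  have h2 : ∑ i ∈ range (k₀ + 1), i < ∑ j : Fin (k₀ + 1), ((σ (Fin.castLE hk j) : Fin n) : ℕ) := by
    rw [Fin.sum_univ_castSucc, Finset.sum_range_succ]
    have e1 : ∀ j : Fin k₀, ((σ (Fin.castLE hk (Fin.castSucc j)) : Fin n) : ℕ) = (j : ℕ) := by
      intro j
      have hjn : (j : ℕ) < n := lt_of_lt_of_le (Nat.lt_succ_of_lt j.2) hk
      have : Fin.castLE hk (Fin.castSucc j) = ⟨(j : ℕ), hjn⟩ := by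
        apply Fin.ext; simp [Fin.castLE]
      rw [this, hmin (j : ℕ) hjn j.2]
    have e2 : Fin.castLE hk (Fin.last k₀) = ⟨k₀, hk₀n⟩ := by
      apply Fin.ext; simp [Fin.castLE]
    rw [Finset.sum_congr rfl (fun j _ => e1 j), e2,
      Fin.sum_univ_eq_sum_range (fun i => i) k₀]
    omega
  omega


lemma prefix_le_sorted {n : ℕ} (a b : Fin n → ℕ) (π : Equiv.Perm (Fin n))
    (hab : ∀ x, a x = b (π.symm x)) (hb : Antitone b) {k : ℕ} (hk : k ≤ n) :
    ∑ i ∈ range k, pad n a i ≤ ∑ i ∈ range k, pad n b i := by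
  classical
  rw [sum_range_pad a hk]
  set S := Finset.univ.image (Fin.castLE hk) with hS
  have hcard : S.card = k := by
    rw [hS, Finset.card_image_of_injective _ (Fin.castLE_injective hk), Finset.card_univ,
      Fintype.card_fin]
  have hsum : ∑ j : Fin k, a (Fin.castLE hk j) = ∑ x ∈ S, a x := by
    rw [hS, Finset.sum_image (fun x _ y _ h => Fin.castLE_injective hk h)]
  rw [hsum, Finset.sum_congr rfl (fun x _ => hab x)]
  have hsum2 : ∑ x ∈ S, b (π.symm x) = ∑ y ∈ S.image ⇑π.symm, b y := by
    rw [Finset.sum_image (fun x _ y _ h => π.symm.injective h)]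
  rw [hsum2]
  have hcard2 : (S.image ⇑π.symm).card = k := by
    rw [Finset.card_image_of_injective _ π.symm.injective, hcard]
  have := sum_subset_le_sorted b hb (S.image ⇑π.symm)
  rwa [hcard2] at this

lemma sum_pad_eq {n : ℕ} (b : Fin n → ℕ) :
    ∑ i ∈ range n, pad n b i = ∑ i : Fin n, b i := by
  rw [sum_range_pad b (le_refl n)]
  refine Finset.sum_congr rfl fun j _ => ?_
  congr 1


lemma key (n : ℕ) (d : ℕ) : ∀ ν : ℕ → ℕ, IsPartition n ν → n * (n+1) - Mfun n ν < d →
    (fun g => ((permChar n n (fun k : Fin n => ν (k : ℕ)) g : ℤ) : ℚ))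
      - (fun g => ((irrChar n ν g : ℤ) : ℚ)) ∈ Submodule.span ℚ (genSet n ν) := by
  induction d with
  | zero => intro ν _ h; omega
  | succ d ih =>
    intro ν hν hd
    have hone : ∀ g, permCharZ n
        (fun i => (ν (i : ℕ) : ℤ) - ((i : ℕ) : ℤ) + ((((1 : Sym n) i : Fin n) : ℕ) : ℤ)) g
        = permChar n n (fun k : Fin n => ν (k : ℕ)) g := by
      intro g
      rw [permCharZ, if_pos]
      · congr 1
        funext k
        simp [Equiv.Perm.one_apply]
      · intro k
        simp [Equiv.Perm.one_apply]
    have hrepr : (fun g => ((permChar n n (fun k : Fin n => ν (k : ℕ)) g : ℤ) : ℚ))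
        - (fun g => ((irrChar n ν g : ℤ) : ℚ))
        = ∑ σ ∈ (Finset.univ : Finset (Sym n)).erase 1,
            (-((Equiv.Perm.sign σ : ℤ) : ℚ)) •
              (fun g => ((permCharZ n
                (fun i => (ν (i : ℕ) : ℤ) - ((i : ℕ) : ℤ) + (((σ i : Fin n) : ℕ) : ℤ)) g : ℤ) : ℚ)) := by
      funext g
      have h2 : irrChar n ν g
          = permChar n n (fun k : Fin n => ν (k : ℕ)) g
            + ∑ σ ∈ (Finset.univ : Finset (Sym n)).erase 1,
                (Equiv.Perm.sign σ : ℤ) * permCharZ n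
                  (fun i => (ν (i : ℕ) : ℤ) - ((i : ℕ) : ℤ) + (((σ i : Fin n) : ℕ) : ℤ)) g := by
        rw [irrChar, ← Finset.add_sum_erase _ _ (Finset.mem_univ (1 : Sym n))]
        rw [hone g]
        simp
      simp only [Pi.sub_apply, Finset.sum_apply, Pi.smul_apply, smul_eq_mul]
      rw [h2]
      push_cast
      rw [show ∀ A S : ℚ, A - (A + S) = -S from fun A S => by ring,
        ← Finset.sum_neg_distrib]
      exact Finset.sum_congr rfl fun x _ => by ring
    rw [hrepr]
    refine Submodule.sum_mem _ fun σ hσ => Submodule.smul_mem _ _ ?_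
    have hσ1 : σ ≠ 1 := (Finset.mem_erase.mp hσ).1
    by_cases hnn : ∀ i : Fin n,
        0 ≤ (ν (i : ℕ) : ℤ) - ((i : ℕ) : ℤ) + (((σ i : Fin n) : ℕ) : ℤ)
    · -- all entries nonnegative: sorted version is a partition strictly dominating ν
      set a : Fin n → ℕ :=
        fun i => ((ν (i : ℕ) : ℤ) - ((i : ℕ) : ℤ) + (((σ i : Fin n) : ℕ) : ℤ)).toNat with ha
      have haZ : ∀ i : Fin n,
          (a i : ℤ) = (ν (i : ℕ) : ℤ) - ((i : ℕ) : ℤ) + (((σ i : Fin n) : ℕ) : ℤ) :=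
        fun i => Int.toNat_of_nonneg (hnn i)
      set π : Equiv.Perm (Fin n) := Fin.revPerm.trans (Tuple.sort a) with hπ
      set b : Fin n → ℕ := fun i => a (π i) with hb
      have hab : ∀ x, a x = b (π.symm x) := by
        intro x
        rw [hb]
        simp
      have hbanti : Antitone b := by
        intro i j hij
        have hm : Monotone (a ∘ ⇑(Tuple.sort a)) := Tuple.monotone_sort a
        have h1 : Fin.rev j ≤ Fin.rev i := Fin.rev_le_rev.mpr hij
        have := hm h1
        simpa [hb, hπ, Equiv.trans_apply] using this
      set γ : ℕ → ℕ := pad n b with hγ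
      have hPC : (fun g => ((permCharZ n
            (fun i => (ν (i : ℕ) : ℤ) - ((i : ℕ) : ℤ) + (((σ i : Fin n) : ℕ) : ℤ)) g : ℤ) : ℚ))
          = fun g => ((permChar n n (fun k : Fin n => γ (k : ℕ)) g : ℤ) : ℚ) := by
        funext g
        rw [permCharZ, if_pos hnn]
        have h2 : permChar n n (fun k => a (π k)) g = permChar n n a g :=
          permChar_comp_perm n n a π g
        have h3 : (fun k : Fin n => γ (k : ℕ)) = b := by
          funext k
          simp [hγ, pad, k.2]
        rw [h3, hb, h2]
      rw [hPC]
      -- prefix sum facts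
      have hprefix : ∀ k, k ≤ n → ∑ i ∈ range k, ν i ≤ ∑ i ∈ range k, γ i := by
        intro k hk
        calc ∑ i ∈ range k, ν i ≤ ∑ i ∈ range k, pad n a i := prefix_nu_le_a ν σ a haZ hk
          _ ≤ ∑ i ∈ range k, pad n b i := prefix_le_sorted a b π hab hbanti hk
      have hsumγ : ∑ i ∈ range n, γ i = n := by
        rw [hγ, sum_pad_eq b, hb]
        rw [Equiv.sum_comp π a]
        have hz : (∑ i : Fin n, (a i : ℤ)) = (n : ℤ) := by
          rw [Finset.sum_congr rfl (fun i _ => haZ i), Finset.sum_add_distrib,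
            Finset.sum_sub_distrib,
            Fin.sum_univ_eq_sum_range (fun i => (ν i : ℤ)) n,
            Fin.sum_univ_eq_sum_range (fun i => (i : ℤ)) n,
            Equiv.sum_comp σ (fun i : Fin n => ((i : ℕ) : ℤ)),
            Fin.sum_univ_eq_sum_range (fun i => (i : ℤ)) n]
          have : ∑ i ∈ range n, (ν i : ℤ) = ((∑ i ∈ range n, ν i : ℕ) : ℤ) := by push_cast; rfl
          rw [this, hν.2.2]
          ring
        exact_mod_cast (by rw [← hz]; push_cast; rfl : ((∑ i : Fin n, a i : ℕ) : ℤ) = (n : ℤ))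
      have hγpart : IsPartition n γ := by
        refine ⟨?_, ?_, hsumγ⟩
        · intro i j hij
          rw [hγ]
          unfold pad
          by_cases hj : j < n
          · have hi : i < n := lt_of_le_of_lt hij hj
            rw [dif_pos hj, dif_pos hi]
            exact hbanti (show (⟨i, hi⟩ : Fin n) ≤ ⟨j, hj⟩ from hij)
          · rw [dif_neg hj]
            exact Nat.zero_le _
        · intro i hi
          rw [hγ]
          unfold pad
          rw [dif_neg (by omega)]
      have hγdom : Dominates γ ν := by
        intro k
        rcases le_or_gt k n with hk | hk
        · exact hprefix k hk
        · rw [prefix_eq_of_partition hγpart (le_of_lt hk),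
            prefix_eq_of_partition hν (le_of_lt hk)]
      obtain ⟨k₀, hk₀n, hk₀lt⟩ := prefix_nu_lt_a ν σ a haZ hσ1
      have hstrict : ∑ i ∈ range k₀, ν i < ∑ i ∈ range k₀, γ i :=
        lt_of_lt_of_le hk₀lt (prefix_le_sorted a b π hab hbanti hk₀n)
      have hγne : γ ≠ ν := by
        intro h
        rw [h] at hstrict
        omega
      have hMlt : Mfun n ν < Mfun n γ := Mfun_lt hγdom (by omega) hstrict
      have hMle := Mfun_le hγpart
      have hMνle := Mfun_le hν
      have hIH := ih γ hγpart (by omega)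
      have hsub : Submodule.span ℚ (genSet n γ) ≤ Submodule.span ℚ (genSet n ν) :=
        Submodule.span_mono (genSet_mono hγdom hγne)
      have hχ : (fun g => ((irrChar n γ g : ℤ) : ℚ)) ∈ Submodule.span ℚ (genSet n ν) :=
        Submodule.subset_span ⟨γ, hγpart, hγdom, hγne, rfl⟩
      have := Submodule.add_mem _ (hsub hIH) hχ
      simpa using this
    · -- some entry negative: the term is zero
      have hzero : (fun g => ((permCharZ n
          (fun i => (ν (i : ℕ) : ℤ) - ((i : ℕ) : ℤ) + (((σ i : Fin n) : ℕ) : ℤ)) g : ℤ) : ℚ))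
          = 0 := by
        funext g
        rw [permCharZ, if_neg hnn]
        simp
      rw [hzero]
      exact Submodule.zero_mem _


/-- The linear functional `h ↦ ⟨χ^λ ⊗ χ^μ, h⟩` on `ℚ`-valued functions. -/
noncomputable def Lfun (n : ℕ) (lam mu : ℕ → ℕ) : (Sym n → ℚ) →ₗ[ℚ] ℚ where
  toFun h := (∑ g : Sym n,
    ((irrChar n lam g : ℤ) : ℚ) * ((irrChar n mu g : ℤ) : ℚ) * h g) / (Nat.factorial n : ℚ)
  map_add' x y := by
    simp only [Pi.add_apply, mul_add, Finset.sum_add_distrib, add_div]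
  map_smul' c x := by
    simp only [RingHom.id_apply, smul_eq_mul, Pi.smul_apply]
    rw [← mul_div_assoc]
    congr 1
    rw [Finset.mul_sum]
    exact Finset.sum_congr rfl fun g _ => by ring

lemma kron_eq_L (n : ℕ) (lam mu γ : ℕ → ℕ) :
    kron n lam mu γ = Lfun n lam mu (fun g => ((irrChar n γ g : ℤ) : ℚ)) := by
  unfold kron innerChar Lfun
  simp only [LinearMap.coe_mk, AddHom.coe_mk]
  congr 1
  refine Finset.sum_congr rfl fun g _ => ?_
  push_cast
  ring

lemma lrN_eq_L (n : ℕ) (lam mu ν : ℕ → ℕ) :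
    lrN n lam mu ν = Lfun n lam mu (fun g => ((permChar n n (fun k : Fin n => ν (k : ℕ)) g : ℤ) : ℚ)) := by
  unfold lrN lrCoeff innerChar Lfun
  simp only [LinearMap.coe_mk, AddHom.coe_mk]
  congr 1
  refine Finset.sum_congr rfl fun g _ => ?_
  push_cast
  ring

/-- if `χ^ν` is a maximal component of `χ^λ ⊗ χ^μ` in the dominance
order, then `g(λ,μ,ν) = lr(λ,μ;ν)`. -/
theorem kron_of_maximal_component (n : ℕ) (lam mu nu : ℕ → ℕ)
    (hlam : IsPartition n lam) (hmu : IsPartition n mu) (hnu : IsPartition n nu)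
    (hpos : 0 < kron n lam mu nu)
    (hmax : ∀ γ : ℕ → ℕ, IsPartition n γ → Dominates γ nu → γ ≠ nu →
      kron n lam mu γ = 0) :
    kron n lam mu nu = lrN n lam mu nu := by
  have hkey := key n (n * (n+1) - Mfun n nu + 1) nu hnu (by omega)
  have hker : Submodule.span ℚ (genSet n nu) ≤ LinearMap.ker (Lfun n lam mu) := by
    rw [Submodule.span_le]
    rintro f ⟨γ, hp, hdom, hne, rfl⟩
    rw [SetLike.mem_coe, LinearMap.mem_ker, ← kron_eq_L]
    exact hmax γ hp hdom hne
  have h0 : Lfun n lam mu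
      ((fun g => ((permChar n n (fun k : Fin n => nu (k : ℕ)) g : ℤ) : ℚ))
        - fun g => ((irrChar n nu g : ℤ) : ℚ)) = 0 :=
    LinearMap.mem_ker.mp (hker hkey)
  rw [map_sub] at h0
  rw [kron_eq_L, lrN_eq_L]
  linarith

end Kron
end

section
/- Suppose p ≤ q. For any X in the column-row cone CR(p,q,r), the first level matrix X^{(1)} = (x_{i,j}^{(1)}) has constant antidiagonals and support in the staircase: there exist nonnegative reals x_1,...,x_p such that x_{i,j}^{(1)} = x_{i+j−1} when i+j ≤ p+1 and x_{i,j}^{(1)} = 0 when i+j > p+1. -/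
open Finset

namespace CRPoly

/-- Entry of a `p × q × r` real array, with 0-indexed `ℕ` indices and value `0`
out of range. -/
def ent {p q r : ℕ} (x : Fin p → Fin q → Fin r → ℝ) (i j k : ℕ) : ℝ :=
  if hi : i < p then if hj : j < q then if hk : k < r then
    x ⟨i, hi⟩ ⟨j, hj⟩ ⟨k, hk⟩ else 0 else 0 else 0

/-- The (1-indexed) entry `b_{i,j}` of the `(pr) × q` matrix `X^col` obtained by
stacking the level matrices `X^{(r)}, …, X^{(1)}` vertically. -/
def bcol {p q r : ℕ} (x : Fin p → Fin q → Fin r → ℝ) (i j : ℕ) : ℝ :=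
  ent x ((i - 1) % p) (j - 1) (r - 1 - (i - 1) / p)

/-- The (1-indexed) entry `c_{i,j}` of the `p × (qr)` matrix `X^row` obtained by
concatenating the level matrices `X^{(r)}, …, X^{(1)}` horizontally. -/
def crow {p q r : ℕ} (x : Fin p → Fin q → Fin r → ℝ) (i j : ℕ) : ℝ :=
  ent x (i - 1) ((j - 1) % q) (r - 1 - (j - 1) / q)

/-- The column-row cone `CR(p,q,r)`: nonnegative `p × q × r` arrays satisfying the
vanishing conditions (C1), (R1) and the column inequalities (C2) and row
inequalities (R2) (all matrix indices 1-indexed, as in the paper). -/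
def CRcone (p q r : ℕ) : Set (Fin p → Fin q → Fin r → ℝ) :=
  {x | (∀ i j k, 0 ≤ x i j k) ∧
    -- (C1)
    (∀ i j, 1 ≤ i → i ≤ p * r → 1 ≤ j → j ≤ q → p * r + 1 < i + j → bcol x i j = 0) ∧
    -- (C2)
    (∀ j i, 1 ≤ j → j + 1 ≤ min (p * r) q → 2 ≤ i → i ≤ p * r + 1 - j →
      ∑ k ∈ Finset.Icc (i - 1) (p * r - j), bcol x k (j + 1) ≤
      ∑ k ∈ Finset.Icc i (p * r + 1 - j), bcol x k j) ∧
    -- (R1)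
    (∀ i j, 1 ≤ i → i ≤ p → 1 ≤ j → j ≤ q * r → q * r + 1 < i + j → crow x i j = 0) ∧
    -- (R2)
    (∀ i j, 1 ≤ i → i + 1 ≤ min p (q * r) → 2 ≤ j → j ≤ q * r + 1 - i →
      ∑ l ∈ Finset.Icc (j - 1) (q * r - i), crow x (i + 1) l ≤
      ∑ l ∈ Finset.Icc j (q * r + 1 - i), crow x i l)}

/-- The column-row polytope `CR(λ,μ;τ)`: elements of the cone `CR(p,q,r)` whose
1-marginals (plane sums) are `λ`, `μ` and `τ`. -/
def CRpoly (p q r : ℕ) (lam mu tau : ℕ → ℕ) : Set (Fin p → Fin q → Fin r → ℝ) :=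
  {x | x ∈ CRcone p q r ∧
    (∀ i : Fin p, ∑ j, ∑ k, x i j k = (lam (i : ℕ) : ℝ)) ∧
    (∀ j : Fin q, ∑ i, ∑ k, x i j k = (mu (j : ℕ) : ℝ)) ∧
    (∀ k : Fin r, ∑ i, ∑ j, x i j k = (tau (k : ℕ) : ℝ))}

/-- Shifting the index in a sum over an interval. -/
lemma sum_Icc_shift (f : ℕ → ℝ) (a b c : ℕ) :
    ∑ k ∈ Finset.Icc (a + c) (b + c), f k = ∑ s ∈ Finset.Icc a b, f (s + c) := by
  rw [← Finset.map_add_right_Icc, Finset.sum_map]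
  rfl

/-- Rows of `X^col` in the bottom block are entries of the first level. -/
lemma bcol_bottom {p q r' : ℕ} (x : Fin p → Fin q → Fin (r' + 1) → ℝ) {i : ℕ}
    (h1 : r' * p + 1 ≤ i) (h2 : i ≤ r' * p + p) (j : ℕ) :
    bcol x i j = ent x (i - r' * p - 1) (j - 1) 0 := by
  have hp : 0 < p := by omega
  obtain ⟨s, hs, rfl⟩ : ∃ s, s < p ∧ i = r' * p + s + 1 := ⟨i - r' * p - 1, by omega, by omega⟩
  have e : r' * p + s + 1 - 1 = r' * p + s := by omega
  unfold bcol
  rw [e]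
  have hm : (r' * p + s) % p = s := by
    rw [Nat.add_comm, Nat.add_mul_mod_self_right, Nat.mod_eq_of_lt hs]
  have hd : (r' * p + s) / p = r' := by
    rw [Nat.add_comm, Nat.add_mul_div_right _ _ hp, Nat.div_eq_of_lt hs, Nat.zero_add]
  rw [hm, hd, show r' + 1 - 1 - r' = 0 by omega, show r' * p + s + 1 - r' * p - 1 = s by omega]

/-- Columns of `X^row` in the last block are entries of the first level. -/
lemma crow_last {p q r' : ℕ} (x : Fin p → Fin q → Fin (r' + 1) → ℝ) {j : ℕ}
    (h1 : r' * q + 1 ≤ j) (h2 : j ≤ r' * q + q) (i : ℕ) :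
    crow x i j = ent x (i - 1) (j - r' * q - 1) 0 := by
  have hq : 0 < q := by omega
  obtain ⟨s, hs, rfl⟩ : ∃ s, s < q ∧ j = r' * q + s + 1 := ⟨j - r' * q - 1, by omega, by omega⟩
  have e : r' * q + s + 1 - 1 = r' * q + s := by omega
  unfold crow
  rw [e]
  have hm : (r' * q + s) % q = s := by
    rw [Nat.add_comm, Nat.add_mul_mod_self_right, Nat.mod_eq_of_lt hs]
  have hd : (r' * q + s) / q = r' := by
    rw [Nat.add_comm, Nat.add_mul_div_right _ _ hq, Nat.div_eq_of_lt hs, Nat.zero_add]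
  rw [hm, hd, show r' + 1 - 1 - r' = 0 by omega, show r' * q + s + 1 - r' * q - 1 = s by omega]

/-- if `p ≤ q`, the first level matrix `X^{(1)}` of any element of
`CR(p,q,r)` has constant antidiagonals supported on the staircase: there are
nonnegative reals `v 0, …, v (p-1)` with `x^{(1)}_{i,j} = v (i+j)` for
`i + j + 1 ≤ p` and `x^{(1)}_{i,j} = 0` otherwise (0-indexed). -/
theorem first_level_staircase (p q r : ℕ) (hpq : p ≤ q)
    (x : Fin p → Fin q → Fin r → ℝ) (hx : x ∈ CRcone p q r) :
    ∃ v : ℕ → ℝ, (∀ j, 0 ≤ v j) ∧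
      ∀ i j, i < p → j < q →
        ent x i j 0 = if i + j + 1 ≤ p then v (i + j) else 0 := by
  obtain ⟨hnn, hC1, hC2, hR1, hR2⟩ := hx
  have ann : ∀ i j, (0:ℝ) ≤ ent x i j 0 := by
    intro i j
    unfold ent
    split_ifs <;> first | exact hnn _ _ _ | exact le_rfl
  rcases Nat.eq_zero_or_pos r with hr | hr
  · subst hr
    refine ⟨fun _ => 0, fun _ => le_rfl, fun i j hi hj => ?_⟩
    simp [ent]
  rcases Nat.eq_zero_or_pos p with hp0 | hp0
  · exact ⟨fun _ => 0, fun _ => le_rfl, fun i j hi hj => absurd hi (by omega)⟩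
  obtain ⟨r', rfl⟩ : ∃ r', r = r' + 1 := ⟨r - 1, by omega⟩
  have hq0 : 0 < q := lt_of_lt_of_le hp0 hpq
  have hpr : p * (r' + 1) = r' * p + p := by ring
  have hqr : q * (r' + 1) = r' * q + q := by ring
  -- vanishing beyond the staircase
  have azero : ∀ i j, p ≤ i + j → ent x i j 0 = 0 := by
    intro i j hij
    by_cases hi : i < p
    · by_cases hj : j < q
      · have hb := hC1 (r' * p + i + 1) (j + 1) (by omega) (by rw [hpr]; omega) (by omega)
          (by omega) (by rw [hpr]; omega)
        rw [bcol_bottom x (by omega) (by omega)] at hb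
        rw [show r' * p + i + 1 - r' * p - 1 = i by omega, show j + 1 - 1 = j from rfl] at hb
        exact hb
      · simp [ent, hj]
    · simp [ent, hi]
  -- restricted column inequalities for the first level
  have colineq : ∀ j u, u + j + 2 ≤ p →
      ∑ s ∈ Finset.Icc u (p - j - 2), ent x s (j + 1) 0 ≤
      ∑ s ∈ Finset.Icc u (p - j - 2), ent x (s + 1) j 0 := by
    intro j u hu
    have h2 := hC2 (j + 1) (r' * p + u + 2) (by omega) (by rw [hpr]; omega) (by omega)
      (by rw [hpr]; omega)
    rw [show r' * p + u + 2 - 1 = u + (r' * p + 1) by omega,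
        show p * (r' + 1) - (j + 1) = (p - j - 2) + (r' * p + 1) by rw [hpr]; omega,
        show r' * p + u + 2 = (u + 1) + (r' * p + 1) by omega,
        show p * (r' + 1) + 1 - (j + 1) = ((p - j - 2) + 1) + (r' * p + 1) by rw [hpr]; omega,
        sum_Icc_shift, sum_Icc_shift, sum_Icc_shift] at h2
    refine le_trans (le_of_eq (Finset.sum_congr rfl fun s hs => ?_))
      (le_trans h2 (le_of_eq (Finset.sum_congr rfl fun s hs => ?_)))
    · rw [Finset.mem_Icc] at hs
      rw [bcol_bottom x (by omega) (by omega),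
        show s + (r' * p + 1) - r' * p - 1 = s by omega, show j + 1 + 1 - 1 = j + 1 from rfl]
    · rw [Finset.mem_Icc] at hs
      rw [bcol_bottom x (by omega) (by omega),
        show s + 1 + (r' * p + 1) - r' * p - 1 = s + 1 by omega, show j + 1 - 1 = j from rfl]
  -- restricted row inequalities for the first level
  have rowineq : ∀ i w, i + 2 ≤ p → i + w + 2 ≤ q →
      ∑ s ∈ Finset.Icc w (q - i - 2), ent x (i + 1) s 0 ≤
      ∑ s ∈ Finset.Icc w (q - i - 2), ent x i (s + 1) 0 := by
    intro i w hi hw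
    have h2 := hR2 (i + 1) (r' * q + w + 2) (by omega) (by rw [hqr]; omega) (by omega)
      (by rw [hqr]; omega)
    rw [show r' * q + w + 2 - 1 = w + (r' * q + 1) by omega,
        show q * (r' + 1) - (i + 1) = (q - i - 2) + (r' * q + 1) by rw [hqr]; omega,
        show r' * q + w + 2 = (w + 1) + (r' * q + 1) by omega,
        show q * (r' + 1) + 1 - (i + 1) = ((q - i - 2) + 1) + (r' * q + 1) by rw [hqr]; omega,
        sum_Icc_shift, sum_Icc_shift, sum_Icc_shift] at h2
    refine le_trans (le_of_eq (Finset.sum_congr rfl fun s hs => ?_))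
      (le_trans h2 (le_of_eq (Finset.sum_congr rfl fun s hs => ?_)))
    · rw [Finset.mem_Icc] at hs
      rw [crow_last x (by omega) (by omega),
        show s + (r' * q + 1) - r' * q - 1 = s by omega, show i + 1 + 1 - 1 = i + 1 from rfl]
    · rw [Finset.mem_Icc] at hs
      rw [crow_last x (by omega) (by omega),
        show s + 1 + (r' * q + 1) - r' * q - 1 = s + 1 by omega, show i + 1 - 1 = i from rfl]
  -- antidiagonal differences vanish (downward induction)
  have step : ∀ m i j, p ≤ i + j + m → ent x (i + 1) j 0 = ent x i (j + 1) 0 := by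
    intro m
    induction m with
    | zero => intro i j h; rw [azero _ _ (by omega), azero _ _ (by omega)]
    | succ n ih =>
      intro i j h
      by_cases hd : p ≤ i + j + n
      · exact ih i j hd
      rcases Nat.eq_zero_or_pos n with hn | hn
      · rw [azero _ _ (by omega), azero _ _ (by omega)]
      have hcol := colineq j i (by omega)
      have hrow := rowineq i j (by omega) (by omega)
      have hmem : i ∈ Finset.Icc i (p - j - 2) := Finset.mem_Icc.mpr ⟨le_rfl, by omega⟩
      have hc2 : ∑ s ∈ Finset.Icc i (p - j - 2), (ent x (s + 1) j 0 - ent x s (j + 1) 0)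
          = ent x (i + 1) j 0 - ent x i (j + 1) 0 := by
        apply Finset.sum_eq_single_of_mem i hmem
        intro s hs hne
        rw [Finset.mem_Icc] at hs
        rw [ih s j (by omega), sub_self]
      have hmem2 : j ∈ Finset.Icc j (q - i - 2) := Finset.mem_Icc.mpr ⟨le_rfl, by omega⟩
      have hr2 : ∑ s ∈ Finset.Icc j (q - i - 2), (ent x i (s + 1) 0 - ent x (i + 1) s 0)
          = ent x i (j + 1) 0 - ent x (i + 1) j 0 := by
        apply Finset.sum_eq_single_of_mem j hmem2
        intro s hs hne
        rw [Finset.mem_Icc] at hs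
        rw [ih i s (by omega), sub_self]
      rw [Finset.sum_sub_distrib] at hc2 hr2
      have h1 : (0:ℝ) ≤ ent x (i + 1) j 0 - ent x i (j + 1) 0 := by
        rw [← hc2]; exact sub_nonneg.mpr hcol
      have h2' : (0:ℝ) ≤ ent x i (j + 1) 0 - ent x (i + 1) j 0 := by
        rw [← hr2]; exact sub_nonneg.mpr hrow
      linarith
  have const : ∀ i j, ent x i j 0 = ent x 0 (i + j) 0 := by
    intro i
    induction i with
    | zero => intro j; rw [Nat.zero_add]
    | succ n ih =>
      intro j
      rw [step p n j (by omega), ih (j + 1), show n + (j + 1) = n + 1 + j by omega]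
  refine ⟨fun n => ent x 0 n 0, fun n => ann 0 n, fun i j hi hj => ?_⟩
  by_cases h : i + j + 1 ≤ p
  · rw [if_pos h, const i j]
  · rw [if_neg h, azero i j (by omega)]

end CRPoly
end

section
/- Let λ, μ be partitions of n of lengths p ≤ q, τ a composition of n of length r with 2 ≤ r and q ≤ pr. Then the column-row polytope CR(λ,μ;τ) has dimension at most pqr − C(p,2) − C(q,2) − (p+q+r) + 2. -/
open Finset

namespace CRPoly

variable {p q r : ℕ} {x : Fin p → Fin q → Fin r → ℝ}

lemma ent_eq (a b k : ℕ) (ha : a < p) (hb : b < q) (hk : k < r) :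
    ent x a b k = x ⟨a, ha⟩ ⟨b, hb⟩ ⟨k, hk⟩ := by
  simp [ent, ha, hb, hk]

lemma bcol_apply (a b k : ℕ) (ha : a < p) (hk : k < r) :
    bcol x (p * (r - 1 - k) + a + 1) (b + 1) = ent x a b k := by
  have hp : 0 < p := by omega
  unfold bcol
  have h1 : p * (r - 1 - k) + a + 1 - 1 = a + p * (r - 1 - k) := by omega
  rw [h1, Nat.add_mul_mod_self_left, Nat.add_mul_div_left _ _ hp,
    Nat.mod_eq_of_lt ha, Nat.div_eq_of_lt ha]
  congr 1
  omega

lemma crow_apply (a b k : ℕ) (hb : b < q) (hk : k < r) :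
    crow x (a + 1) (q * (r - 1 - k) + b + 1) = ent x a b k := by
  have hq : 0 < q := by omega
  unfold crow
  have h1 : q * (r - 1 - k) + b + 1 - 1 = b + q * (r - 1 - k) := by omega
  rw [h1, Nat.add_mul_mod_self_left, Nat.add_mul_div_left _ _ hq,
    Nat.mod_eq_of_lt hb, Nat.div_eq_of_lt hb]
  congr 1
  omega

/-- The forced-zero entries coming from (C1). -/
lemma ent_zero (hx : x ∈ CRcone p q r) (a b k : ℕ) (h : p * (k + 1) ≤ a + b) :
    ent x a b k = 0 := by
  by_cases ha : a < p
  · by_cases hb : b < q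
    · by_cases hk : k < r
      · have hsplit : p * (r - 1 - k) + p * (k + 1) = p * r := by
          rw [← Nat.mul_add]; congr 1; omega
        have hp1 : p * 1 ≤ p * (k + 1) := Nat.mul_le_mul_left p (by omega)
        rw [mul_one] at hp1
        have := hx.2.1 (p * (r - 1 - k) + a + 1) (b + 1) (by omega) (by omega)
          (by omega) hb (by omega)
        rwa [bcol_apply a b k ha hk] at this
      · simp [ent, ha, hb, hk]
    · simp [ent, ha, hb]
  · simp [ent, ha]


lemma sum_Icc_shift_s18 (g : ℕ → ℝ) (m u v : ℕ) :
    ∑ l ∈ Finset.Icc (m + u) (m + v), g l = ∑ t ∈ Finset.Icc u v, g (m + t) := by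
  rw [← Finset.map_add_left_Icc, Finset.sum_map]
  simp [addLeftEmbedding]

lemma crow_apply0 (a b : ℕ) (ha : a < p) (hb : b < q) (hr0 : 0 < r) :
    crow x (a + 1) (q * (r - 1) + 1 + b) = ent x a b 0 := by
  have h := crow_apply (x := x) a b 0 hb hr0
  simp only [Nat.sub_zero] at h
  rwa [show q * (r - 1) + b + 1 = q * (r - 1) + 1 + b from by omega] at h

lemma bcol_apply0 (a b : ℕ) (ha : a < p) (hb : b < q) (hr0 : 0 < r) :
    bcol x (p * (r - 1) + 1 + a) (b + 1) = ent x a b 0 := by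
  have h := bcol_apply (x := x) a b 0 ha hr0
  simp only [Nat.sub_zero] at h
  rwa [show p * (r - 1) + a + 1 = p * (r - 1) + 1 + a from by omega] at h

section Steps

variable (hx : x ∈ CRcone p q r) (hp0 : 0 < p) (hpq : p ≤ q) (hqpr : q ≤ p * r)
  (hr2 : 2 ≤ r) {m a b : ℕ}

include hx hp0 hpq hqpr hr2

lemma step_le (hb : 1 ≤ b) (hd : a + b + m + 1 = p)
    (IH : ∀ a₁ b₁ a₂ b₂, a₁ + b₁ = a₂ + b₂ → p ≤ a₁ + b₁ + m →
      ent x a₁ b₁ 0 = ent x a₂ b₂ 0) :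
    ent x (a + 1) (b - 1) 0 ≤ ent x a b 0 := by
  have hq0 : 0 < q := by omega
  have hr0 : 0 < r := by omega
  have hsq : q * (r - 1) + q = q * r := by
    rw [show q * (r-1) + q = q * (r-1) + q * 1 from by ring, ← Nat.mul_add]
    congr 1; omega
  have key := hx.2.2.2.2 (a + 1) (q * (r - 1) + b + 1) (by omega)
    (Nat.le_min.mpr ⟨by omega, by omega⟩) (by omega) (by omega)
  rw [show q * (r - 1) + b + 1 - 1 = q * (r - 1) + 1 + (b - 1) from by omega,
    show q * r - (a + 1) = q * (r - 1) + 1 + (q - a - 2) from by omega,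
    show q * (r - 1) + b + 1 = q * (r - 1) + 1 + b from by omega,
    show q * r + 1 - (a + 1) = q * (r - 1) + 1 + (q - a - 1) from by omega,
    sum_Icc_shift_s18, sum_Icc_shift_s18] at key
  have hL : ∑ t ∈ Finset.Icc (b - 1) (q - a - 2), crow x (a + 1 + 1) (q * (r - 1) + 1 + t)
      = ∑ t ∈ Finset.Icc (b - 1) (q - a - 2), ent x (a + 1) t 0 :=
    Finset.sum_congr rfl fun t ht => by
      have ht' := Finset.mem_Icc.mp ht
      exact crow_apply0 (a + 1) t (by omega) (by omega) hr0
  have hR : ∑ t ∈ Finset.Icc b (q - a - 1), crow x (a + 1) (q * (r - 1) + 1 + t)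
      = ∑ t ∈ Finset.Icc b (q - a - 1), ent x a t 0 :=
    Finset.sum_congr rfl fun t ht => by
      have ht' := Finset.mem_Icc.mp ht
      exact crow_apply0 a t (by omega) (by omega) hr0
  rw [hL, hR] at key
  have hshiftR : ∑ t ∈ Finset.Icc b (q - a - 1), ent x a t 0
      = ∑ t ∈ Finset.Icc (b - 1) (q - a - 2), ent x a (1 + t) 0 := by
    conv_lhs => rw [show b = 1 + (b - 1) from by omega,
      show q - a - 1 = 1 + (q - a - 2) from by omega]
    exact sum_Icc_shift_s18 _ 1 _ _
  rw [hshiftR] at key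
  have hmem : b - 1 ∈ Finset.Icc (b - 1) (q - a - 2) := Finset.mem_Icc.mpr ⟨le_rfl, by omega⟩
  rw [← Finset.sum_erase_add _ _ hmem, ← Finset.sum_erase_add _ (fun t => ent x a (1 + t) 0) hmem]
    at key
  have heq : ∑ t ∈ (Finset.Icc (b - 1) (q - a - 2)).erase (b - 1), ent x (a + 1) t 0
      = ∑ t ∈ (Finset.Icc (b - 1) (q - a - 2)).erase (b - 1), ent x a (1 + t) 0 :=
    Finset.sum_congr rfl fun t ht => by
      have ht1 := Finset.mem_of_mem_erase ht
      have ht2 := Finset.ne_of_mem_erase ht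
      have ht' := Finset.mem_Icc.mp ht1
      exact IH (a + 1) t a (1 + t) (by omega) (by omega)
  rw [heq] at key
  have hfin : ent x (a + 1) (b - 1) 0 ≤ ent x a (1 + (b - 1)) 0 := by linarith
  rwa [show 1 + (b - 1) = b from by omega] at hfin

lemma step_ge (hb : 1 ≤ b) (hd : a + b + m + 1 = p)
    (IH : ∀ a₁ b₁ a₂ b₂, a₁ + b₁ = a₂ + b₂ → p ≤ a₁ + b₁ + m →
      ent x a₁ b₁ 0 = ent x a₂ b₂ 0) :
    ent x a b 0 ≤ ent x (a + 1) (b - 1) 0 := by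
  have hr0 : 0 < r := by omega
  have hsp : p * (r - 1) + p = p * r := by
    rw [show p * (r-1) + p = p * (r-1) + p * 1 from by ring, ← Nat.mul_add]
    congr 1; omega
  have key := hx.2.2.1 b (p * (r - 1) + a + 2) hb
    (Nat.le_min.mpr ⟨by omega, by omega⟩) (by omega) (by omega)
  rw [show p * (r - 1) + a + 2 - 1 = p * (r - 1) + 1 + a from by omega,
    show p * r - b = p * (r - 1) + 1 + (p - b - 1) from by omega,
    show p * (r - 1) + a + 2 = p * (r - 1) + 1 + (a + 1) from by omega,
    show p * r + 1 - b = p * (r - 1) + 1 + (p - b) from by omega,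
    sum_Icc_shift_s18, sum_Icc_shift_s18] at key
  have hL : ∑ t ∈ Finset.Icc a (p - b - 1), bcol x (p * (r - 1) + 1 + t) (b + 1)
      = ∑ t ∈ Finset.Icc a (p - b - 1), ent x t b 0 :=
    Finset.sum_congr rfl fun t ht => by
      have ht' := Finset.mem_Icc.mp ht
      exact bcol_apply0 t b (by omega) (by omega) hr0
  have hR : ∑ t ∈ Finset.Icc (a + 1) (p - b), bcol x (p * (r - 1) + 1 + t) b
      = ∑ t ∈ Finset.Icc (a + 1) (p - b), ent x t (b - 1) 0 :=
    Finset.sum_congr rfl fun t ht => by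
      have ht' := Finset.mem_Icc.mp ht
      have h' := bcol_apply0 (x := x) t (b - 1) (by omega) (by omega) hr0
      rwa [show b - 1 + 1 = b from by omega] at h'
  rw [hL, hR] at key
  have hshiftR : ∑ t ∈ Finset.Icc (a + 1) (p - b), ent x t (b - 1) 0
      = ∑ t ∈ Finset.Icc a (p - b - 1), ent x (1 + t) (b - 1) 0 := by
    conv_lhs => rw [show a + 1 = 1 + a from by omega,
      show p - b = 1 + (p - b - 1) from by omega]
    exact sum_Icc_shift_s18 _ 1 _ _
  rw [hshiftR] at key
  have hmem : a ∈ Finset.Icc a (p - b - 1) := Finset.mem_Icc.mpr ⟨le_rfl, by omega⟩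
  rw [← Finset.sum_erase_add _ _ hmem,
    ← Finset.sum_erase_add _ (fun t => ent x (1 + t) (b - 1) 0) hmem] at key
  have heq : ∑ t ∈ (Finset.Icc a (p - b - 1)).erase a, ent x t b 0
      = ∑ t ∈ (Finset.Icc a (p - b - 1)).erase a, ent x (1 + t) (b - 1) 0 :=
    Finset.sum_congr rfl fun t ht => by
      have ht1 := Finset.mem_of_mem_erase ht
      have ht2 := Finset.ne_of_mem_erase ht
      have ht' := Finset.mem_Icc.mp ht1
      exact IH t b (1 + t) (b - 1) (by omega) (by omega)
  rw [heq] at key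
  have hfin : ent x a b 0 ≤ ent x (1 + a) (b - 1) 0 := by linarith
  rwa [show 1 + a = a + 1 from by omega] at hfin

lemma diag_const : ∀ a b a' b' : ℕ, a + b = a' + b' → ent x a b 0 = ent x a' b' 0 := by
  suffices H : ∀ m a b a' b' : ℕ, a + b = a' + b' → p ≤ a + b + m →
      ent x a b 0 = ent x a' b' 0 by
    intro a b a' b' h
    exact H p a b a' b' h (by omega)
  intro m
  induction m with
  | zero =>
    intro a b a' b' h hub
    rw [ent_zero hx a b 0 (by omega), ent_zero hx a' b' 0 (by omega)]
  | succ m IH =>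
    intro a b a' b' h hub
    by_cases hc : p ≤ a + b + m
    · exact IH a b a' b' h hc
    · have hd : a + b + m + 1 = p := by omega
      have aux : ∀ c, c ≤ a + b → ent x c (a + b - c) 0 = ent x 0 (a + b) 0 := by
        intro c
        induction c with
        | zero => intro _; rw [Nat.sub_zero]
        | succ c ihc =>
          intro hc1
          have hcb : 1 ≤ a + b - c := by omega
          have hle := step_le hx hp0 hpq hqpr hr2 (m := m) (a := c) hcb (by omega) IH
          have hge := step_ge hx hp0 hpq hqpr hr2 (m := m) (a := c) hcb (by omega) IH
          have heq : ent x (c + 1) (a + b - c - 1) 0 = ent x c (a + b - c) 0 :=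
            le_antisymm hle hge
          rw [show a + b - c - 1 = a + b - (c + 1) from by omega] at heq
          rw [heq]
          exact ihc (by omega)
      have h1 : ent x a b 0 = ent x 0 (a + b) 0 := by
        have := aux a (by omega)
        rwa [show a + b - a = b from by omega] at this
      have h2 : ent x a' b' 0 = ent x 0 (a' + b') 0 := by
        have haux : ∀ c, c ≤ a' + b' → ent x c (a' + b' - c) 0 = ent x 0 (a' + b') 0 := by
          rw [← h]; exact aux
        have := haux a' (by omega)
        rwa [show a' + b' - a' = b' from by omega] at this
      rw [h1, h2, h]

end Steps

section Main

variable (hp0 : 0 < p) (hq0 : 0 < q) (hr2 : 2 ≤ r) (hpq : p ≤ q) (hqpr : q ≤ p * r)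

/-- The subspace cut out by the linear constraints valid on differences of
points of the column-row polytope. -/
def Wsub (p q r : ℕ) (hr0 : 0 < r) : Submodule ℝ (Fin p → Fin q → Fin r → ℝ) where
  carrier := {v |
    (∀ (i : Fin p) (j : Fin q) (k : Fin r), p * ((k : ℕ) + 1) ≤ (i : ℕ) + (j : ℕ) →
      v i j k = 0) ∧
    (∀ (i i' : Fin p) (j j' : Fin q), (i : ℕ) + (j : ℕ) = (i' : ℕ) + (j' : ℕ) →
      v i j ⟨0, hr0⟩ = v i' j' ⟨0, hr0⟩) ∧
    (∀ i : Fin p, ∑ j, ∑ k, v i j k = 0) ∧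
    (∀ j : Fin q, ∑ i, ∑ k, v i j k = 0) ∧
    (∀ k : Fin r, ∑ i, ∑ j, v i j k = 0)}
  add_mem' := by
    rintro v w ⟨hv1, hv2, hv3, hv4, hv5⟩ ⟨hw1, hw2, hw3, hw4, hw5⟩
    refine ⟨fun i j k h => by simp [hv1 i j k h, hw1 i j k h],
      fun i i' j j' h => by simp only [Pi.add_apply, hv2 i i' j j' h, hw2 i i' j j' h],
      fun i => by simp [Finset.sum_add_distrib, hv3 i, hw3 i],
      fun j => by simp [Finset.sum_add_distrib, hv4 j, hw4 j],
      fun k => by simp [Finset.sum_add_distrib, hv5 k, hw5 k]⟩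
  zero_mem' := by
    refine ⟨fun _ _ _ _ => rfl, fun _ _ _ _ _ => rfl, ?_, ?_, ?_⟩ <;> intros <;> simp
  smul_mem' := by
    rintro c v ⟨hv1, hv2, hv3, hv4, hv5⟩
    refine ⟨fun i j k h => by simp [hv1 i j k h],
      fun i i' j j' h => by simp only [Pi.smul_apply, hv2 i i' j j' h],
      fun i => by simp [← Finset.mul_sum, hv3 i],
      fun j => by simp [← Finset.mul_sum, hv4 j],
      fun k => by simp [← Finset.mul_sum, hv5 k]⟩

/-- for partitions `λ, μ` of `n` of lengths `p ≤ q` and a composition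
`τ` of `n` of length `r` with `2 ≤ r` and `q ≤ pr`, the column-row polytope
`CR(λ,μ;τ)` has dimension at most `pqr − C(p,2) − C(q,2) − (p+q+r) + 2`. -/
theorem dim_CRpoly_le (n p q r : ℕ) (lam mu tau : ℕ → ℕ)
    (hlamdec : ∀ i j, i ≤ j → lam j ≤ lam i)
    (hlamlen : (∀ i, i < p → 0 < lam i) ∧ ∀ i, p ≤ i → lam i = 0)
    (hmudec : ∀ i j, i ≤ j → mu j ≤ mu i)
    (hmulen : (∀ j, j < q → 0 < mu j) ∧ ∀ j, q ≤ j → mu j = 0)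
    (htaulen : (∀ k, k < r → 0 < tau k) ∧ ∀ k, r ≤ k → tau k = 0)
    (hlamsize : ∑ i ∈ Finset.range p, lam i = n)
    (hmusize : ∑ j ∈ Finset.range q, mu j = n)
    (htausize : ∑ k ∈ Finset.range r, tau k = n)
    (hr2 : 2 ≤ r) (hpq : p ≤ q) (hqpr : q ≤ p * r) :
    (Module.finrank ℝ ((affineSpan ℝ (CRpoly p q r lam mu tau)).direction) : ℤ) ≤
      (p * q * r : ℤ) - (Nat.choose p 2 : ℤ) - (Nat.choose q 2 : ℤ)
        - (p + q + r : ℤ) + 2 := by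
  classical
  have hp0 : 0 < p := by
    by_contra hp
    have hp' : p = 0 := by omega
    have hn : n = 0 := by rw [← hlamsize, hp']; simp
    have ht0 : 0 < tau 0 := htaulen.1 0 (by omega)
    have hle : tau 0 ≤ ∑ k ∈ Finset.range r, tau k :=
      Finset.single_le_sum (fun i _ => Nat.zero_le _) (Finset.mem_range.mpr (by omega))
    omega
  have hq0 : 0 < q := by omega
  have hr0 : 0 < r := by omega
  set k0 : Fin r := ⟨0, hr0⟩ with hk0def
  set kr : Fin r := ⟨r - 1, by omega⟩ with hkrdef
  set i0 : Fin p := ⟨0, hp0⟩ with hi0def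
  set j0 : Fin q := ⟨0, hq0⟩ with hj0def
  have hk0v : (k0 : ℕ) = 0 := rfl
  have hkrv : (kr : ℕ) = r - 1 := rfl
  have hi0v : (i0 : ℕ) = 0 := rfl
  have hj0v : (j0 : ℕ) = 0 := rfl
  -- the finset of "determined" coordinates
  set S : Finset (Fin p × Fin q × Fin r) := Finset.univ.filter (fun t =>
    p * ((t.2.2 : ℕ) + 1) ≤ (t.1 : ℕ) + (t.2.1 : ℕ) ∨
    ((t.2.2 : ℕ) = 0 ∧ 1 ≤ (t.1 : ℕ) ∧ (t.1 : ℕ) + (t.2.1 : ℕ) < p) ∨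
    ((t.2.1 : ℕ) = 0 ∧ (t.2.2 : ℕ) = r - 1 ∧ 1 ≤ (t.1 : ℕ)) ∨
    ((t.1 : ℕ) = 0 ∧ (t.2.2 : ℕ) = r - 1 ∧ 1 ≤ (t.2.1 : ℕ)) ∨
    ((t.1 : ℕ) = 0 ∧ (t.2.1 : ℕ) = 0)) with hSdef
  have hmemS : ∀ t : Fin p × Fin q × Fin r, t ∈ S ↔
      (p * ((t.2.2 : ℕ) + 1) ≤ (t.1 : ℕ) + (t.2.1 : ℕ) ∨
      ((t.2.2 : ℕ) = 0 ∧ 1 ≤ (t.1 : ℕ) ∧ (t.1 : ℕ) + (t.2.1 : ℕ) < p) ∨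
      ((t.2.1 : ℕ) = 0 ∧ (t.2.2 : ℕ) = r - 1 ∧ 1 ≤ (t.1 : ℕ)) ∨
      ((t.1 : ℕ) = 0 ∧ (t.2.2 : ℕ) = r - 1 ∧ 1 ≤ (t.2.1 : ℕ)) ∨
      ((t.1 : ℕ) = 0 ∧ (t.2.1 : ℕ) = 0)) := by
    intro t
    rw [hSdef, Finset.mem_filter]
    simp only [Finset.mem_univ, true_and]
  -- Step 1: every member of `Wsub` vanishing outside `S` is zero.
  have det : ∀ v ∈ Wsub p q r hr0,
      (∀ t : Fin p × Fin q × Fin r, t ∉ S → v t.1 t.2.1 t.2.2 = 0) → v = 0 := by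
    intro v hv hout
    obtain ⟨hv1, hv2, hv3, hv4, hv5⟩ := hv
    have hgen : ∀ (i : Fin p) (j : Fin q) (k : Fin r), (k : ℕ) ≠ 0 →
        ¬((j : ℕ) = 0 ∧ (k : ℕ) = r - 1 ∧ 1 ≤ (i : ℕ)) →
        ¬((i : ℕ) = 0 ∧ (k : ℕ) = r - 1 ∧ 1 ≤ (j : ℕ)) →
        ¬((i : ℕ) = 0 ∧ (j : ℕ) = 0) → v i j k = 0 := by
      intro i j k hk hm1 hm2 hm3
      by_cases hz : p * ((k : ℕ) + 1) ≤ (i : ℕ) + (j : ℕ)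
      · exact hv1 i j k hz
      · exact hout (i, j, k) (fun hmem => by
          rcases (hmemS (i, j, k)).mp hmem with h | h | h | h | h
          · exact hz h
          · exact hk h.1
          · exact hm1 h
          · exact hm2 h
          · exact hm3 h)
    -- level 0 entries vanish
    have hlev0' : ∀ (i : Fin p) (j : Fin q), 0 < (i : ℕ) + (j : ℕ) → v i j k0 = 0 := by
      intro i j hij
      by_cases hp' : p ≤ (i : ℕ) + (j : ℕ)
      · exact hv1 i j k0 (by show p * 1 ≤ (i : ℕ) + (j : ℕ); omega)
      · have hd : (i : ℕ) + (j : ℕ) < p := by omega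
        have h1 : v i j k0 = v i0 ⟨(i : ℕ) + (j : ℕ), by omega⟩ k0 :=
          hv2 i i0 j ⟨(i : ℕ) + (j : ℕ), by omega⟩
            (by show (i : ℕ) + (j : ℕ) = 0 + ((i : ℕ) + (j : ℕ)); omega)
        rw [h1]
        refine hout (i0, ⟨(i : ℕ) + (j : ℕ), by omega⟩, k0) (fun hmem => ?_)
        rcases (hmemS _).mp hmem with h | h | h | h | h
        · exact absurd (show p * 1 ≤ 0 + ((i : ℕ) + (j : ℕ)) from h) (by omega)
        · exact absurd (show (0 : ℕ) = 0 ∧ 1 ≤ 0 ∧ 0 + ((i : ℕ) + (j : ℕ)) < p from h)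
            (by omega)
        · exact absurd (show (i : ℕ) + (j : ℕ) = 0 ∧ (0 : ℕ) = r - 1 ∧ 1 ≤ 0 from h)
            (by omega)
        · exact absurd (show (0 : ℕ) = 0 ∧ (0 : ℕ) = r - 1 ∧ 1 ≤ (i : ℕ) + (j : ℕ) from h)
            (by omega)
        · exact absurd (show (0 : ℕ) = 0 ∧ (i : ℕ) + (j : ℕ) = 0 from h) (by omega)
    have hzz : v i0 j0 k0 = 0 := by
      have hsum := hv5 k0
      rw [Finset.sum_eq_single_of_mem i0 (Finset.mem_univ _) (fun i _ hi =>
        Finset.sum_eq_zero (fun j _ => hlev0' i j (by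
          have : (i : ℕ) ≠ 0 := fun h => hi (Fin.ext (h.trans hi0v.symm))
          omega)))] at hsum
      rw [Finset.sum_eq_single_of_mem j0 (Finset.mem_univ _) (fun j _ hj =>
        hlev0' i0 j (by
          have : (j : ℕ) ≠ 0 := fun h => hj (Fin.ext (h.trans hj0v.symm))
          omega))] at hsum
      exact hsum
    have hlev0 : ∀ (i : Fin p) (j : Fin q), v i j k0 = 0 := by
      intro i j
      by_cases hij : 0 < (i : ℕ) + (j : ℕ)
      · exact hlev0' i j hij
      · have hi : i = i0 := Fin.ext (by omega)
        have hj : j = j0 := Fin.ext (by omega)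
        rw [hi, hj]; exact hzz
    have hknotzero : ∀ k : Fin r, k ≠ k0 → (k : ℕ) ≠ 0 :=
      fun k hk h => hk (Fin.ext (h.trans hk0v.symm))
    have hknotr : ∀ k : Fin r, k ≠ kr → (k : ℕ) ≠ r - 1 :=
      fun k hk h => hk (Fin.ext (h.trans hkrv.symm))
    -- lambda planes
    have hM1 : ∀ i : Fin p, 1 ≤ (i : ℕ) → v i j0 kr = 0 := by
      intro i hi
      have hsum := hv3 i
      rw [Finset.sum_eq_single_of_mem j0 (Finset.mem_univ _) (fun j _ hj =>
        Finset.sum_eq_zero (fun k _ => by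
          by_cases hk : k = k0
          · rw [hk]; exact hlev0 i j
          · have hjv : (j : ℕ) ≠ 0 := fun h => hj (Fin.ext (h.trans hj0v.symm))
            exact hgen i j k (hknotzero k hk) (by omega) (by omega) (by omega)))] at hsum
      rw [Finset.sum_eq_single_of_mem kr (Finset.mem_univ _) (fun k _ hk => by
        by_cases hk0' : k = k0
        · rw [hk0']; exact hlev0 i j0
        · exact hgen i j0 k (hknotzero k hk0')
            (by have := hknotr k hk; omega) (by omega) (by omega))] at hsum
      exact hsum
    -- mu planes
    have hM2 : ∀ j : Fin q, 1 ≤ (j : ℕ) → v i0 j kr = 0 := by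
      intro j hj
      have hsum := hv4 j
      rw [Finset.sum_eq_single_of_mem i0 (Finset.mem_univ _) (fun i _ hi =>
        Finset.sum_eq_zero (fun k _ => by
          by_cases hk : k = k0
          · rw [hk]; exact hlev0 i j
          · have hiv : (i : ℕ) ≠ 0 := fun h => hi (Fin.ext (h.trans hi0v.symm))
            exact hgen i j k (hknotzero k hk) (by omega) (by omega) (by omega)))] at hsum
      rw [Finset.sum_eq_single_of_mem kr (Finset.mem_univ _) (fun k _ hk => by
        by_cases hk0' : k = k0
        · rw [hk0']; exact hlev0 i0 j
        · exact hgen i0 j k (hknotzero k hk0')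
            (by omega) (by have := hknotr k hk; omega) (by omega))] at hsum
      exact hsum
    -- tau planes, middle levels
    have hM3 : ∀ k : Fin r, k ≠ k0 → k ≠ kr → v i0 j0 k = 0 := by
      intro k hk hkr'
      have hsum := hv5 k
      rw [Finset.sum_eq_single_of_mem i0 (Finset.mem_univ _) (fun i _ hi =>
        Finset.sum_eq_zero (fun j _ => by
          have hiv : (i : ℕ) ≠ 0 := fun h => hi (Fin.ext (h.trans hi0v.symm))
          exact hgen i j k (hknotzero k hk) (by have := hknotr k hkr'; omega)
            (by omega) (by omega)))] at hsum
      rw [Finset.sum_eq_single_of_mem j0 (Finset.mem_univ _) (fun j _ hj => by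
        have hjv : (j : ℕ) ≠ 0 := fun h => hj (Fin.ext (h.trans hj0v.symm))
        exact hgen i0 j k (hknotzero k hk) (by omega)
          (by have := hknotr k hkr'; omega) (by omega))] at hsum
      exact hsum
    -- tau plane at top level
    have hM4 : v i0 j0 kr = 0 := by
      have hsum := hv5 kr
      have hkrne : kr ≠ k0 := by
        intro h
        have : (kr : ℕ) = (k0 : ℕ) := by rw [h]
        rw [hkrv, hk0v] at this; omega
      rw [Finset.sum_eq_single_of_mem i0 (Finset.mem_univ _) (fun i _ hi =>
        Finset.sum_eq_zero (fun j _ => by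
          have hiv : (i : ℕ) ≠ 0 := fun h => hi (Fin.ext (h.trans hi0v.symm))
          by_cases hj : j = j0
          · rw [hj]; exact hM1 i (by omega)
          · have hjv : (j : ℕ) ≠ 0 := fun h => hj (Fin.ext (h.trans hj0v.symm))
            exact hgen i j kr (hknotzero kr hkrne) (by omega) (by omega) (by omega)))] at hsum
      rw [Finset.sum_eq_single_of_mem j0 (Finset.mem_univ _) (fun j _ hj =>
        hM2 j (by
          have : (j : ℕ) ≠ 0 := fun h => hj (Fin.ext (h.trans hj0v.symm))
          omega))] at hsum
      exact hsum
    -- conclude v = 0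
    funext i j k
    show v i j k = (0 : ℝ)
    by_cases hk : k = k0
    · rw [hk]; exact hlev0 i j
    · by_cases hi : i = i0
      · by_cases hj : j = j0
        · by_cases hkr' : k = kr
          · rw [hi, hj, hkr']; exact hM4
          · rw [hi, hj]; exact hM3 k hk hkr'
        · by_cases hkr' : k = kr
          · rw [hi, hkr']
            exact hM2 j (by have : (j : ℕ) ≠ 0 := fun h => hj (Fin.ext (h.trans hj0v.symm)); omega)
          · exact hgen i j k (hknotzero k hk)
              (by have : (i : ℕ) = 0 := by rw [hi]
                  omega)
              (by have := hknotr k hkr'; omega)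
              (by have : (j : ℕ) ≠ 0 := fun h => hj (Fin.ext (h.trans hj0v.symm)); omega)
      · have hiv : (i : ℕ) ≠ 0 := fun h => hi (Fin.ext (h.trans hi0v.symm))
        by_cases hj : j = j0
        · by_cases hkr' : k = kr
          · rw [hj, hkr']; exact hM1 i (by omega)
          · exact hgen i j k (hknotzero k hk)
              (by have := hknotr k hkr'; omega) (by omega) (by omega)
        · have hjv : (j : ℕ) ≠ 0 := fun h => hj (Fin.ext (h.trans hj0v.symm))
          exact hgen i j k (hknotzero k hk) (by omega) (by omega) (by omega)
  -- Step 2: cardinality bounds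
  have hZcard : Nat.choose q 2 ≤ (Finset.univ.filter (fun t : Fin p × Fin q × Fin r =>
      p * ((t.2.2 : ℕ) + 1) ≤ (t.1 : ℕ) + (t.2.1 : ℕ))).card := by
    have hT : ((Finset.range q).sigma fun b => Finset.range b).card = Nat.choose q 2 := by
      rw [Finset.card_sigma]
      simp only [Finset.card_range]
      have h2 := Finset.sum_range_id_mul_two q
      have h3 := Nat.choose_two_right q
      omega
    rw [← hT]
    apply Finset.card_le_card_of_injOn (fun z =>
      (⟨p - 1 - z.2 % p, by omega⟩, ⟨z.1 % q, Nat.mod_lt _ hq0⟩,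
        ⟨z.2 / p % r, Nat.mod_lt _ hr0⟩))
    · intro z hz
      simp only [Finset.mem_coe, Finset.mem_sigma, Finset.mem_range] at hz
      obtain ⟨hz1, hz2⟩ := hz
      simp only [Finset.mem_coe, Finset.mem_filter, Finset.mem_univ, true_and]
      show p * (z.2 / p % r + 1) ≤ p - 1 - z.2 % p + z.1 % q
      have hdlt : z.2 / p < r := Nat.div_lt_of_lt_mul (by omega)
      rw [Nat.mod_eq_of_lt hdlt, Nat.mod_eq_of_lt (show z.1 < q by omega)]
      have e1 := Nat.div_add_mod z.2 p
      have e2 : p * (z.2 / p + 1) = p * (z.2 / p) + p := by ring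
      have e3 : z.2 % p < p := Nat.mod_lt _ hp0
      omega
    · rintro ⟨b1, t1⟩ h1 ⟨b2, t2⟩ h2 h
      simp only [Finset.mem_coe, Finset.mem_sigma, Finset.mem_range] at h1 h2
      obtain ⟨ha, hb, hk⟩ : p - 1 - t1 % p = p - 1 - t2 % p ∧ b1 % q = b2 % q ∧
          t1 / p % r = t2 / p % r := by
        simpa [Prod.ext_iff, Fin.ext_iff] using h
      have hd1 : t1 / p < r := Nat.div_lt_of_lt_mul (by omega)
      have hd2 : t2 / p < r := Nat.div_lt_of_lt_mul (by omega)
      rw [Nat.mod_eq_of_lt hd1, Nat.mod_eq_of_lt hd2] at hk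
      rw [Nat.mod_eq_of_lt (show b1 < q by omega), Nat.mod_eq_of_lt (show b2 < q by omega)] at hb
      have e1 := Nat.div_add_mod t1 p
      have e2 := Nat.div_add_mod t2 p
      have m1 : t1 % p < p := Nat.mod_lt _ hp0
      have m2 : t2 % p < p := Nat.mod_lt _ hp0
      have hdiv : p * (t1 / p) = p * (t2 / p) := by rw [hk]
      have ht : t1 = t2 := by omega
      subst hb; subst ht; rfl
  have hDcard : Nat.choose p 2 ≤ (Finset.univ.filter (fun t : Fin p × Fin q × Fin r =>
      (t.2.2 : ℕ) = 0 ∧ 1 ≤ (t.1 : ℕ) ∧ (t.1 : ℕ) + (t.2.1 : ℕ) < p)).card := by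
    have hT : ((Finset.range p).sigma fun d => Finset.range d).card = Nat.choose p 2 := by
      rw [Finset.card_sigma]
      simp only [Finset.card_range]
      have h2 := Finset.sum_range_id_mul_two p
      have h3 := Nat.choose_two_right p
      omega
    rw [← hT]
    apply Finset.card_le_card_of_injOn (fun z =>
      (⟨(z.2 + 1) % p, Nat.mod_lt _ hp0⟩, ⟨(z.1 - z.2 - 1) % q, Nat.mod_lt _ hq0⟩, k0))
    · intro z hz
      simp only [Finset.mem_coe, Finset.mem_sigma, Finset.mem_range] at hz
      obtain ⟨hz1, hz2⟩ := hz
      refine Finset.mem_filter.mpr ⟨Finset.mem_univ _, ?_⟩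
      show (0 : ℕ) = 0 ∧ 1 ≤ (z.2 + 1) % p ∧ (z.2 + 1) % p + (z.1 - z.2 - 1) % q < p
      refine ⟨rfl, ?_, ?_⟩
      · rw [Nat.mod_eq_of_lt (by omega)]; omega
      · rw [Nat.mod_eq_of_lt (by omega), Nat.mod_eq_of_lt (by omega)]; omega
    · rintro ⟨d1, s1⟩ h1 ⟨d2, s2⟩ h2 h
      simp only [Finset.mem_coe, Finset.mem_sigma, Finset.mem_range] at h1 h2
      obtain ⟨ha, hb⟩ : (s1 + 1) % p = (s2 + 1) % p ∧ (d1 - s1 - 1) % q = (d2 - s2 - 1) % q := by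
        simpa [Prod.ext_iff, Fin.ext_iff] using h
      rw [Nat.mod_eq_of_lt (by omega), Nat.mod_eq_of_lt (by omega)] at ha
      rw [Nat.mod_eq_of_lt (by omega), Nat.mod_eq_of_lt (by omega)] at hb
      have hs : s1 = s2 := by omega
      have hd : d1 = d2 := by omega
      subst hs; subst hd; rfl
  have hM1card : p - 1 ≤ (Finset.univ.filter (fun t : Fin p × Fin q × Fin r =>
      (t.2.1 : ℕ) = 0 ∧ (t.2.2 : ℕ) = r - 1 ∧ 1 ≤ (t.1 : ℕ))).card := by
    refine le_trans (le_of_eq (Finset.card_range (p - 1)).symm)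
      (Finset.card_le_card_of_injOn
        (fun a => (⟨(a + 1) % p, Nat.mod_lt _ hp0⟩, j0, kr)) ?_ ?_)
    · intro a ha
      simp only [Finset.mem_coe, Finset.mem_range] at ha
      refine Finset.mem_filter.mpr ⟨Finset.mem_univ _, ?_⟩
      show (0 : ℕ) = 0 ∧ (r - 1 : ℕ) = r - 1 ∧ 1 ≤ (a + 1) % p
      refine ⟨rfl, rfl, ?_⟩
      rw [Nat.mod_eq_of_lt (by omega)]; omega
    · intro a1 h1 a2 h2 h
      simp only [Finset.mem_coe, Finset.mem_range] at h1 h2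
      have hval : (a1 + 1) % p = (a2 + 1) % p := by
        simpa [Prod.ext_iff, Fin.ext_iff] using h
      rw [Nat.mod_eq_of_lt (by omega), Nat.mod_eq_of_lt (by omega)] at hval
      omega
  have hM2card : q - 1 ≤ (Finset.univ.filter (fun t : Fin p × Fin q × Fin r =>
      (t.1 : ℕ) = 0 ∧ (t.2.2 : ℕ) = r - 1 ∧ 1 ≤ (t.2.1 : ℕ))).card := by
    refine le_trans (le_of_eq (Finset.card_range (q - 1)).symm)
      (Finset.card_le_card_of_injOn
        (fun a => (i0, ⟨(a + 1) % q, Nat.mod_lt _ hq0⟩, kr)) ?_ ?_)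
    · intro a ha
      simp only [Finset.mem_coe, Finset.mem_range] at ha
      refine Finset.mem_filter.mpr ⟨Finset.mem_univ _, ?_⟩
      show (0 : ℕ) = 0 ∧ (r - 1 : ℕ) = r - 1 ∧ 1 ≤ (a + 1) % q
      refine ⟨rfl, rfl, ?_⟩
      rw [Nat.mod_eq_of_lt (by omega)]; omega
    · intro a1 h1 a2 h2 h
      simp only [Finset.mem_coe, Finset.mem_range] at h1 h2
      have hval : (a1 + 1) % q = (a2 + 1) % q := by
        simpa [Prod.ext_iff, Fin.ext_iff] using h
      rw [Nat.mod_eq_of_lt (by omega), Nat.mod_eq_of_lt (by omega)] at hval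
      omega
  have hM3card : r ≤ (Finset.univ.filter (fun t : Fin p × Fin q × Fin r =>
      (t.1 : ℕ) = 0 ∧ (t.2.1 : ℕ) = 0)).card := by
    refine le_trans (le_of_eq (Finset.card_range r).symm)
      (Finset.card_le_card_of_injOn
        (fun c => (i0, j0, ⟨c % r, Nat.mod_lt _ hr0⟩)) ?_ ?_)
    · intro c hc
      refine Finset.mem_filter.mpr ⟨Finset.mem_univ _, ?_⟩
      exact ⟨rfl, rfl⟩
    · intro c1 h1 c2 h2 h
      simp only [Finset.mem_coe, Finset.mem_range] at h1 h2
      have hval : c1 % r = c2 % r := by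
        simpa [Prod.ext_iff, Fin.ext_iff] using h
      rw [Nat.mod_eq_of_lt h1, Nat.mod_eq_of_lt h2] at hval
      exact hval
  -- S as a disjoint union
  have hunion : S = (Finset.univ.filter (fun t : Fin p × Fin q × Fin r =>
        p * ((t.2.2 : ℕ) + 1) ≤ (t.1 : ℕ) + (t.2.1 : ℕ)))
      ∪ ((Finset.univ.filter (fun t : Fin p × Fin q × Fin r =>
        (t.2.2 : ℕ) = 0 ∧ 1 ≤ (t.1 : ℕ) ∧ (t.1 : ℕ) + (t.2.1 : ℕ) < p))
      ∪ ((Finset.univ.filter (fun t : Fin p × Fin q × Fin r =>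
        (t.2.1 : ℕ) = 0 ∧ (t.2.2 : ℕ) = r - 1 ∧ 1 ≤ (t.1 : ℕ)))
      ∪ ((Finset.univ.filter (fun t : Fin p × Fin q × Fin r =>
        (t.1 : ℕ) = 0 ∧ (t.2.2 : ℕ) = r - 1 ∧ 1 ≤ (t.2.1 : ℕ)))
      ∪ (Finset.univ.filter (fun t : Fin p × Fin q × Fin r =>
        (t.1 : ℕ) = 0 ∧ (t.2.1 : ℕ) = 0))))) := by
    ext t
    rw [hmemS]
    simp only [Finset.mem_union, Finset.mem_filter, Finset.mem_univ, true_and]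
  have hmulbound : ∀ t : Fin p × Fin q × Fin r, p ≤ p * ((t.2.2 : ℕ) + 1) ∧
      ((t.2.2 : ℕ) = r - 1 → p * ((t.2.2 : ℕ) + 1) = p * r) := by
    intro t
    constructor
    · calc p = p * 1 := (mul_one p).symm
        _ ≤ p * ((t.2.2 : ℕ) + 1) := Nat.mul_le_mul_left p (by omega)
    · intro h
      rw [show (t.2.2 : ℕ) + 1 = r from by omega]
  have hScard : Nat.choose q 2 + Nat.choose p 2 + (p - 1) + (q - 1) + r ≤ S.card := by
    rw [hunion]
    rw [Finset.card_union_of_disjoint (by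
      rw [Finset.disjoint_left]
      intro t ht ht'
      simp only [Finset.mem_union, Finset.mem_filter, Finset.mem_univ, true_and] at ht ht'
      obtain ⟨hmb, hmb2⟩ := hmulbound t
      have hiv : (t.1 : ℕ) < p := t.1.isLt
      have hjv : (t.2.1 : ℕ) < q := t.2.1.isLt
      rcases ht' with h | h | h | h
      · omega
      · have := hmb2 h.2.1; omega
      · have := hmb2 h.2.1; omega
      · omega)]
    rw [Finset.card_union_of_disjoint (by
      rw [Finset.disjoint_left]
      intro t ht ht'
      simp only [Finset.mem_union, Finset.mem_filter, Finset.mem_univ, true_and] at ht ht'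
      rcases ht' with h | h | h <;> omega)]
    rw [Finset.card_union_of_disjoint (by
      rw [Finset.disjoint_left]
      intro t ht ht'
      simp only [Finset.mem_union, Finset.mem_filter, Finset.mem_univ, true_and] at ht ht'
      rcases ht' with h | h <;> omega)]
    rw [Finset.card_union_of_disjoint (by
      rw [Finset.disjoint_left]
      intro t ht ht'
      simp only [Finset.mem_filter, Finset.mem_univ, true_and] at ht ht'
      omega)]
    omega
  -- Step 3: differences of points of the polytope lie in `Wsub`
  have hdiff : ∀ x ∈ CRpoly p q r lam mu tau, ∀ y ∈ CRpoly p q r lam mu tau,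
      x - y ∈ Wsub p q r hr0 := by
    intro x hx y hy
    obtain ⟨hxc, hxl, hxm, hxt⟩ := hx
    obtain ⟨hyc, hyl, hym, hyt⟩ := hy
    refine ⟨?_, ?_, ?_, ?_, ?_⟩
    · intro i j k hk
      have h1 : x i j k = 0 := by
        have h := ent_zero hxc (i : ℕ) (j : ℕ) (k : ℕ) hk
        rw [ent_eq _ _ _ i.isLt j.isLt k.isLt] at h
        exact h
      have h2 : y i j k = 0 := by
        have h := ent_zero hyc (i : ℕ) (j : ℕ) (k : ℕ) hk
        rw [ent_eq _ _ _ i.isLt j.isLt k.isLt] at h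
        exact h
      show x i j k - y i j k = 0
      rw [h1, h2, sub_zero]
    · intro i i' j j' hsum
      have hd := diag_const hxc hp0 hpq hqpr hr2 (i : ℕ) (j : ℕ) (i' : ℕ) (j' : ℕ) hsum
      have hd' := diag_const hyc hp0 hpq hqpr hr2 (i : ℕ) (j : ℕ) (i' : ℕ) (j' : ℕ) hsum
      rw [ent_eq _ _ _ i.isLt j.isLt hr0, ent_eq _ _ _ i'.isLt j'.isLt hr0] at hd hd'
      have hdx : x i j ⟨0, hr0⟩ = x i' j' ⟨0, hr0⟩ := hd
      have hdy : y i j ⟨0, hr0⟩ = y i' j' ⟨0, hr0⟩ := hd'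
      show x i j ⟨0, hr0⟩ - y i j ⟨0, hr0⟩ = x i' j' ⟨0, hr0⟩ - y i' j' ⟨0, hr0⟩
      rw [hdx, hdy]
    · intro i
      simp only [Pi.sub_apply, Finset.sum_sub_distrib]
      rw [hxl i, hyl i, sub_self]
    · intro j
      simp only [Pi.sub_apply, Finset.sum_sub_distrib]
      rw [hxm j, hym j, sub_self]
    · intro k
      simp only [Pi.sub_apply, Finset.sum_sub_distrib]
      rw [hxt k, hyt k, sub_self]
  -- Step 4: rank bounds
  have hsub : vectorSpan ℝ (CRpoly p q r lam mu tau) ≤ Wsub p q r hr0 := by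
    rw [vectorSpan_def]
    refine Submodule.span_le.mpr ?_
    rintro z hz
    obtain ⟨xx, hxx, yy, hyy, rfl⟩ := Set.mem_vsub.mp hz
    exact hdiff xx hxx yy hyy
  let Lres : (Fin p → Fin q → Fin r → ℝ) →ₗ[ℝ] ((Sᶜ : Finset (Fin p × Fin q × Fin r)) → ℝ) :=
    { toFun := fun v t => v t.1.1 t.1.2.1 t.1.2.2
      map_add' := fun _ _ => rfl
      map_smul' := fun _ _ => rfl }
  have hinj : Function.Injective (Lres.comp (Wsub p q r hr0).subtype) := by
    refine (injective_iff_map_eq_zero _).mpr ?_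
    intro u hu
    apply Subtype.ext
    refine det u.1 u.2 (fun t ht => ?_)
    exact congrFun hu ⟨t, Finset.mem_compl.mpr ht⟩
  have hrank1 : Module.finrank ℝ (Wsub p q r hr0) ≤ (Sᶜ).card := by
    have h := LinearMap.finrank_le_finrank_of_injective hinj
    rwa [Module.finrank_pi ℝ, Fintype.card_coe] at h
  have hrank0 : Module.finrank ℝ ((affineSpan ℝ (CRpoly p q r lam mu tau)).direction)
      ≤ Module.finrank ℝ (Wsub p q r hr0) := by
    rw [direction_affineSpan]
    exact Submodule.finrank_mono hsub
  have hcardcompl : (Sᶜ).card + S.card = p * q * r := by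
    have h1 := Finset.card_compl S
    have hle := Finset.card_le_univ S
    have h2 : Fintype.card (Fin p × Fin q × Fin r) = p * q * r := by
      simp [mul_assoc]
    omega
  have hfr : Module.finrank ℝ ((affineSpan ℝ (CRpoly p q r lam mu tau)).direction)
      ≤ (Sᶜ).card := le_trans hrank0 hrank1
  have hPQR : ((p * q * r : ℕ) : ℤ) = (p : ℤ) * q * r := by push_cast; ring
  have h1 : (Module.finrank ℝ ((affineSpan ℝ (CRpoly p q r lam mu tau)).direction) : ℤ)
      ≤ ((p * q * r : ℕ) : ℤ) - S.card := by omega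
  have h2 : (Nat.choose p 2 : ℤ) + Nat.choose q 2 + p + q + r - 2 ≤ (S.card : ℤ) := by
    have h3 : Nat.choose p 2 + Nat.choose q 2 + p + q + r ≤ S.card + 2 := by omega
    omega
  linarith [h1, h2, hPQR]


end Main

end CRPoly
end
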